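/- arXiv:1911.01694 — 5 statements merged into one kernel-verified Lean document; each statement's English description precedes it below -/
import Mathlib

section
/- Let d ≥ 1 and n > d be integers and let δ ∈ (0,1). Let m be a positive integer satisfying m − √(2·e·m·ln(2/δ)) ≥ e·d·ln(2n/δ). Let M be an m×n RID random matrix with parameter p = e^{−1/d}. Then for every set I ⊆ {1,…,n} with |I| ≤ d, the probability that M is (n,I)-disjunct is at least 1 − δ. -/
open scoped Classical

noncomputable section

/-- A 0-1 matrix `M` (with `true` = 1) is `(n,I)`-disjunct if for every item `i ∉ I`
there is a row containing `i` but no element of `I`. -/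
def Disjunct {m n : ℕ} (I : Finset (Fin n)) (M : Fin m → Fin n → Bool) : Prop :=
  ∀ i : Fin n, i ∉ I → ∃ t : Fin m, M t i = true ∧ ∀ j ∈ I, M t j = false

/-- Probability of the event `pred` for an `m × n` RID random matrix with parameter `p`:
entries are i.i.d., equal to `0` (`false`) with probability `p` and `1` (`true`) with
probability `1 - p`. -/
def ridProb (m n : ℕ) (p : ℝ) (pred : (Fin m → Fin n → Bool) → Prop) : ℝ :=
  ∑ M : Fin m → Fin n → Bool,
    (if pred M then ∏ t : Fin m, ∏ j : Fin n, (if M t j then 1 - p else p) else 0)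

namespace RIDaux

set_option linter.unusedSectionVars false

/-- weight of a Boolean vector: i.i.d. entries, `false` with probability `p`. -/
def fw (p : ℝ) {α : Type*} [Fintype α] (v : α → Bool) : ℝ :=
  ∏ a, (if v a then 1 - p else p)

variable {p : ℝ} {α : Type*} [Fintype α] [DecidableEq α]

lemma fw_nonneg (hp0 : 0 ≤ p) (hp1 : p ≤ 1) (v : α → Bool) : 0 ≤ fw p v :=
  Finset.prod_nonneg fun a _ => by by_cases h : v a <;> simp [h, hp0, hp1, sub_nonneg]

lemma sum_fw : ∑ v : α → Bool, fw p v = 1 := by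
  unfold fw
  rw [← Fintype.prod_sum (fun (_ : α) (b : Bool) => if b then 1 - p else p)]
  simp

lemma sum_fw_restrict (S : Finset α) :
    ∑ v : α → Bool, (if ∀ a ∈ S, v a = false then fw p v else 0) = p ^ S.card := by
  have key : ∀ v : α → Bool,
      (if ∀ a ∈ S, v a = false then fw p v else 0)
        = ∏ a, (if a ∈ S then (if v a then 0 else p) else (if v a then 1 - p else p)) := by
    intro v
    by_cases h : ∀ a ∈ S, v a = false
    · simp only [if_pos h]
      unfold fw
      refine Finset.prod_congr rfl fun a _ => ?_
      by_cases ha : a ∈ S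
      · simp [ha, h a ha]
      · simp [ha]
    · simp only [if_neg h]
      push_neg at h
      obtain ⟨a, haS, hva⟩ := h
      refine (Finset.prod_eq_zero (Finset.mem_univ a) ?_).symm
      simp only [haS, if_pos]
      simp [Bool.not_eq_false] at hva
      simp [hva]
  rw [Finset.sum_congr rfl fun v _ => key v]
  rw [← Fintype.prod_sum (fun (a : α) (b : Bool) =>
    if a ∈ S then (if b then 0 else p) else (if b then 1 - p else p))]
  have : ∀ a : α, (∑ b : Bool, if a ∈ S then (if b then 0 else p) else (if b then 1 - p else p))
      = if a ∈ S then p else 1 := by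
    intro a; by_cases ha : a ∈ S <;> simp [ha]
  rw [Finset.prod_congr rfl fun a _ => this a]
  rw [Finset.prod_ite_mem, Finset.univ_inter, Finset.prod_const]

lemma sum_fw_restrict_not (S : Finset α) :
    ∑ v : α → Bool, (if ¬ ∀ a ∈ S, v a = false then fw p v else 0) = 1 - p ^ S.card := by
  have h := sum_fw_restrict (p := p) S
  have h2 : ∀ v : α → Bool,
      (if ¬ ∀ a ∈ S, v a = false then fw p v else 0)
        = fw p v - (if ∀ a ∈ S, v a = false then fw p v else 0) := by
    intro v
    by_cases hv : ∀ a ∈ S, v a = false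
    · rw [if_neg (not_not_intro hv), if_pos hv]; ring
    · rw [if_pos hv, if_neg hv]; ring
  rw [Finset.sum_congr rfl fun v _ => h2 v, Finset.sum_sub_distrib, sum_fw (p := p), h]

/-- pushforward of the product measure along a per-row map π. -/
lemma push {m n : ℕ} {γ : Type*} [Fintype γ] [DecidableEq γ] (p : ℝ) (π : (Fin n → Bool) → γ)
    (F : (Fin m → γ) → ℝ) :
    ∑ M : Fin m → Fin n → Bool, F (fun t => π (M t)) * ∏ t, fw p (M t)
      = ∑ q : Fin m → γ, F q * ∏ t, (∑ ρ : Fin n → Bool, if π ρ = q t then fw p ρ else 0) := by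
  have inner : ∀ q : Fin m → γ,
      (∏ t, (∑ ρ : Fin n → Bool, if π ρ = q t then fw p ρ else 0))
        = ∑ M : Fin m → Fin n → Bool, if (fun t => π (M t)) = q then ∏ t, fw p (M t) else 0 := by
    intro q
    rw [Fintype.prod_sum (fun (t : Fin m) (ρ : Fin n → Bool) => if π ρ = q t then fw p ρ else 0)]
    refine Finset.sum_congr rfl fun M _ => ?_
    by_cases h : (fun t => π (M t)) = q
    · rw [if_pos h]
      refine Finset.prod_congr rfl fun t _ => ?_
      rw [if_pos (congrFun h t)]
    · rw [if_neg h]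
      have : ∃ t, π (M t) ≠ q t := by
        by_contra hc; push_neg at hc; exact h (funext hc)
      obtain ⟨t, ht⟩ := this
      exact Finset.prod_eq_zero (Finset.mem_univ t) (if_neg ht)
  calc ∑ M : Fin m → Fin n → Bool, F (fun t => π (M t)) * ∏ t, fw p (M t)
      = ∑ M : Fin m → Fin n → Bool, ∑ q : Fin m → γ,
          F q * (if (fun t => π (M t)) = q then ∏ t, fw p (M t) else 0) := by
        refine Finset.sum_congr rfl fun M _ => ?_
        rw [Finset.sum_eq_single (fun t => π (M t))]
        · simp
        · intro q _ hq; rw [if_neg (fun h => hq h.symm), mul_zero]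
        · intro h; exact absurd (Finset.mem_univ _) h
    _ = ∑ q : Fin m → γ, F q * ∏ t, (∑ ρ : Fin n → Bool, if π ρ = q t then fw p ρ else 0) := by
        rw [Finset.sum_comm]
        refine Finset.sum_congr rfl fun q _ => ?_
        rw [inner, Finset.mul_sum]

/-- indicator-sum monotonicity -/
lemma sum_ind_eq {β : Type*} [Fintype β] {P Q : β → Prop}
    {iP : ∀ a, Decidable (P a)} {iQ : ∀ a, Decidable (Q a)}
    (w : β → ℝ) (h : ∀ a, P a ↔ Q a) :
    ∑ a : β, (@ite _ (P a) (iP a) (w a) 0) = ∑ a : β, (@ite _ (Q a) (iQ a) (w a) 0) :=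
  Finset.sum_congr rfl fun a _ => if_congr (h a) rfl rfl

lemma sum_ind_mono {β : Type*} [Fintype β] {P Q : β → Prop} {w : β → ℝ}
    {iP : ∀ a, Decidable (P a)} {iQ : ∀ a, Decidable (Q a)}
    (hw : ∀ a, 0 ≤ w a) (h : ∀ a, P a → Q a) :
    ∑ a : β, (@ite _ (P a) (iP a) (w a) 0) ≤ ∑ a : β, (@ite _ (Q a) (iQ a) (w a) 0) := by
  refine Finset.sum_le_sum fun a _ => ?_
  by_cases hP : P a
  · rw [if_pos hP, if_pos (h a hP)]
  · rw [if_neg hP]; by_cases hQ : Q a <;> simp [hQ, hw a]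

lemma sum_ind_or {β : Type*} [Fintype β] {P Q R : β → Prop} {w : β → ℝ}
    {iP : ∀ a, Decidable (P a)} {iQ : ∀ a, Decidable (Q a)} {iR : ∀ a, Decidable (R a)}
    (hw : ∀ a, 0 ≤ w a) (h : ∀ a, P a → Q a ∨ R a) :
    ∑ a : β, (@ite _ (P a) (iP a) (w a) 0)
      ≤ (∑ a : β, (@ite _ (Q a) (iQ a) (w a) 0))
        + ∑ a : β, (@ite _ (R a) (iR a) (w a) 0) := by
  rw [← Finset.sum_add_distrib]
  refine Finset.sum_le_sum fun a _ => ?_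
  by_cases hP : P a
  · rw [if_pos hP]
    rcases h a hP with hQ | hR
    · rw [if_pos hQ]
      by_cases hR : R a <;> simp [hR, hw a]
    · rw [if_pos hR]
      by_cases hQ : Q a <;> simp [hQ, hw a]
  · rw [if_neg hP]
    have h1 : (0:ℝ) ≤ (if Q a then w a else 0) := by by_cases hQ : Q a <;> simp [hQ, hw a]
    have h2 : (0:ℝ) ≤ (if R a then w a else 0) := by by_cases hR : R a <;> simp [hR, hw a]
    linarith

lemma sum_ind_union {β : Type*} [Fintype β] {ι : Type*} {s : Finset ι}
    {P : β → Prop} {Q : ι → β → Prop} {w : β → ℝ}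
    {iP : ∀ a, Decidable (P a)} {iQ : ∀ i a, Decidable (Q i a)}
    (hw : ∀ a, 0 ≤ w a) (h : ∀ a, P a → ∃ i ∈ s, Q i a) :
    ∑ a : β, (@ite _ (P a) (iP a) (w a) 0)
      ≤ ∑ i ∈ s, ∑ a : β, (@ite _ (Q i a) (iQ i a) (w a) 0) := by
  rw [Finset.sum_comm]
  refine Finset.sum_le_sum fun a _ => ?_
  by_cases hP : P a
  · rw [if_pos hP]
    obtain ⟨i, hi, hQ⟩ := h a hP
    have : (@ite _ (Q i a) (iQ i a) (w a) 0) ≤ ∑ j ∈ s, (@ite _ (Q j a) (iQ j a) (w a) 0) :=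
      Finset.single_le_sum (f := fun j => @ite _ (Q j a) (iQ j a) (w a) 0)
        (fun j _ => by by_cases hj : Q j a <;> simp [hj, hw a]) hi
    rwa [if_pos hQ] at this
  · rw [if_neg hP]
    exact Finset.sum_nonneg fun j _ => by by_cases hj : Q j a <;> simp [hj, hw a]

lemma exp_neg_quad {x : ℝ} (hx : 0 ≤ x) : Real.exp (-x) ≤ 1 - x + x ^ 2 / 2 := by
  have hmono : MonotoneOn (fun y : ℝ => 1 - y + y ^ 2 / 2 - Real.exp (-y)) (Set.Ici 0) := by
    refine monotoneOn_of_deriv_nonneg (convex_Ici 0) (Continuous.continuousOn (by continuity))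
      ?_ ?_
    · intro y hy
      apply DifferentiableAt.differentiableWithinAt
      fun_prop
    · intro y hy
      rw [interior_Ici] at hy
      have hd : deriv (fun y : ℝ => 1 - y + y ^ 2 / 2 - Real.exp (-y)) y
          = -1 + y + Real.exp (-y) := by
        have h1 : HasDerivAt (fun y : ℝ => 1 - y + y ^ 2 / 2 - Real.exp (-y))
            (0 - 1 + 2 * y ^ 1 / 2 - (Real.exp (-y) * (-1))) y := by
          have e1 : HasDerivAt (fun y : ℝ => Real.exp (-y)) (Real.exp (-y) * (-1)) y :=
            (Real.hasDerivAt_exp (-y)).comp y (hasDerivAt_neg y)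
          have e2 : HasDerivAt (fun y : ℝ => y ^ 2 / 2) (2 * y ^ 1 / 2) y := by
            simpa using ((hasDerivAt_pow 2 y).div_const 2)
          have e3 : HasDerivAt (fun y : ℝ => 1 - y) (0 - 1) y :=
            (hasDerivAt_const y 1).sub (hasDerivAt_id y)
          exact (e3.add e2).sub e1
        rw [h1.deriv]; ring
      rw [hd]
      have := Real.add_one_le_exp (-y)
      linarith
  have h0 : (fun y : ℝ => 1 - y + y ^ 2 / 2 - Real.exp (-y)) 0
      ≤ (fun y : ℝ => 1 - y + y ^ 2 / 2 - Real.exp (-y)) x :=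
    hmono (Set.self_mem_Ici) hx hx
  simp only [Real.exp_zero] at h0
  norm_num at h0
  linarith

def X {m : ℕ} (b : Fin m → Bool) : ℕ := (Finset.univ.filter fun t => b t = true).card

lemma chernoff {m : ℕ} {c t : ℝ} (hc : 0 < c) (hc1 : c ≤ 1) (ht : 0 ≤ t) (hm : 0 < m) :
    ∑ b : Fin m → Bool,
        (if (X b : ℝ) ≤ m * c - t then ∏ t', (if b t' then c else 1 - c) else 0)
      ≤ Real.exp (-t ^ 2 / (2 * m * c)) := by
  have hmc : (0:ℝ) < m * c := mul_pos (by exact_mod_cast hm) hc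
  set l : ℝ := t / (m * c) with hl
  have hl0 : 0 ≤ l := div_nonneg ht hmc.le
  have hprod_nonneg : ∀ b : Fin m → Bool, 0 ≤ ∏ t', (if b t' then c else 1 - c) :=
    fun b => Finset.prod_nonneg fun t' _ => by
      by_cases h : b t' <;> simp [h, hc.le, sub_nonneg, hc1]
  have step12 : ∀ b : Fin m → Bool,
      (if (X b : ℝ) ≤ m * c - t then ∏ t', (if b t' then c else 1 - c) else 0)
        ≤ Real.exp (l * (m * c - t)) * ∏ t', (if b t' then Real.exp (-l) * c else 1 - c) := by
    intro b
    have hXsum : (X b : ℝ) = ∑ t' : Fin m, (if b t' then (1:ℝ) else 0) := by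
      rw [X, Finset.card_filter]
      push_cast
      exact Finset.sum_congr rfl fun t' _ => by by_cases h : b t' <;> simp [h]
    have key : Real.exp (l * (m * c - t - X b)) * ∏ t', (if b t' then c else 1 - c)
        = Real.exp (l * (m * c - t)) * ∏ t', (if b t' then Real.exp (-l) * c else 1 - c) := by
      have : Real.exp (l * (m * c - t - X b))
          = Real.exp (l * (m * c - t)) * ∏ t', Real.exp (-l * (if b t' then (1:ℝ) else 0)) := by
        rw [← Real.exp_sum, ← Real.exp_add]
        congr 1
        rw [hXsum, mul_sub, Finset.mul_sum]
        rw [sub_eq_add_neg, ← Finset.sum_neg_distrib]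
        congr 1
        exact Finset.sum_congr rfl fun x _ => by ring
      rw [this, mul_assoc, ← Finset.prod_mul_distrib]
      congr 1
      refine Finset.prod_congr rfl fun t' _ => ?_
      by_cases h : b t' <;> simp [h]
    by_cases hev : (X b : ℝ) ≤ m * c - t
    · rw [if_pos hev, ← key]
      have h1 : (1:ℝ) ≤ Real.exp (l * (m * c - t - X b)) := by
        rw [Real.one_le_exp_iff]
        exact mul_nonneg hl0 (by linarith)
      nlinarith [hprod_nonneg b, h1]
    · rw [if_neg hev]
      exact mul_nonneg (Real.exp_pos _).le (Finset.prod_nonneg fun t' _ => by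
        by_cases h : b t' <;> simp [h, sub_nonneg, hc1]
        positivity)
  calc ∑ b : Fin m → Bool,
        (if (X b : ℝ) ≤ m * c - t then ∏ t', (if b t' then c else 1 - c) else 0)
      ≤ ∑ b : Fin m → Bool,
          Real.exp (l * (m * c - t)) * ∏ t', (if b t' then Real.exp (-l) * c else 1 - c) :=
        Finset.sum_le_sum fun b _ => step12 b
    _ = Real.exp (l * (m * c - t)) * (Real.exp (-l) * c + (1 - c)) ^ m := by
        rw [← Finset.mul_sum]
        congr 1
        rw [← Fintype.prod_sum (fun (_ : Fin m) (x : Bool) => if x then Real.exp (-l) * c else 1 - c)]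
        simp [add_comm]
    _ ≤ Real.exp (l * (m * c - t)) * Real.exp (c * (l ^ 2 / 2 - l)) ^ m := by
        refine mul_le_mul_of_nonneg_left (pow_le_pow_left₀ ?_ ?_ m) (Real.exp_pos _).le
        · have : (0:ℝ) ≤ Real.exp (-l) * c := by positivity
          linarith
        · have h1 : Real.exp (-l) ≤ 1 - l + l ^ 2 / 2 := exp_neg_quad hl0
          have h2 : Real.exp (-l) * c + (1 - c) ≤ 1 + c * (l ^ 2 / 2 - l) := by nlinarith
          calc Real.exp (-l) * c + (1 - c) ≤ 1 + c * (l ^ 2 / 2 - l) := h2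
            _ ≤ Real.exp (c * (l ^ 2 / 2 - l)) := by
                have := Real.add_one_le_exp (c * (l ^ 2 / 2 - l)); linarith
    _ = Real.exp (-t ^ 2 / (2 * m * c)) := by
        rw [← Real.exp_nat_mul, ← Real.exp_add]
        congr 1
        rw [hl]
        field_simp
        ring

lemma binom_reduce {m n : ℕ} (p : ℝ) (I : Finset (Fin n)) (G : ℕ → Prop) :
    ∑ M : Fin m → Fin n → Bool,
        (if G (Finset.univ.filter fun t => ∀ j ∈ I, M t j = false).card
         then ∏ t, fw p (M t) else 0)
      = ∑ b : Fin m → Bool,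
          (if G (X b) then ∏ t, (if b t then p ^ I.card else 1 - p ^ I.card) else 0) := by
  set π : (Fin n → Bool) → Bool := fun ρ => decide (∀ j ∈ I, ρ j = false) with hπ
  set F : (Fin m → Bool) → ℝ := fun q => if G (X q) then 1 else 0 with hF
  have lhs_eq : ∀ M : Fin m → Fin n → Bool,
      (if G (Finset.univ.filter fun t => ∀ j ∈ I, M t j = false).card
        then ∏ t, fw p (M t) else 0)
      = F (fun t => π (M t)) * ∏ t, fw p (M t) := by
    intro M
    have hcard : (Finset.univ.filter fun t => ∀ j ∈ I, M t j = false).card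
        = X (fun t => π (M t)) := by
      rw [X]; congr 1
      exact Finset.filter_congr fun t _ => by simp [hπ]
    rw [hcard, hF]
    by_cases h : G (X fun t => π (M t)) <;> simp [h]
  rw [Finset.sum_congr rfl fun M _ => lhs_eq M, push]
  refine Finset.sum_congr rfl fun b _ => ?_
  have hrow : ∀ t : Fin m,
      (∑ ρ : Fin n → Bool, if π ρ = b t then fw p ρ else 0)
        = (if b t then p ^ I.card else 1 - p ^ I.card) := by
    intro t
    by_cases hb : b t
    · rw [if_pos hb, ← sum_fw_restrict (p := p) I]
      refine Finset.sum_congr rfl fun ρ _ => ?_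
      congr 1
      simp [hπ, hb]
    · have hbf : b t = false := by simpa using hb
      rw [if_neg hb, ← sum_fw_restrict_not (p := p) I]
      refine Finset.sum_congr rfl fun ρ _ => ?_
      congr 1
      simp [hπ, hbf, decide_eq_false_iff_not]
  rw [show (∏ t : Fin m, ∑ ρ : Fin n → Bool, if π ρ = b t then fw p ρ else 0)
      = ∏ t : Fin m, (if b t then p ^ I.card else 1 - p ^ I.card) from
    Finset.prod_congr rfl fun t _ => hrow t, hF]
  by_cases h : G (X b) <;> simp [h]
set_option maxHeartbeats 1000000 in
lemma bad_bound {m n : ℕ} {p : ℝ} (hp0 : 0 ≤ p) (hp1 : p ≤ 1)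
    (I : Finset (Fin n)) (i : Fin n) (hi : i ∉ I) (s : ℕ) :
    ∑ M : Fin m → Fin n → Bool,
        (if ((∀ t, (∀ j ∈ I, M t j = false) → M t i = false) ∧
              s ≤ (Finset.univ.filter fun t => ∀ j ∈ I, M t j = false).card)
          then ∏ t, fw p (M t) else 0)
      ≤ p ^ s := by
  set π : (Fin n → Bool) → Bool × Bool :=
    fun ρ => (decide (∀ j ∈ I, ρ j = false), ρ i) with hπ
  set E : (Fin m → Bool × Bool) → Prop := fun q =>
    (∀ t, (q t).1 = true → (q t).2 = false) ∧
      s ≤ (Finset.univ.filter fun t => (q t).1 = true).card with hE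
  set F : (Fin m → Bool × Bool) → ℝ := fun q => if E q then 1 else 0 with hF
  set r : Bool × Bool → ℝ :=
    fun gc => ∑ ρ : Fin n → Bool, if π ρ = gc then fw p ρ else 0 with hr
  set u : Bool × Bool → ℝ :=
    fun gc => if gc.1 then (if gc.2 then 0 else p ^ I.card) else r gc with hu
  have hr_nonneg : ∀ gc, 0 ≤ r gc := by
    intro gc
    refine Finset.sum_nonneg fun ρ _ => ?_
    by_cases h : π ρ = gc
    · rw [if_pos h]; exact fw_nonneg hp0 hp1 ρ
    · rw [if_neg h]
  have hu_nonneg : ∀ gc, 0 ≤ u gc := by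
    intro gc
    rcases gc with ⟨z, x⟩
    cases z <;> cases x <;> simp [hu, hr_nonneg, pow_nonneg hp0]
  -- value of r (true, false)
  have hr_tf : r (true, false) = p ^ (I.card + 1) := by
    show (∑ ρ : Fin n → Bool, if π ρ = (true, false) then fw p ρ else 0) = p ^ (I.card + 1)
    rw [← Finset.card_insert_of_notMem hi, ← sum_fw_restrict (p := p) (insert i I)]
    refine Finset.sum_congr rfl fun ρ _ => ?_
    congr 1
    rw [eq_iff_iff]
    simp only [hπ, Prod.mk.injEq, Finset.mem_insert, decide_eq_true_eq]
    constructor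
    · rintro ⟨h1, h2⟩ a (rfl | ha)
      · exact h2
      · exact h1 a ha
    · intro h
      exact ⟨fun a ha => h a (Or.inr ha), h i (Or.inl rfl)⟩
  -- sum of the lower-row values of r
  have h3 : r (false, false) + r (false, true) = 1 - p ^ I.card := by
    have key : ∀ ρ : Fin n → Bool,
        (if π ρ = (false, false) then fw p ρ else 0)
          + (if π ρ = (false, true) then fw p ρ else 0)
          = if ¬ ∀ a ∈ I, ρ a = false then fw p ρ else 0 := by
      intro ρ
      by_cases hz : ∀ a ∈ I, ρ a = false
      · rw [if_neg, if_neg, if_neg (not_not_intro hz)]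
        · simp
        · intro h
          have hthis : (π ρ).1 = false := by rw [h]
          simp only [hπ, decide_eq_false_iff_not] at hthis
          exact hthis hz
        · intro h
          have hthis : (π ρ).1 = false := by rw [h]
          simp only [hπ, decide_eq_false_iff_not] at hthis
          exact hthis hz
      · rw [if_pos hz]
        by_cases hx : ρ i
        · have hπρ : π ρ = (false, true) := by
            simp only [hπ, Prod.mk.injEq]
            exact ⟨by simpa using hz, by simpa using hx⟩
          rw [if_neg, if_pos hπρ, zero_add]
          rw [hπρ]; simp
        · have hπρ : π ρ = (false, false) := by
            simp only [hπ, Prod.mk.injEq]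
            exact ⟨by simpa using hz, by simpa using hx⟩
          rw [if_pos hπρ, if_neg, add_zero]
          rw [hπρ]; simp
    calc r (false, false) + r (false, true)
        = ∑ ρ : Fin n → Bool,
            ((if π ρ = (false, false) then fw p ρ else 0)
              + (if π ρ = (false, true) then fw p ρ else 0)) := by
          rw [hr, Finset.sum_add_distrib]
      _ = ∑ ρ : Fin n → Bool, (if ¬ ∀ a ∈ I, ρ a = false then fw p ρ else 0) :=
          Finset.sum_congr rfl fun ρ _ => key ρ
      _ = 1 - p ^ I.card := by
          rw [← sum_fw_restrict_not (p := p) I]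
          refine Finset.sum_congr rfl fun ρ _ => ?_
          congr 1
  -- total mass of u is 1
  have hu_sum : ∑ gc : Bool × Bool, u gc = 1 := by
    have hsplit : ∑ gc : Bool × Bool, u gc
        = (u (true, true) + u (true, false)) + (u (false, true) + u (false, false)) := by
      rw [Fintype.sum_prod_type, Fintype.sum_bool]
      congr 1 <;> rw [Fintype.sum_bool]
    rw [hsplit]
    have h1 : u (true, false) = p ^ I.card := by simp [hu]
    have h2 : u (true, true) = 0 := by simp [hu]
    have h4 : u (false, false) = r (false, false) := by simp [hu]
    have h5 : u (false, true) = r (false, true) := by simp [hu]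
    rw [h1, h2, h4, h5]
    linarith
  -- LHS equals pushed sum
  have lhs_eq : ∀ M : Fin m → Fin n → Bool,
      (if ((∀ t, (∀ j ∈ I, M t j = false) → M t i = false) ∧
            s ≤ (Finset.univ.filter fun t => ∀ j ∈ I, M t j = false).card)
        then ∏ t, fw p (M t) else 0)
      = F (fun t => π (M t)) * ∏ t, fw p (M t) := by
    intro M
    have hiff : E (fun t => π (M t)) ↔
        ((∀ t, (∀ j ∈ I, M t j = false) → M t i = false) ∧
          s ≤ (Finset.univ.filter fun t => ∀ j ∈ I, M t j = false).card) := by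
      rw [hE]
      have hfilt : (Finset.univ.filter fun t => (π (M t)).1 = true)
          = (Finset.univ.filter fun t => ∀ j ∈ I, M t j = false) :=
        Finset.filter_congr fun t _ => by simp [hπ]
      constructor
      · rintro ⟨h1, h2⟩
        exact ⟨fun t ht => h1 t (by simp only [hπ, decide_eq_true_eq]; exact ht),
          by rwa [hfilt] at h2⟩
      · rintro ⟨h1, h2⟩
        exact ⟨fun t ht => h1 t (by simpa [hπ] using ht), by rwa [hfilt]⟩
    by_cases h : E (fun t => π (M t))
    · rw [if_pos (hiff.mp h)]
      simp only [hF]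
      rw [if_pos h, one_mul]
    · rw [if_neg (fun hc => h (hiff.mpr hc))]
      simp only [hF]
      rw [if_neg h, zero_mul]
  rw [Finset.sum_congr rfl fun M _ => lhs_eq M, push]
  -- pointwise bound F q * ∏ r (q t) ≤ p ^ s * ∏ u (q t)
  have pointwise : ∀ q : Fin m → Bool × Bool,
      F q * ∏ t, r (q t) ≤ p ^ s * ∏ t, u (q t) := by
    intro q
    simp only [hF]
    by_cases hq : E q
    · rw [if_pos hq, one_mul]
      obtain ⟨h1, h2⟩ := hq
      have hfac : ∀ t : Fin m, r (q t) = (if q t = (true, false) then p else 1) * u (q t) := by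
        intro t
        rcases hqt : q t with ⟨z, x⟩
        cases z
        · cases x <;> simp [hu, hr]
        · cases x
          · rw [if_pos rfl]
            have : u (true, false) = p ^ I.card := by simp [hu]
            rw [this, hr_tf, pow_succ, mul_comm]
          · exfalso
            have := h1 t (by rw [hqt])
            rw [hqt] at this; simp at this
      have hcard : s ≤ (Finset.univ.filter fun t => q t = (true, false)).card := by
        refine le_trans h2 (le_of_eq ?_)
        congr 1
        refine Finset.filter_congr fun t _ => ?_
        constructor
        · intro ht
          have h2' := h1 t ht
          rw [← ht, ← h2']
        · intro ht; rw [ht]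
      calc ∏ t, r (q t) = ∏ t, ((if q t = (true, false) then p else 1) * u (q t)) :=
            Finset.prod_congr rfl fun t _ => hfac t
        _ = (∏ t, (if q t = (true, false) then p else 1)) * ∏ t, u (q t) :=
            Finset.prod_mul_distrib
        _ ≤ p ^ s * ∏ t, u (q t) := by
            refine mul_le_mul_of_nonneg_right ?_
              (Finset.prod_nonneg fun t _ => hu_nonneg (q t))
            have hprod : (∏ t, (if q t = (true, false) then p else 1))
                = p ^ (Finset.univ.filter fun t => q t = (true, false)).card := by
              rw [Finset.prod_ite, Finset.prod_const, Finset.prod_const, one_pow, mul_one]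
            rw [hprod]
            exact pow_le_pow_of_le_one hp0 hp1 hcard
    · rw [if_neg hq, zero_mul]
      exact mul_nonneg (pow_nonneg hp0 s)
        (Finset.prod_nonneg fun t _ => hu_nonneg (q t))
  calc ∑ q : Fin m → Bool × Bool, F q * ∏ t, r (q t)
      ≤ ∑ q : Fin m → Bool × Bool, p ^ s * ∏ t, u (q t) :=
        Finset.sum_le_sum fun q _ => pointwise q
    _ = p ^ s * ∑ q : Fin m → Bool × Bool, ∏ t, u (q t) := by rw [← Finset.mul_sum]
    _ = p ^ s := by
        rw [← Fintype.prod_sum (fun (_ : Fin m) (gc : Bool × Bool) => u gc)]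
        rw [Finset.prod_congr rfl fun t _ => hu_sum]
        simp

set_option maxHeartbeats 1000000 in
lemma arith {d m : ℕ} {c A L : ℝ} (hd : 1 ≤ d) (hm : 0 < m)
    (hc_lb : Real.exp (-1) ≤ c) (hc1 : c ≤ 1) (hA : 0 < A) (hL : 0 < L)
    (hm2 : (m : ℝ) - Real.sqrt (2 * Real.exp 1 * m * A) ≥ Real.exp 1 * d * L) :
    Real.sqrt (2 * m * c * A) ≤ m * c - d * L := by
  have he : (0:ℝ) < Real.exp 1 := Real.exp_pos 1
  have hm' : (0:ℝ) < m := by exact_mod_cast hm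
  have hd' : (1:ℝ) ≤ d := by exact_mod_cast hd
  have hc0 : (0:ℝ) < c := lt_of_lt_of_le (Real.exp_pos _) hc_lb
  set se : ℝ := Real.sqrt (Real.exp 1) with hse_def
  have hse : 0 < se := Real.sqrt_pos.mpr he
  have hse2 : se ^ 2 = Real.exp 1 := Real.sq_sqrt he.le
  set B : ℝ := Real.sqrt (2 * m * A) with hB_def
  have hB0 : 0 ≤ B := Real.sqrt_nonneg _
  have hB2 : B ^ 2 = 2 * m * A := Real.sq_sqrt (by positivity)
  set u : ℝ := Real.sqrt c with hu_def
  have hu0 : 0 < u := Real.sqrt_pos.mpr hc0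
  have hu2 : u ^ 2 = c := Real.sq_sqrt hc0.le
  have hu_lb : 1 / se ≤ u := by
    rw [hu_def, hse_def, one_div, ← Real.sqrt_inv, ← Real.exp_neg]
    exact Real.sqrt_le_sqrt hc_lb
  -- rewrite the hypothesis
  have hsqe : Real.sqrt (2 * Real.exp 1 * m * A) = B * se := by
    rw [hB_def, hse_def, ← Real.sqrt_mul (by positivity)]
    ring_nf
  rw [hsqe] at hm2
  -- rewrite the goal
  have hgoal_eq : Real.sqrt (2 * m * c * A) = B * u := by
    rw [hB_def, hu_def, ← Real.sqrt_mul (by positivity)]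
    ring_nf
  rw [hgoal_eq]
  -- m ≥ 2 e A
  have hstep : B * se ≤ m := by
    nlinarith [mul_pos (mul_pos he (lt_of_lt_of_le one_pos hd')) hL]
  have hsq1 : (B * se) ^ 2 ≤ (m:ℝ) ^ 2 := by nlinarith [hstep, mul_nonneg hB0 hse.le]
  have hsq2 : (B * se) ^ 2 = 2 * m * A * Real.exp 1 := by rw [mul_pow, hB2, hse2]
  have h2eA : 2 * Real.exp 1 * A ≤ m := by nlinarith [hsq1, hsq2, hm']
  -- key factorization
  have hb : B ≤ m * (u + 1 / se) := by
    have h1 : B * se ≤ 2 * m := by nlinarith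
    have h2 : B ≤ 2 * m / se := by
      rw [le_div_iff₀ hse]; linarith
    have h4 : 2 / se ≤ u + 1 / se := by
      rw [show (2:ℝ) / se = 1 / se + 1 / se by ring]
      linarith [hu_lb]
    have h3 : 2 * m / se ≤ m * (u + 1 / se) := by
      calc 2 * (m:ℝ) / se = m * (2 / se) := by ring
        _ ≤ m * (u + 1 / se) := mul_le_mul_of_nonneg_left h4 hm'.le
    linarith
  have hfac : 0 ≤ (u - 1 / se) * (m * (u + 1 / se) - B) :=
    mul_nonneg (by linarith) (by linarith)
  have hline : m * (1 / se) ^ 2 - B * (1 / se) ≤ m * u ^ 2 - B * u := by nlinarith [hfac]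
  have hrhs : m * (1 / se) ^ 2 - B * (1 / se) = (m - B * se) / se ^ 2 := by
    field_simp
  have hdl : d * L ≤ (m - B * se) / se ^ 2 := by
    rw [le_div_iff₀ (by positivity)]
    calc d * L * se ^ 2 = se ^ 2 * (d * L) := by ring
      _ = Real.exp 1 * (d * L) := by rw [hse2]
      _ ≤ m - B * se := by linarith [hm2]
  nlinarith [hline, hrhs, hdl]


end RIDaux

open RIDaux in
set_option maxHeartbeats 2000000 in
theorem rid_upper_bound (d n m : ℕ) (hd : 1 ≤ d) (hn : d < n) (δ : ℝ)
    (hδ : δ ∈ Set.Ioo (0 : ℝ) 1) (hm : 0 < m)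
    (hm2 : (m : ℝ) - Real.sqrt (2 * Real.exp 1 * m * Real.log (2 / δ)) ≥
      Real.exp 1 * d * Real.log (2 * n / δ))
    (I : Finset (Fin n)) (hI : I.card ≤ d) :
    ridProb m n (Real.exp (-(1 : ℝ) / d)) (fun M => Disjunct I M) ≥ 1 - δ := by
  obtain ⟨hδ0, hδ1⟩ := hδ
  set p : ℝ := Real.exp (-(1 : ℝ) / d) with hp_def
  have hd0 : (0:ℝ) < d := by exact_mod_cast hd
  have hn2 : (2:ℝ) ≤ n := by exact_mod_cast (lt_of_le_of_lt hd hn)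
  have hp0 : 0 < p := Real.exp_pos _
  have hp1 : p ≤ 1 := by
    rw [hp_def, ← Real.exp_zero]
    exact Real.exp_le_exp.mpr (div_nonpos_of_nonpos_of_nonneg (by norm_num) hd0.le)
  set L : ℝ := Real.log (2 * n / δ) with hL_def
  set A : ℝ := Real.log (2 / δ) with hA_def
  have hL : 0 < L := Real.log_pos ((one_lt_div hδ0).mpr (by linarith))
  have hA : 0 < A := Real.log_pos ((one_lt_div hδ0).mpr (by linarith))
  set k : ℕ := I.card with hk_def
  set c : ℝ := p ^ k with hc_def
  have hc_eq : c = Real.exp ((k:ℝ) * (-(1:ℝ) / d)) := by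
    rw [hc_def, hp_def, ← Real.exp_nat_mul]
  have hc_lb : Real.exp (-1) ≤ c := by
    rw [hc_eq]
    refine Real.exp_le_exp.mpr ?_
    have hkd : (k:ℝ) ≤ d := by exact_mod_cast hI
    have : (k:ℝ) * (-(1:ℝ) / d) = -((k:ℝ) / d) := by ring
    rw [this]
    have : (k:ℝ) / d ≤ 1 := (div_le_one hd0).mpr hkd
    linarith
  have hc1 : c ≤ 1 := pow_le_one₀ hp0.le hp1
  have hc0 : 0 < c := pow_pos hp0 k
  set s : ℕ := ⌈(d:ℝ) * L⌉₊ with hs_def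
  have hdL0 : (0:ℝ) ≤ (d:ℝ) * L := by positivity
  have hs1 : (d:ℝ) * L ≤ s := Nat.le_ceil _
  have hs2 : (s:ℝ) < (d:ℝ) * L + 1 := by
    rw [hs_def]
    exact_mod_cast Nat.ceil_lt_add_one hdL0
  have hps : p ^ s ≤ δ / (2 * n) := by
    have h1 : p ^ s = Real.exp ((s:ℝ) * (-(1:ℝ) / d)) := by
      rw [hp_def, ← Real.exp_nat_mul]
    rw [h1]
    have h2 : (s:ℝ) * (-(1:ℝ) / d) ≤ -L := by
      have h3 : L * d ≤ (s:ℝ) := by nlinarith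
      have h4 : (s:ℝ) * (-(1:ℝ) / d) = -((s:ℝ) / d) := by ring
      rw [h4, neg_le_neg_iff, le_div_iff₀ hd0]
      linarith
    calc Real.exp ((s:ℝ) * (-(1:ℝ) / d)) ≤ Real.exp (-L) := Real.exp_le_exp.mpr h2
      _ = δ / (2 * n) := by
          rw [hL_def, Real.exp_neg, Real.exp_log (by positivity), inv_div]
  have hexpA : Real.exp (-A) = δ / 2 := by
    rw [hA_def, Real.exp_neg, Real.exp_log (by positivity), inv_div]
  have w_nonneg : ∀ M : Fin m → Fin n → Bool, 0 ≤ ∏ t, fw p (M t) :=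
    fun M => Finset.prod_nonneg fun t _ => fw_nonneg hp0.le hp1 _
  -- binomial tail bound
  have hbin : ∑ M : Fin m → Fin n → Bool,
      (if (Finset.univ.filter fun t => ∀ j ∈ I, M t j = false).card < s
        then ∏ t, fw p (M t) else 0) ≤ δ / 2 := by
    have hb := binom_reduce (m := m) p I (fun x => x < s)
    have e1 : (∑ M : Fin m → Fin n → Bool,
        (if (Finset.univ.filter fun t => ∀ j ∈ I, M t j = false).card < s
          then ∏ t, fw p (M t) else 0))
        = ∑ b : Fin m → Bool, (if X b < s then ∏ t, (if b t then c else 1 - c) else 0) :=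
      (sum_ind_eq _ fun M => Iff.rfl).trans
        (hb.trans (sum_ind_eq _ fun b => Iff.rfl))
    rw [e1]
    set t0 : ℝ := (m:ℝ) * c - d * L with ht0_def
    have hG : Real.sqrt (2 * m * c * A) ≤ t0 := arith hd hm hc_lb hc1 hA hL hm2
    have ht0 : 0 ≤ t0 := le_trans (Real.sqrt_nonneg _) hG
    have hbinw : ∀ b : Fin m → Bool, 0 ≤ ∏ t, (if b t then c else 1 - c) :=
      fun b => Finset.prod_nonneg fun t _ => by
        by_cases h : b t <;> simp [h, hc0.le, sub_nonneg, hc1]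
    have hmono : ∑ b : Fin m → Bool,
          (if X b < s then ∏ t, (if b t then c else 1 - c) else 0)
        ≤ ∑ b : Fin m → Bool,
          (if (X b : ℝ) ≤ (m:ℝ) * c - t0 then ∏ t, (if b t then c else 1 - c) else 0) := by
      refine sum_ind_mono hbinw fun b hb => ?_
      have h1 : (X b : ℝ) + 1 ≤ s := by exact_mod_cast hb
      have h2 : (m:ℝ) * c - t0 = d * L := by rw [ht0_def]; ring
      rw [h2]; linarith
    calc ∑ b : Fin m → Bool, (if X b < s then ∏ t, (if b t then c else 1 - c) else 0)
        ≤ ∑ b : Fin m → Bool,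
            (if (X b : ℝ) ≤ (m:ℝ) * c - t0 then ∏ t, (if b t then c else 1 - c) else 0) := hmono
      _ ≤ Real.exp (-t0 ^ 2 / (2 * m * c)) := chernoff hc0 hc1 ht0 hm
      _ ≤ Real.exp (-A) := by
          refine Real.exp_le_exp.mpr ?_
          have hsq : 2 * m * c * A ≤ t0 ^ 2 := by
            nlinarith [Real.sq_sqrt (show (0:ℝ) ≤ 2 * m * c * A by positivity),
              Real.sqrt_nonneg (2 * m * c * A)]
          have hpos : (0:ℝ) < 2 * m * c := by
            have : (0:ℝ) < m := by exact_mod_cast hm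
            positivity
          rw [neg_div, neg_le_neg_iff, le_div_iff₀ hpos]
          linarith
      _ = δ / 2 := hexpA
  -- union over bad items
  have hbad : ∀ i : Fin n, i ∉ I → ∑ M : Fin m → Fin n → Bool,
      (if ((∀ t, (∀ j ∈ I, M t j = false) → M t i = false) ∧
            s ≤ (Finset.univ.filter fun t => ∀ j ∈ I, M t j = false).card)
        then ∏ t, fw p (M t) else 0) ≤ δ / (2 * n) := fun i hi =>
    le_trans (le_of_eq (sum_ind_eq _ fun M => Iff.rfl))
      (le_trans (bad_bound hp0.le hp1 I i hi s) hps)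
  -- complement computation
  have hrid : ∀ pred : (Fin m → Fin n → Bool) → Prop,
      ridProb m n p pred = ∑ M : Fin m → Fin n → Bool,
        (if pred M then ∏ t, fw p (M t) else 0) := fun _ => rfl
  have hmass : ∑ M : Fin m → Fin n → Bool, ∏ t, fw p (M t) = 1 := by
    rw [← Fintype.prod_sum (fun (_ : Fin m) (ρ : Fin n → Bool) => fw p ρ)]
    rw [Finset.prod_congr rfl fun t _ => sum_fw (p := p)]
    simp
  have hcompl : ridProb m n p (fun M => Disjunct I M)
      = 1 - ridProb m n p (fun M => ¬ Disjunct I M) := by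
    rw [hrid, hrid, ← hmass, eq_sub_iff_add_eq, ← Finset.sum_add_distrib]
    refine Finset.sum_congr rfl fun M _ => ?_
    by_cases h : Disjunct I M
    · rw [if_pos h, if_neg (not_not_intro h), add_zero]
    · rw [if_neg h, if_pos h, zero_add]
  -- probability of failure
  have hfail : ridProb m n p (fun M => ¬ Disjunct I M) ≤ δ := by
    rw [hrid]
    have hsplit : ∀ M : Fin m → Fin n → Bool, ¬ Disjunct I M →
        ((Finset.univ.filter fun t => ∀ j ∈ I, M t j = false).card < s)
        ∨ (¬ Disjunct I M ∧ s ≤ (Finset.univ.filter fun t => ∀ j ∈ I, M t j = false).card) := by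
      intro M h
      by_cases hcs : (Finset.univ.filter fun t => ∀ j ∈ I, M t j = false).card < s
      · exact Or.inl hcs
      · exact Or.inr ⟨h, not_lt.mp hcs⟩
    have step2 : ∑ M : Fin m → Fin n → Bool,
        (if (¬ Disjunct I M ∧
            s ≤ (Finset.univ.filter fun t => ∀ j ∈ I, M t j = false).card)
          then ∏ t, fw p (M t) else 0) ≤ δ / 2 := by
      have hexists : ∀ M : Fin m → Fin n → Bool,
          (¬ Disjunct I M ∧
            s ≤ (Finset.univ.filter fun t => ∀ j ∈ I, M t j = false).card) →
          ∃ i ∈ Iᶜ, ((∀ t, (∀ j ∈ I, M t j = false) → M t i = false) ∧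
            s ≤ (Finset.univ.filter fun t => ∀ j ∈ I, M t j = false).card) := by
        rintro M ⟨hnd, hcard⟩
        rw [Disjunct] at hnd
        push_neg at hnd
        obtain ⟨i, hi, hbadi⟩ := hnd
        refine ⟨i, Finset.mem_compl.mpr hi, ?_, hcard⟩
        intro t ht
        cases hMt : M t i
        · rfl
        · obtain ⟨j, hj, hMj⟩ := hbadi t hMt
          exact absurd (ht j hj) hMj
      have hbound : ∀ i ∈ Iᶜ, (∑ M : Fin m → Fin n → Bool,
          (if ((∀ t, (∀ j ∈ I, M t j = false) → M t i = false) ∧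
                s ≤ (Finset.univ.filter fun t => ∀ j ∈ I, M t j = false).card)
            then ∏ t, fw p (M t) else 0)) ≤ δ / (2 * n) := fun i hi =>
        hbad i (Finset.mem_compl.mp hi)
      refine le_trans (sum_ind_union (s := Iᶜ) w_nonneg hexists)
        (le_trans (Finset.sum_le_sum hbound) ?_)
      rw [Finset.sum_const, nsmul_eq_mul]
      have h1 : (Iᶜ.card : ℝ) ≤ n := by
        have h0 := Finset.card_le_univ (Iᶜ : Finset (Fin n))
        have h2 : (Finset.univ : Finset (Fin n)).card = n := by simp
        exact_mod_cast le_trans h0 (le_of_eq h2)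
      have h2 : (0:ℝ) ≤ δ / (2 * n) := by positivity
      calc (Iᶜ.card : ℝ) * (δ / (2 * n)) ≤ n * (δ / (2 * n)) :=
            mul_le_mul_of_nonneg_right h1 h2
        _ = δ / 2 := by field_simp
    refine le_trans (sum_ind_or w_nonneg hsplit)
      (le_trans (add_le_add hbin step2) (le_of_eq (by ring)))
  rw [hcompl]
  linarith

end
end

section
/- For every integer d ≥ 1 there exists N such that for all integers n ≥ N the following holds: for every p ∈ [0,1], every positive integer m satisfying m + e³·√(3m) ≤ e·d·ln n, and every set I ⊆ {1,…,n} with |I| = d, the m×n RID random matrix M with parameter p fails to be (n,I)-disjunct with probability at least 1/3. -/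
open scoped Classical

noncomputable section

lemma sum_fn_prod {ι κ : Type*} [Fintype ι] [Fintype κ] [DecidableEq ι] (f : ι → κ → ℝ) :
    ∑ g : ι → κ, ∏ i, f i (g i) = ∏ i, ∑ x, f i x := (Fintype.prod_sum _).symm

lemma indicator_forall_prod {ι : Type*} [Fintype ι] (P : ι → Prop) (g : ι → ℝ) :
    (if ∀ i, P i then ∏ i, g i else 0) = ∏ i, (if P i then g i else 0) := by
  by_cases h : ∀ i, P i
  · rw [if_pos h]; exact Finset.prod_congr rfl fun i _ => (if_pos (h i)).symm
  · rw [if_neg h]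
    push_neg at h
    obtain ⟨i, hi⟩ := h
    exact (Finset.prod_eq_zero (Finset.mem_univ i) (if_neg hi : (if P i then g i else (0:ℝ)) = 0)).symm

def w1 (p : ℝ) (b : Bool) : ℝ := if b then 1 - p else p

def Wcol (p : ℝ) {m : ℕ} (c : Fin m → Bool) : ℝ := ∏ t, w1 p (c t)

lemma Wcol_nonneg {p : ℝ} (h0 : 0 ≤ p) (h1 : p ≤ 1) {m : ℕ} (c : Fin m → Bool) :
    0 ≤ Wcol p c :=
  Finset.prod_nonneg fun t _ => by unfold w1; cases c t <;> simp <;> linarith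

lemma sum_w1 (p : ℝ) : ∑ b : Bool, w1 p b = 1 := by
  rw [Fintype.sum_bool]; simp [w1]

lemma sum_Wcol (p : ℝ) (m : ℕ) : ∑ c : Fin m → Bool, Wcol p c = 1 := by
  unfold Wcol
  rw [sum_fn_prod (fun _ b => w1 p b)]
  have h1 : w1 p true + w1 p false = 1 := by simp [w1]
  simp [Fintype.sum_bool, h1]

lemma sum_Wcol_allfalse (p : ℝ) {m : ℕ} (S : Finset (Fin m)) :
    ∑ c : Fin m → Bool, (if ∀ t ∈ S, c t = false then Wcol p c else 0) = p ^ S.card := by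
  have key : ∀ c : Fin m → Bool,
      (if ∀ t ∈ S, c t = false then Wcol p c else 0)
        = ∏ t, (fun t (b : Bool) => if t ∈ S then (if b then 0 else p) else w1 p b) t (c t) := by
    intro c
    by_cases hc : ∀ t ∈ S, c t = false
    · rw [if_pos hc]
      refine Finset.prod_congr rfl fun t _ => ?_
      by_cases ht : t ∈ S
      · simp only [ht, if_pos, hc t ht]; simp [w1]
      · simp only [ht, if_neg, if_false]
    · rw [if_neg hc]
      push_neg at hc
      obtain ⟨t, htS, htc⟩ := hc
      refine (Finset.prod_eq_zero (Finset.mem_univ t) ?_).symm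
      simp only [Bool.not_eq_false] at htc
      show (if t ∈ S then if c t = true then 0 else p else w1 p (c t)) = 0
      simp [htS, htc]
  rw [Finset.sum_congr rfl fun c _ => key c,
    sum_fn_prod (fun t (b : Bool) => if t ∈ S then (if b then 0 else p) else w1 p b)]
  have h2 : ∀ t : Fin m, (∑ b : Bool, if t ∈ S then (if b then 0 else p) else w1 p b)
      = if t ∈ S then p else 1 := by
    intro t
    rw [Fintype.sum_bool]
    by_cases ht : t ∈ S <;> simp [ht, w1]
  rw [Finset.prod_congr rfl fun t _ => h2 t, Finset.prod_ite_mem, Finset.univ_inter,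
    Finset.prod_const]

lemma sum_Wcol_cov (p : ℝ) {m : ℕ} (S : Finset (Fin m)) :
    ∑ c : Fin m → Bool, (if ∃ t ∈ S, c t = true then Wcol p c else 0) = 1 - p ^ S.card := by
  have h := sum_Wcol p m
  have split : ∀ c : Fin m → Bool,
      (if ∃ t ∈ S, c t = true then Wcol p c else 0)
        = Wcol p c - (if ∀ t ∈ S, c t = false then Wcol p c else 0) := by
    intro c
    by_cases hc : ∃ t ∈ S, c t = true
    · rw [if_pos hc, if_neg, sub_zero]
      obtain ⟨t, ht, htc⟩ := hc
      intro hall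
      rw [hall t ht] at htc; exact Bool.false_ne_true htc
    · rw [if_neg hc, if_pos, sub_self]
      intro t ht
      by_contra hne
      exact hc ⟨t, ht, by simpa using hne⟩
  rw [Finset.sum_congr rfl fun c _ => split c, Finset.sum_sub_distrib, h,
    sum_Wcol_allfalse]



def WI (p : ℝ) {ι : Type*} [Fintype ι] {m : ℕ} (A : ι → Fin m → Bool) : ℝ := ∏ j, Wcol p (A j)

def Kz {ι : Type*} [Fintype ι] {m : ℕ} (A : ι → Fin m → Bool) : Finset (Fin m) :=
  Finset.univ.filter (fun t => ∀ j, A j t = false)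

variable {ι : Type*} [Fintype ι] [DecidableEq ι] {m : ℕ}

lemma WI_nonneg {p : ℝ} (h0 : 0 ≤ p) (h1 : p ≤ 1) (A : ι → Fin m → Bool) : 0 ≤ WI p A :=
  Finset.prod_nonneg fun j _ => Wcol_nonneg h0 h1 _

lemma sum_WI (p : ℝ) : ∑ A : ι → Fin m → Bool, WI p A = 1 := by
  unfold WI
  rw [sum_fn_prod (fun _ c => Wcol p c)]
  simp [sum_Wcol]

lemma sum_WI_allfalse (p : ℝ) (S : Finset (Fin m)) :
    ∑ A : ι → Fin m → Bool, (if ∀ j : ι, ∀ t ∈ S, A j t = false then WI p A else 0)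
      = (p ^ S.card) ^ (Fintype.card ι) := by
  have key : ∀ A : ι → Fin m → Bool,
      (if ∀ j : ι, ∀ t ∈ S, A j t = false then WI p A else 0)
        = ∏ j, (fun (_ : ι) (c : Fin m → Bool) =>
            if ∀ t ∈ S, c t = false then Wcol p c else 0) j (A j) := fun A => by
    unfold WI
    convert indicator_forall_prod (fun j => ∀ t ∈ S, A j t = false) (fun j => Wcol p (A j))
      using 2
    simp
  rw [Finset.sum_congr rfl fun A _ => key A,
    sum_fn_prod (fun (_ : ι) (c : Fin m → Bool) => if ∀ t ∈ S, c t = false then Wcol p c else 0)]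
  simp [sum_Wcol_allfalse]

lemma sum_WI_cov (p : ℝ) {κ : Type*} [Fintype κ] [DecidableEq κ] (S : Finset (Fin m)) :
    ∑ B : κ → Fin m → Bool, (if ∀ i : κ, ∃ t ∈ S, B i t = true then WI p B else 0)
      = (1 - p ^ S.card) ^ (Fintype.card κ) := by
  have key : ∀ B : κ → Fin m → Bool,
      (if ∀ i : κ, ∃ t ∈ S, B i t = true then WI p B else 0)
        = ∏ i, (fun (_ : κ) (c : Fin m → Bool) =>
            if ∃ t ∈ S, c t = true then Wcol p c else 0) i (B i) := fun B => by
    unfold WI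
    convert indicator_forall_prod (fun i => ∃ t ∈ S, B i t = true) (fun i => Wcol p (B i))
      using 2
    simp
  rw [Finset.sum_congr rfl fun B _ => key B,
    sum_fn_prod (fun (_ : κ) (c : Fin m → Bool) => if ∃ t ∈ S, c t = true then Wcol p c else 0)]
  simp [sum_Wcol_cov]

lemma sum_WI_zrow (p : ℝ) (t : Fin m) :
    ∑ A : ι → Fin m → Bool, (if ∀ j : ι, A j t = false then WI p A else 0)
      = p ^ (Fintype.card ι) := by
  have h := sum_WI_allfalse (ι := ι) p {t}
  simp only [Finset.mem_singleton, Finset.card_singleton, pow_one] at h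
  rw [← h]
  refine Finset.sum_congr rfl fun A _ => ?_
  refine if_congr ?_ rfl rfl
  constructor
  · intro hall j t' ht'; rw [ht']; exact hall j
  · intro hall j; exact hall j t rfl

lemma sum_WI_zrow_pair (p : ℝ) {t t' : Fin m} (hne : t ≠ t') :
    ∑ A : ι → Fin m → Bool,
      (if (∀ j : ι, A j t = false) ∧ (∀ j : ι, A j t' = false) then WI p A else 0)
      = (p ^ (Fintype.card ι)) ^ 2 := by
  have h := sum_WI_allfalse (ι := ι) p {t, t'}
  rw [Finset.card_insert_of_notMem (by simpa using hne), Finset.card_singleton] at h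
  rw [show ((p ^ 2) ^ Fintype.card ι) = (p ^ Fintype.card ι) ^ 2 by ring] at h
  rw [← h]
  refine Finset.sum_congr rfl fun A _ => ?_
  refine if_congr ?_ rfl rfl
  constructor
  · rintro ⟨h1, h2⟩ j s hs
    rcases Finset.mem_insert.1 hs with rfl | hs
    · exact h1 j
    · rw [Finset.mem_singleton.1 hs]; exact h2 j
  · intro hall
    exact ⟨fun j => hall j t (Finset.mem_insert_self _ _),
      fun j => hall j t' (by simp)⟩

lemma card_Kz_cast (A : ι → Fin m → Bool) :
    ((Kz A).card : ℝ) = ∑ t : Fin m, (if ∀ j : ι, A j t = false then (1:ℝ) else 0) := by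
  unfold Kz
  rw [Finset.card_filter]
  push_cast
  rfl

lemma sum_WI_K (p : ℝ) :
    ∑ A : ι → Fin m → Bool, WI p A * ((Kz A).card : ℝ)
      = m * p ^ (Fintype.card ι) := by
  have : ∀ A : ι → Fin m → Bool, WI p A * ((Kz A).card : ℝ)
      = ∑ t : Fin m, (if ∀ j : ι, A j t = false then WI p A else 0) := by
    intro A
    rw [card_Kz_cast, Finset.mul_sum]
    exact Finset.sum_congr rfl fun t _ => by rw [mul_ite, mul_one, mul_zero]
  rw [Finset.sum_congr rfl fun A _ => this A, Finset.sum_comm]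
  rw [Finset.sum_congr rfl fun t _ => sum_WI_zrow p t]
  rw [Finset.sum_const, Finset.card_univ, Fintype.card_fin, nsmul_eq_mul]

lemma sum_WI_K2 (p : ℝ) :
    ∑ A : ι → Fin m → Bool, WI p A * ((Kz A).card : ℝ) ^ 2
      = m * p ^ (Fintype.card ι) + ((m : ℝ) ^ 2 - m) * (p ^ (Fintype.card ι)) ^ 2 := by
  set r := p ^ (Fintype.card ι) with hr
  have expand : ∀ A : ι → Fin m → Bool, WI p A * ((Kz A).card : ℝ) ^ 2
      = ∑ t : Fin m, ∑ t' : Fin m,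
          (if (∀ j : ι, A j t = false) ∧ (∀ j : ι, A j t' = false) then WI p A else 0) := by
    intro A
    rw [sq, card_Kz_cast, Finset.sum_mul_sum, Finset.mul_sum]
    refine Finset.sum_congr rfl fun t _ => ?_
    rw [Finset.mul_sum]
    refine Finset.sum_congr rfl fun t' _ => ?_
    by_cases h1 : ∀ j : ι, A j t = false <;> by_cases h2 : ∀ j : ι, A j t' = false <;>
      simp [h1, h2]
  rw [Finset.sum_congr rfl fun A _ => expand A, Finset.sum_comm]
  have swap2 : ∀ t : Fin m,
      (∑ A : ι → Fin m → Bool, ∑ t' : Fin m,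
        (if (∀ j : ι, A j t = false) ∧ (∀ j : ι, A j t' = false) then WI p A else 0))
      = ∑ t' : Fin m, (if t = t' then r else r ^ 2) := by
    intro t
    rw [Finset.sum_comm]
    refine Finset.sum_congr rfl fun t' _ => ?_
    by_cases hne : t = t'
    · subst hne
      rw [if_pos rfl, hr, ← sum_WI_zrow (ι := ι) p t]
      refine Finset.sum_congr rfl fun A _ => if_congr (and_self_iff) rfl rfl
    · rw [if_neg hne, hr]
      exact sum_WI_zrow_pair p hne
  rw [Finset.sum_congr rfl fun t _ => swap2 t]
  have inner : ∀ t : Fin m, (∑ t' : Fin m, (if t = t' then r else r ^ 2))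
      = (r - r ^ 2) + m * r ^ 2 := by
    intro t
    have : ∀ t' : Fin m, (if t = t' then r else r ^ 2)
        = (if t = t' then r - r ^ 2 else 0) + r ^ 2 := by
      intro t'; by_cases h : t = t' <;> simp [h]
    rw [Finset.sum_congr rfl fun t' _ => this t', Finset.sum_add_distrib,
      Finset.sum_ite_eq, if_pos (Finset.mem_univ t), Finset.sum_const, Finset.card_univ,
      Fintype.card_fin, nsmul_eq_mul]
  rw [Finset.sum_congr rfl fun t _ => inner t, Finset.sum_const, Finset.card_univ,
    Fintype.card_fin, nsmul_eq_mul]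
  ring

lemma sum_WI_var (p : ℝ) :
    ∑ A : ι → Fin m → Bool, WI p A * (((Kz A).card : ℝ) - m * p ^ (Fintype.card ι)) ^ 2
      = m * p ^ (Fintype.card ι) * (1 - p ^ (Fintype.card ι)) := by
  set r := p ^ (Fintype.card ι) with hr
  have expand : ∀ A : ι → Fin m → Bool,
      WI p A * (((Kz A).card : ℝ) - m * r) ^ 2
        = WI p A * ((Kz A).card : ℝ) ^ 2
          - (2 * (m * r)) * (WI p A * ((Kz A).card : ℝ)) + (m * r) ^ 2 * WI p A := by
    intro A; ring
  rw [Finset.sum_congr rfl fun A _ => expand A, Finset.sum_add_distrib,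
    Finset.sum_sub_distrib, ← Finset.mul_sum, ← Finset.mul_sum, sum_WI_K2, sum_WI_K, sum_WI]
  ring





lemma ridProb_total (m n : ℕ) (p : ℝ) :
    ∑ M : Fin m → Fin n → Bool, (∏ t : Fin m, ∏ j : Fin n, (if M t j then 1 - p else p)) = 1 := by
  have : ∀ M : Fin m → Fin n → Bool, (∏ t : Fin m, ∏ j : Fin n, (if M t j then 1 - p else p))
      = ∏ t : Fin m, (fun (_ : Fin m) (c : Fin n → Bool) => Wcol p c) t (M t) := by
    intro M; rfl
  rw [Finset.sum_congr rfl fun M _ => this M,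
    sum_fn_prod (fun (_ : Fin m) (c : Fin n → Bool) => Wcol p c)]
  simp [sum_Wcol]

lemma ridProb_not (m n : ℕ) (p : ℝ) (pred : (Fin m → Fin n → Bool) → Prop) :
    ridProb m n p (fun M => ¬ pred M) = 1 - ridProb m n p pred := by
  unfold ridProb
  rw [eq_sub_iff_add_eq, ← Finset.sum_add_distrib]
  refine Eq.trans (Finset.sum_congr rfl fun M _ => ?_) (ridProb_total m n p)
  by_cases hM : pred M <;> simp [hM]

lemma prod_univ_congr {T : Type*} (i1 i2 : Fintype T) (f g : T → ℝ) (h : ∀ x, f x = g x) :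
    (@Finset.univ T i1).prod f = (@Finset.univ T i2).prod g := by
  obtain rfl : i1 = i2 := Subsingleton.elim _ _
  exact Finset.prod_congr rfl fun x _ => h x

lemma sum_univ_congr {T : Type*} (i1 i2 : Fintype T) (f g : T → ℝ) (h : ∀ x, f x = g x) :
    (@Finset.univ T i1).sum f = (@Finset.univ T i2).sum g := by
  obtain rfl : i1 = i2 := Subsingleton.elim _ _
  exact Finset.sum_congr rfl fun x _ => h x

lemma swap_bijective {m n : ℕ} :
    Function.Bijective (Function.swap : (Fin n → Fin m → Bool) → (Fin m → Fin n → Bool)) := by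
  constructor
  · intro a b h
    funext i j
    exact congrFun (congrFun h j) i
  · intro M
    exact ⟨Function.swap M, rfl⟩

set_option maxHeartbeats 1000000 in
lemma ridProb_disjunct (m n : ℕ) (p : ℝ) (I : Finset (Fin n)) :
    ridProb m n p (fun M => Disjunct I M)
      = ∑ A : {x : Fin n // x ∈ I} → Fin m → Bool,
          WI p A * (1 - p ^ (Kz A).card) ^ (n - I.card) := by
  set G : (Fin n → Fin m → Bool) → ℝ :=
    fun N => if Disjunct I (Function.swap N) then ∏ j, Wcol p (N j) else 0 with hG
  have step1 : ridProb m n p (fun M => Disjunct I M) = ∑ N : Fin n → Fin m → Bool, G N := by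
    rw [ridProb]
    refine (Fintype.sum_bijective Function.swap swap_bijective _ _ fun N => ?_).symm
    show (if Disjunct I (Function.swap N) then ∏ j, Wcol p (N j) else 0) = _
    have hh : (∏ t : Fin m, ∏ j : Fin n, (if Function.swap N t j then 1 - p else p))
        = ∏ j, Wcol p (N j) := by
      rw [Finset.prod_comm]
      rfl
    rw [hh]
  rw [step1]
  have step2 : ∑ N : Fin n → Fin m → Bool, G N
      = ∑ AB : ({x : Fin n // x ∈ I} → Fin m → Bool) × ({x : Fin n // ¬ x ∈ I} → Fin m → Bool),
          G ((Equiv.piEquivPiSubtypeProd (fun j : Fin n => j ∈ I)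
            (fun _ => Fin m → Bool)).symm AB) :=
    (Equiv.sum_comp _ G).symm
  rw [step2, Fintype.sum_prod_type]
  refine Finset.sum_congr rfl fun A _ => ?_
  set N0 : ({x : Fin n // ¬ x ∈ I} → Fin m → Bool) → (Fin n → Fin m → Bool) :=
    fun B => (Equiv.piEquivPiSubtypeProd (fun j : Fin n => j ∈ I)
      (fun _ => Fin m → Bool)).symm (A, B) with hN0
  have hval : ∀ (B : {x : Fin n // ¬ x ∈ I} → Fin m → Bool) (j : Fin n),
      N0 B j = if h : j ∈ I then A ⟨j, h⟩ else B ⟨j, h⟩ := by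
    intro B j
    simp [hN0, Equiv.piEquivPiSubtypeProd]
  have hvalI : ∀ (B : {x : Fin n // ¬ x ∈ I} → Fin m → Bool) (j : {x : Fin n // x ∈ I}),
      N0 B ↑j = A j := by
    intro B j
    rw [hval B ↑j, dif_pos j.2]
  have hvalIc : ∀ (B : {x : Fin n // ¬ x ∈ I} → Fin m → Bool) (i : {x : Fin n // ¬ x ∈ I}),
      N0 B ↑i = B i := by
    intro B i
    rw [hval B ↑i, dif_neg i.2]
  have hcond : ∀ B : {x : Fin n // ¬ x ∈ I} → Fin m → Bool,
      Disjunct I (Function.swap (N0 B))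
        ↔ ∀ i : {x : Fin n // ¬ x ∈ I}, ∃ t ∈ Kz A, B i t = true := by
    intro B
    constructor
    · intro hD i
      obtain ⟨t, h1, h2⟩ := hD ↑i i.2
      refine ⟨t, ?_, ?_⟩
      · rw [Kz, Finset.mem_filter]
        refine ⟨Finset.mem_univ t, fun j => ?_⟩
        have h3 := h2 ↑j j.2
        rwa [show Function.swap (N0 B) t ↑j = N0 B ↑j t from rfl, hvalI B j] at h3
      · rwa [show Function.swap (N0 B) t ↑i = N0 B ↑i t from rfl, hvalIc B i] at h1
    · intro hC i hi
      obtain ⟨t, ht, hB⟩ := hC ⟨i, hi⟩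
      rw [Kz, Finset.mem_filter] at ht
      refine ⟨t, ?_, ?_⟩
      · show N0 B i t = true
        have h4 : N0 B ↑(⟨i, hi⟩ : {x : Fin n // ¬ x ∈ I}) t = B ⟨i, hi⟩ t := by
          rw [hvalIc B ⟨i, hi⟩]
        rw [h4]; exact hB
      · intro j hj
        show N0 B j t = false
        have h5 : N0 B ↑(⟨j, hj⟩ : {x : Fin n // x ∈ I}) t = A ⟨j, hj⟩ t := by
          rw [hvalI B ⟨j, hj⟩]
        rw [h5]; exact ht.2 ⟨j, hj⟩
  have hw : ∀ B : {x : Fin n // ¬ x ∈ I} → Fin m → Bool,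
      (∏ j, Wcol p (N0 B j)) = WI p A * WI p B := by
    intro B
    rw [← Fintype.prod_subtype_mul_prod_subtype (fun j : Fin n => j ∈ I)
      (fun j => Wcol p (N0 B j))]
    congr 1
    · unfold WI
      exact prod_univ_congr _ _ _ _ fun j => by rw [hvalI B j]
    · unfold WI
      exact prod_univ_congr _ _ _ _ fun i => by rw [hvalIc B i]
  have hGB : ∀ B : {x : Fin n // ¬ x ∈ I} → Fin m → Bool,
      G (N0 B) = WI p A * (if (∀ i : {x : Fin n // ¬ x ∈ I}, ∃ t ∈ Kz A, B i t = true)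
          then WI p B else 0) := by
    intro B
    rw [hG]
    by_cases hB : ∀ i : {x : Fin n // ¬ x ∈ I}, ∃ t ∈ Kz A, B i t = true
    · rw [if_pos hB]
      show (if Disjunct I (Function.swap (N0 B)) then ∏ j, Wcol p (N0 B j) else 0) = _
      rw [if_pos ((hcond B).2 hB), hw B]
    · rw [if_neg hB, mul_zero]
      show (if Disjunct I (Function.swap (N0 B)) then ∏ j, Wcol p (N0 B j) else 0) = 0
      rw [if_neg (fun hD => hB ((hcond B).1 hD))]
  have hcard : Fintype.card {x : Fin n // ¬ x ∈ I} = n - I.card := by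
    rw [Fintype.card_subtype_compl, Fintype.card_fin]
    congr 1
    exact Fintype.card_coe I
  calc ∑ B : {x : Fin n // ¬ x ∈ I} → Fin m → Bool, G (N0 B)
      = ∑ B : {x : Fin n // ¬ x ∈ I} → Fin m → Bool,
          WI p A * (if (∀ i : {x : Fin n // ¬ x ∈ I}, ∃ t ∈ Kz A, B i t = true)
            then WI p B else 0) := Finset.sum_congr rfl fun B _ => hGB B
    _ = WI p A * ∑ B : {x : Fin n // ¬ x ∈ I} → Fin m → Bool,
          (if (∀ i : {x : Fin n // ¬ x ∈ I}, ∃ t ∈ Kz A, B i t = true)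
            then WI p B else 0) := by rw [Finset.mul_sum]
    _ = WI p A * (1 - p ^ (Kz A).card) ^ (n - I.card) := by
          have hs := sum_WI_cov (m := m) p (κ := {x : Fin n // ¬ x ∈ I}) (Kz A)
          rw [hcard] at hs
          rw [← hs]


lemma y_exp_le (y : ℝ) : y * Real.exp (-y) ≤ Real.exp (-1) := by
  have h := Real.add_one_le_exp (y - 1)
  have h2 : y ≤ Real.exp (y - 1) := by linarith
  have h3 : y * Real.exp (-y) ≤ Real.exp (y - 1) * Real.exp (-y) :=
    mul_le_mul_of_nonneg_right h2 (Real.exp_nonneg _)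
  calc y * Real.exp (-y) ≤ Real.exp (y - 1) * Real.exp (-y) := h3
    _ = Real.exp (-1) := by rw [← Real.exp_add]; ring_nf

lemma rpow_neg_log_le {p a : ℝ} (hp0 : 0 < p) (hp1 : p ≤ 1) (ha : 0 < a) :
    p ^ (a : ℝ) * (-Real.log p) ≤ 1 / (Real.exp 1 * a) := by
  have hlp : Real.log p ≤ 0 := Real.log_nonpos hp0.le hp1
  set y := a * (-Real.log p) with hy
  have hrw : p ^ (a:ℝ) = Real.exp (-y) := by
    rw [Real.rpow_def_of_pos hp0, hy]
    congr 1
    ring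
  have h1 : p ^ (a:ℝ) * (-Real.log p) = (y * Real.exp (-y)) / a := by
    rw [hrw, hy]; field_simp
  rw [h1]
  have h2 : (y * Real.exp (-y)) / a ≤ Real.exp (-1) / a :=
    (div_le_div_iff_of_pos_right ha).2 (y_exp_le y)
  refine h2.trans (le_of_eq ?_)
  rw [Real.exp_neg]
  field_simp

lemma pow_neg_log_le {p : ℝ} (hp0 : 0 < p) (hp1 : p ≤ 1) {d : ℕ} (hd : 1 ≤ d) :
    p ^ d * (-Real.log p) ≤ 1 / (Real.exp 1 * d) := by
  have hd0 : (0:ℝ) < d := by exact_mod_cast hd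
  have := rpow_neg_log_le hp0 hp1 hd0
  rwa [Real.rpow_natCast] at this

lemma sqrt_pow_neg_log_le {p : ℝ} (hp0 : 0 < p) (hp1 : p ≤ 1) {d : ℕ} (hd : 1 ≤ d) :
    Real.sqrt (p ^ d) * (-Real.log p) ≤ 2 / (Real.exp 1 * d) := by
  have hd0 : (0:ℝ) < d := by exact_mod_cast hd
  have hhalf : (0:ℝ) < (d:ℝ)/2 := by linarith
  have h1 := rpow_neg_log_le hp0 hp1 hhalf
  have h2 : Real.sqrt (p ^ d) = p ^ ((d:ℝ)/2) := by
    rw [Real.sqrt_eq_rpow, ← Real.rpow_natCast p d, ← Real.rpow_mul hp0.le]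
    ring_nf
  rw [h2]
  refine h1.trans (le_of_eq ?_)
  have he : Real.exp 1 ≠ 0 := (Real.exp_pos 1).ne'
  field_simp

set_option maxHeartbeats 2000000 in
lemma analytic_key {d m n : ℕ} (hd : 1 ≤ d) (hm : 1 ≤ m) {p : ℝ} (hp0 : 0 < p) (hp1 : p ≤ 1)
    (hcond : (m : ℝ) + Real.exp 1 ^ 3 * Real.sqrt (3 * m) ≤ Real.exp 1 * d * Real.log n)
    (hnd : Real.exp (d + 1) ≤ (n : ℝ) - d) :
    ((m : ℝ) * p ^ d + Real.sqrt (3 * m * p ^ d)) * (-Real.log p) + 1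
      ≤ Real.log ((n : ℝ) - d) := by
  have he1 : (2.7182818283 : ℝ) < Real.exp 1 := Real.exp_one_gt_d9
  have he2 : Real.exp 1 < 2.7182818286 := Real.exp_one_lt_d9
  have he2' : (7.389 : ℝ) < Real.exp 1 ^ 2 := by nlinarith [he1]
  have he3 : (20.08 : ℝ) < Real.exp 1 ^ 3 := by nlinarith [he1, he2']
  have hD0 : (1:ℝ) ≤ (d:ℝ) := by exact_mod_cast hd
  have hM0 : (1:ℝ) ≤ (m:ℝ) := by exact_mod_cast hm
  have heD : (0:ℝ) < Real.exp 1 * d := by positivity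
  set e := Real.exp 1 with hedef
  set M := (m:ℝ) with hMdef
  set D := (d:ℝ) with hDdef
  set L := -Real.log p with hLdef
  have hL0 : 0 ≤ L := by
    rw [hLdef]; simp only [neg_nonneg]; exact Real.log_nonpos hp0.le hp1
  set s := Real.sqrt (3 * M) with hsdef
  have hs0 : 0 ≤ s := Real.sqrt_nonneg _
  have hs2 : s ^ 2 = 3 * M := Real.sq_sqrt (by positivity)
  have hs17 : (1:ℝ) ≤ s := by
    nlinarith [hs2, hs0]
  -- split the sqrt
  have hsplit : Real.sqrt (3 * M * p ^ d) = s * Real.sqrt (p ^ d) := by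
    rw [hsdef, ← Real.sqrt_mul (by positivity)]
  set b := Real.sqrt (p ^ d) * L with hbdef
  set a := p ^ d * L with hadef
  have ha0 : 0 ≤ a := by rw [hadef]; positivity
  have hb0 : 0 ≤ b := by rw [hbdef]; positivity
  have hA : a * (e * D) ≤ 1 := by
    have := pow_neg_log_le hp0 hp1 hd
    rw [← hadef, ← hedef, ← hDdef] at this
    calc a * (e * D) ≤ (1 / (e * D)) * (e * D) := by
          exact mul_le_mul_of_nonneg_right this heD.le
      _ = 1 := by field_simp
  have hB : b * (e * D) ≤ 2 := by
    have := sqrt_pow_neg_log_le hp0 hp1 hd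
    rw [← hbdef, ← hedef, ← hDdef] at this
    calc b * (e * D) ≤ (2 / (e * D)) * (e * D) := by
          exact mul_le_mul_of_nonneg_right this heD.le
      _ = 2 := by field_simp
  -- rewrite goal
  have hgoal_eq : ((m : ℝ) * p ^ d + Real.sqrt (3 * M * p ^ d)) * L = M * a + s * b := by
    rw [hsplit, hadef, hbdef]; ring
  rw [hgoal_eq]
  -- key1
  have key1 : M * a + s * b ≤ (M + 2 * s) / (e * D) := by
    rw [le_div_iff₀ heD]
    have h1 : M * (a * (e * D)) ≤ M * 1 := mul_le_mul_of_nonneg_left hA (by linarith)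
    have h2 : s * (b * (e * D)) ≤ s * 2 := mul_le_mul_of_nonneg_left hB hs0
    nlinarith [h1, h2]
  -- facts about logs
  have hnd0 : (0:ℝ) < (n:ℝ) - D := lt_of_lt_of_le (Real.exp_pos _) hnd
  have hn0 : (0:ℝ) < (n:ℝ) := by linarith
  have hlnd : D + 1 ≤ Real.log ((n:ℝ) - D) :=
    (Real.le_log_iff_exp_le hnd0).2 hnd
  have hΔ : Real.log n - Real.log ((n:ℝ) - D) ≤ 1/2 := by
    have h1 : Real.log ((n:ℝ)/((n:ℝ) - D)) ≤ (n:ℝ)/((n:ℝ) - D) - 1 :=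
      Real.log_le_sub_one_of_pos (div_pos hn0 hnd0)
    have h2 : Real.log ((n:ℝ)/((n:ℝ) - D)) = Real.log n - Real.log ((n:ℝ) - D) :=
      Real.log_div (ne_of_gt hn0) (ne_of_gt hnd0)
    have h3 : (n:ℝ)/((n:ℝ) - D) - 1 = D/((n:ℝ) - D) := by field_simp; ring
    have h4 : D/((n:ℝ) - D) ≤ D/Real.exp (D + 1) := by
      apply div_le_div_of_nonneg_left (by linarith) (Real.exp_pos _) hnd
    have h5 : D/Real.exp (D + 1) ≤ 1/2 := by
      rw [div_le_iff₀ (Real.exp_pos _)]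
      have h6 : Real.exp (D + 1) = Real.exp D * Real.exp 1 := Real.exp_add D 1
      have h7 : D + 1 ≤ Real.exp D := Real.add_one_le_exp D
      nlinarith [he1, Real.exp_pos D]
    linarith
  -- final inequality
  have main : M + 2 * s ≤ (Real.log ((n:ℝ) - D) - 1) * (e * D) := by
    set ln := Real.log (n:ℝ) with hln
    set lnd := Real.log ((n:ℝ) - D) with hlnddef
    by_cases hcase : D / 4 ≤ s
    · -- case A
      have h1 : M ≤ e * D * ln - e ^ 3 * s := by linarith [hcond]
      have h2 : e * D * ln ≤ e * D * lnd + (e * D) * (1/2) := by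
        have := mul_le_mul_of_nonneg_left hΔ heD.le
        nlinarith [this]
      have h3 : (e ^ 3 - 2) * (D/4) ≤ (e ^ 3 - 2) * s :=
        mul_le_mul_of_nonneg_left hcase (by nlinarith)
      nlinarith [h1, h2, h3, heD]
    · -- case B
      push_neg at hcase
      have hM48 : M ≤ D ^ 2 / 48 := by nlinarith [hs2, hs0, hcase]
      have hlnd2 : D + 1 ≤ lnd := hlnd
      nlinarith [hM48, hlnd2, heD, hD0, he1, he2, hcase, hs0]
  calc M * a + s * b + 1 ≤ (M + 2 * s) / (e * D) + 1 := by linarith [key1]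
    _ ≤ Real.log ((n:ℝ) - D) := by
        rw [← sub_nonneg]
        have h9 : (M + 2*s)/(e*D) ≤ Real.log ((n:ℝ) - D) - 1 := by
          rw [div_le_iff₀ heD]
          linarith [main]
        linarith


lemma fintype_card_congr {T : Type*} (i1 i2 : Fintype T) :
    @Fintype.card T i1 = @Fintype.card T i2 := by
  obtain rfl : i1 = i2 := Subsingleton.elim _ _
  rfl

set_option maxHeartbeats 2000000 in
theorem rid_lower_bound (d : ℕ) (hd : 1 ≤ d) :
    ∃ N : ℕ, ∀ n : ℕ, N ≤ n →
      ∀ p : ℝ, p ∈ Set.Icc (0 : ℝ) 1 →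
      ∀ m : ℕ, 0 < m →
        (m : ℝ) + Real.exp 1 ^ 3 * Real.sqrt (3 * m) ≤ Real.exp 1 * d * Real.log n →
        ∀ I : Finset (Fin n), I.card = d →
          ridProb m n p (fun M => ¬ Disjunct I M) ≥ 1 / 3 := by
  refine ⟨d + ⌈Real.exp (d + 1)⌉₊, fun n hn p hp m hm hcond I hI => ?_⟩
  obtain ⟨hp0, hp1⟩ := hp
  have hceil : Real.exp (d + 1) ≤ (⌈Real.exp (d + 1)⌉₊ : ℕ) := Nat.le_ceil _
  have hceil1 : 1 ≤ ⌈Real.exp (d + 1)⌉₊ := Nat.ceil_pos.2 (Real.exp_pos _)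
  have hdn : d < n := lt_of_lt_of_le (by omega) hn
  have hndR : Real.exp (d + 1) ≤ (n : ℝ) - d := by
    have h1 : ((d + ⌈Real.exp (d + 1)⌉₊ : ℕ) : ℝ) ≤ (n : ℝ) := by exact_mod_cast hn
    push_cast at h1
    linarith [hceil]
  have hnd0R : (0:ℝ) < (n : ℝ) - d := lt_of_lt_of_le (Real.exp_pos _) hndR
  have hndpos : n - I.card ≠ 0 := by omega
  have hm1 : 1 ≤ m := hm
  -- main bound
  have hmain : ridProb m n p (fun M => Disjunct I M) ≤ 2 / 3 := by
    rw [ridProb_disjunct]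
    have hcardI : Fintype.card {x : Fin n // x ∈ I} = d :=
      (fintype_card_congr _ _).trans ((Fintype.card_coe I).trans hI)
    rcases eq_or_lt_of_le hp1 with hp1e | hp1lt
    · -- p = 1
      have hz : ∀ A : {x : Fin n // x ∈ I} → Fin m → Bool,
          WI p A * (1 - p ^ (Kz A).card) ^ (n - I.card) = 0 := by
        intro A
        rw [hp1e, one_pow, sub_self, zero_pow hndpos, mul_zero]
      rw [Finset.sum_congr rfl fun A _ => hz A, Finset.sum_const, smul_zero]
      norm_num
    rcases eq_or_lt_of_le hp0 with hp0e | hp0lt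
    · -- p = 0
      have hz : ∀ A : {x : Fin n // x ∈ I} → Fin m → Bool,
          WI p A * (1 - p ^ (Kz A).card) ^ (n - I.card) = 0 := by
        intro A
        by_cases hK : (Kz A).card = 0
        · rw [hK, pow_zero, sub_self, zero_pow hndpos, mul_zero]
        · obtain ⟨t, ht⟩ := Finset.card_pos.1 (Nat.pos_of_ne_zero hK)
          rw [Kz, Finset.mem_filter] at ht
          have hι : Nonempty {x : Fin n // x ∈ I} :=
            Fintype.card_pos_iff.1 (by rw [hcardI]; omega)
          obtain ⟨j0⟩ := hι
          have hW0 : Wcol p (A j0) = 0 := by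
            apply Finset.prod_eq_zero (Finset.mem_univ t)
            rw [ht.2 j0]
            simp [w1, ← hp0e]
          have hWI0 : WI p A = 0 := Finset.prod_eq_zero (Finset.mem_univ j0) hW0
          rw [hWI0, zero_mul]
      rw [Finset.sum_congr rfl fun A _ => hz A, Finset.sum_const, smul_zero]
      norm_num
    -- main case 0 < p < 1
    have hmR : (1:ℝ) ≤ (m:ℝ) := by exact_mod_cast hm1
    have hr0 : (0:ℝ) < p ^ d := by positivity
    have hr1 : p ^ d ≤ 1 := pow_le_one₀ hp0 hp1
    have hlam0 : (0:ℝ) < Real.sqrt (3 * m * p ^ d) := Real.sqrt_pos.2 (by positivity)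
    have hlam2 : Real.sqrt (3 * m * p ^ d) ^ 2 = 3 * m * p ^ d :=
      Real.sq_sqrt (by positivity)
    have hk00 : (0:ℝ) ≤ (m:ℝ) * p ^ d + Real.sqrt (3 * m * p ^ d) := by positivity
    -- variance identity
    have hvar : ∑ A : {x : Fin n // x ∈ I} → Fin m → Bool,
        WI p A * (((Kz A).card : ℝ) - m * p ^ d) ^ 2 = m * p ^ d * (1 - p ^ d) := by
      have h := sum_WI_var (ι := {x : Fin n // x ∈ I}) (m := m) p
      rw [hcardI] at h
      exact h
    have hsum1 : ∑ A : {x : Fin n // x ∈ I} → Fin m → Bool, WI p A = 1 :=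
      sum_WI (ι := {x : Fin n // x ∈ I}) (m := m) p
    -- Chebyshev
    have cheb : (∑ A : {x : Fin n // x ∈ I} → Fin m → Bool,
        if (m:ℝ) * p ^ d + Real.sqrt (3 * m * p ^ d) < ((Kz A).card : ℝ)
          then WI p A else 0) ≤ 1/3 := by
      have hpt : ∀ A : {x : Fin n // x ∈ I} → Fin m → Bool,
          (if (m:ℝ) * p ^ d + Real.sqrt (3 * m * p ^ d) < ((Kz A).card : ℝ)
            then WI p A else 0)
            ≤ WI p A * (((Kz A).card : ℝ) - m * p ^ d) ^ 2 / (3 * m * p ^ d) := by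
        intro A
        have hWA := WI_nonneg hp0 hp1 A
        by_cases hca : (m:ℝ) * p ^ d + Real.sqrt (3 * m * p ^ d) < ((Kz A).card : ℝ)
        · rw [if_pos hca, le_div_iff₀ (by positivity)]
          have h1 : Real.sqrt (3 * m * p ^ d) ≤ ((Kz A).card : ℝ) - m * p ^ d := by
            linarith
          have h2 : Real.sqrt (3 * m * p ^ d) ^ 2
              ≤ (((Kz A).card : ℝ) - m * p ^ d) ^ 2 :=
            pow_le_pow_left₀ hlam0.le h1 2
          calc WI p A * (3 * m * p ^ d) = WI p A * Real.sqrt (3 * m * p ^ d) ^ 2 := by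
                rw [hlam2]
            _ ≤ WI p A * (((Kz A).card : ℝ) - m * p ^ d) ^ 2 :=
                mul_le_mul_of_nonneg_left h2 hWA
        · rw [if_neg hca]
          positivity
      calc (∑ A : {x : Fin n // x ∈ I} → Fin m → Bool,
          if (m:ℝ) * p ^ d + Real.sqrt (3 * m * p ^ d) < ((Kz A).card : ℝ)
            then WI p A else 0)
          ≤ ∑ A : {x : Fin n // x ∈ I} → Fin m → Bool,
              WI p A * (((Kz A).card : ℝ) - m * p ^ d) ^ 2 / (3 * m * p ^ d) :=
            Finset.sum_le_sum fun A _ => hpt A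
        _ = (∑ A : {x : Fin n // x ∈ I} → Fin m → Bool,
              WI p A * (((Kz A).card : ℝ) - m * p ^ d) ^ 2) / (3 * m * p ^ d) := by
            rw [← Finset.sum_div]
        _ = (m * p ^ d * (1 - p ^ d)) / (3 * m * p ^ d) := by rw [hvar]
        _ ≤ 1/3 := by
            rw [div_le_iff₀ (by positivity)]
            nlinarith [hr0, hr1, hmR]
    -- tail bound
    have hkey : ((m:ℝ) * p ^ d + Real.sqrt (3 * m * p ^ d)) * (-Real.log p) + 1
        ≤ Real.log ((n:ℝ) - d) := analytic_key hd hm1 hp0lt hp1 hcond hndR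
    have hxlow : Real.exp 1 / ((n:ℝ) - d)
        ≤ p ^ (((m:ℝ) * p ^ d + Real.sqrt (3 * m * p ^ d)) : ℝ) := by
      rw [Real.rpow_def_of_pos hp0lt]
      have h1 : 1 - Real.log ((n:ℝ) - d)
          ≤ ((m:ℝ) * p ^ d + Real.sqrt (3 * m * p ^ d)) * Real.log p := by
        have h2 : ((m:ℝ) * p ^ d + Real.sqrt (3 * m * p ^ d)) * Real.log p
            = -(((m:ℝ) * p ^ d + Real.sqrt (3 * m * p ^ d)) * (-Real.log p)) := by ring
        rw [h2]
        linarith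
      calc Real.exp 1 / ((n:ℝ) - d) = Real.exp (1 - Real.log ((n:ℝ) - d)) := by
            rw [Real.exp_sub, Real.exp_log hnd0R]
        _ ≤ Real.exp (Real.log p * ((m:ℝ) * p ^ d + Real.sqrt (3 * m * p ^ d))) := by
            apply Real.exp_le_exp.2
            rw [mul_comm (Real.log p)]
            exact h1
    have hx1 : p ^ (((m:ℝ) * p ^ d + Real.sqrt (3 * m * p ^ d)) : ℝ) ≤ 1 :=
      Real.rpow_le_one hp0lt.le hp1 hk00
    have hx0 : (0:ℝ) < p ^ (((m:ℝ) * p ^ d + Real.sqrt (3 * m * p ^ d)) : ℝ) :=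
      Real.rpow_pos_of_pos hp0lt _
    have hcast : ((n - I.card : ℕ) : ℝ) = (n:ℝ) - d := by
      rw [Nat.cast_sub (by omega : I.card ≤ n), hI]
    have hlog3 : Real.log 3
        ≤ ((n - I.card : ℕ) : ℝ) * p ^ (((m:ℝ) * p ^ d + Real.sqrt (3 * m * p ^ d)) : ℝ) := by
      rw [hcast]
      have h2 : Real.exp 1
          ≤ ((n:ℝ) - d) * p ^ (((m:ℝ) * p ^ d + Real.sqrt (3 * m * p ^ d)) : ℝ) := by
        have h3 := mul_le_mul_of_nonneg_left hxlow hnd0R.le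
        rwa [mul_div_cancel₀ _ hnd0R.ne'] at h3
      have h3 : Real.log 3 ≤ 2 := by
        have := Real.log_le_sub_one_of_pos (by norm_num : (0:ℝ) < 3)
        linarith
      have h4 : (2:ℝ) ≤ Real.exp 1 := by linarith [Real.exp_one_gt_d9]
      linarith
    have htail : (1 - p ^ (((m:ℝ) * p ^ d + Real.sqrt (3 * m * p ^ d)) : ℝ)) ^ (n - I.card)
        ≤ 1/3 := by
      calc (1 - p ^ (((m:ℝ) * p ^ d + Real.sqrt (3 * m * p ^ d)) : ℝ)) ^ (n - I.card)
          ≤ (Real.exp (-(p ^ (((m:ℝ) * p ^ d + Real.sqrt (3 * m * p ^ d)) : ℝ)))) ^ (n - I.card) := by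
            apply pow_le_pow_left₀ (by linarith)
            linarith [Real.add_one_le_exp (-(p ^ (((m:ℝ) * p ^ d + Real.sqrt (3 * m * p ^ d)) : ℝ)))]
        _ = Real.exp (((n - I.card : ℕ) : ℝ)
              * (-(p ^ (((m:ℝ) * p ^ d + Real.sqrt (3 * m * p ^ d)) : ℝ)))) := by
            rw [← Real.exp_nat_mul]
        _ ≤ Real.exp (-Real.log 3) := by
            apply Real.exp_le_exp.2
            nlinarith [hlog3]
        _ = 1/3 := by
            rw [Real.exp_neg, Real.exp_log (by norm_num : (0:ℝ) < 3)]
            norm_num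
    -- combine
    have pt2 : ∀ A : {x : Fin n // x ∈ I} → Fin m → Bool,
        WI p A * (1 - p ^ (Kz A).card) ^ (n - I.card)
          ≤ (if (m:ℝ) * p ^ d + Real.sqrt (3 * m * p ^ d) < ((Kz A).card : ℝ)
              then WI p A else 0)
            + (1 - p ^ (((m:ℝ) * p ^ d + Real.sqrt (3 * m * p ^ d)) : ℝ)) ^ (n - I.card)
              * WI p A := by
      intro A
      have hWA := WI_nonneg hp0 hp1 A
      have hpK1 : p ^ (Kz A).card ≤ 1 := pow_le_one₀ hp0 hp1
      have hpK0 : (0:ℝ) ≤ p ^ (Kz A).card := by positivity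
      by_cases hc : (m:ℝ) * p ^ d + Real.sqrt (3 * m * p ^ d) < ((Kz A).card : ℝ)
      · rw [if_pos hc]
        have hb1 : (1 - p ^ (Kz A).card) ^ (n - I.card) ≤ 1 :=
          pow_le_one₀ (by linarith) (by linarith)
        have h5 : WI p A * (1 - p ^ (Kz A).card) ^ (n - I.card) ≤ WI p A * 1 :=
          mul_le_mul_of_nonneg_left hb1 hWA
        have hT0 : (0:ℝ) ≤ (1 - p ^ (((m:ℝ) * p ^ d + Real.sqrt (3 * m * p ^ d)) : ℝ))
            ^ (n - I.card) * WI p A :=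
          mul_nonneg (pow_nonneg (by linarith) _) hWA
        linarith
      · rw [if_neg hc]
        push_neg at hc
        have hxx : p ^ (((m:ℝ) * p ^ d + Real.sqrt (3 * m * p ^ d)) : ℝ)
            ≤ p ^ (((Kz A).card : ℕ) : ℝ) :=
          Real.rpow_le_rpow_of_exponent_ge hp0lt hp1 hc
        rw [Real.rpow_natCast] at hxx
        have hbase : 1 - p ^ (Kz A).card
            ≤ 1 - p ^ (((m:ℝ) * p ^ d + Real.sqrt (3 * m * p ^ d)) : ℝ) := by linarith
        have hpow : (1 - p ^ (Kz A).card) ^ (n - I.card)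
            ≤ (1 - p ^ (((m:ℝ) * p ^ d + Real.sqrt (3 * m * p ^ d)) : ℝ)) ^ (n - I.card) :=
          pow_le_pow_left₀ (by linarith) hbase _
        calc WI p A * (1 - p ^ (Kz A).card) ^ (n - I.card)
            ≤ WI p A * (1 - p ^ (((m:ℝ) * p ^ d + Real.sqrt (3 * m * p ^ d)) : ℝ))
                ^ (n - I.card) := mul_le_mul_of_nonneg_left hpow hWA
          _ = 0 + (1 - p ^ (((m:ℝ) * p ^ d + Real.sqrt (3 * m * p ^ d)) : ℝ))
                ^ (n - I.card) * WI p A := by ring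
    calc ∑ A : {x : Fin n // x ∈ I} → Fin m → Bool,
        WI p A * (1 - p ^ (Kz A).card) ^ (n - I.card)
        ≤ ∑ A : {x : Fin n // x ∈ I} → Fin m → Bool,
            ((if (m:ℝ) * p ^ d + Real.sqrt (3 * m * p ^ d) < ((Kz A).card : ℝ)
              then WI p A else 0)
            + (1 - p ^ (((m:ℝ) * p ^ d + Real.sqrt (3 * m * p ^ d)) : ℝ)) ^ (n - I.card)
              * WI p A) := Finset.sum_le_sum fun A _ => pt2 A
      _ = (∑ A : {x : Fin n // x ∈ I} → Fin m → Bool,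
            if (m:ℝ) * p ^ d + Real.sqrt (3 * m * p ^ d) < ((Kz A).card : ℝ)
              then WI p A else 0)
          + (1 - p ^ (((m:ℝ) * p ^ d + Real.sqrt (3 * m * p ^ d)) : ℝ)) ^ (n - I.card)
            * ∑ A : {x : Fin n // x ∈ I} → Fin m → Bool, WI p A := by
          rw [Finset.sum_add_distrib, Finset.mul_sum]
      _ ≤ 1/3 + 1/3 * 1 := by
          rw [hsum1, mul_one]
          have := htail
          linarith [cheb]
      _ ≤ 2/3 := by norm_num
  have hnot := ridProb_not m n p (fun M => Disjunct I M)
  rw [show ridProb m n p (fun M => ¬ Disjunct I M)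
    = 1 - ridProb m n p (fun M => Disjunct I M) from hnot]
  linarith


end
end

section
/- Let d ≥ 1 and n > d be integers, let δ ∈ (0,1), and set p = e^{−1/d}. Let r be an integer with (1−p)(n−d) ≤ r ≤ (1−p)(n−d+1), and let m be a positive integer satisfying m − √(2·e·m·ln(2/δ)) ≥ e·d·ln(2n/δ). Let M be an m×n RrSD random matrix with row weight r. Then for every set I ⊆ {1,…,n} with |I| ≤ d, the probability that M is (n,I)-disjunct is at least 1 − δ. -/
open scoped Classical

noncomputable section

/-- The weight (number of ones) of a 0-1 vector. -/
def rowWeight {n : ℕ} (v : Fin n → Bool) : ℕ :=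
  (Finset.univ.filter fun j => v j = true).card

/-- Probability of the event `pred` for an `m × n` RrSD random matrix with row weight `r`:
the rows are chosen independently and uniformly from all 0-1 vectors of weight `r`. -/
def rrsdProb (m n r : ℕ) (pred : (Fin m → Fin n → Bool) → Prop) : ℝ :=
  ∑ M : Fin m → Fin n → Bool,
    (if pred M then
      ∏ t : Fin m, (if rowWeight (M t) = r then ((n.choose r : ℝ))⁻¹ else 0)
    else 0)

/-! ### Auxiliary probability framework -/

def wt (n r : ℕ) (v : Fin n → Bool) : ℝ :=
  if rowWeight v = r then ((n.choose r : ℝ))⁻¹ else 0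

def Pr (m n r : ℕ) (E : (Fin m → Fin n → Bool) → Prop) : ℝ :=
  ∑ M : Fin m → Fin n → Bool, if E M then ∏ t, wt n r (M t) else 0

def rowP (n r : ℕ) (Q : (Fin n → Bool) → Prop) : ℝ :=
  ∑ v : Fin n → Bool, if Q v then wt n r v else 0

def cnt (n r : ℕ) (Q : (Fin n → Bool) → Prop) : ℕ :=
  (Finset.univ.filter fun v : Fin n → Bool => rowWeight v = r ∧ Q v).card

lemma card_filter_iff {α : Type*} (s : Finset α) (p q : α → Prop)
    (hp : DecidablePred p) (hq : DecidablePred q) (h : ∀ a ∈ s, p a ↔ q a) :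
    (@Finset.filter α p hp s).card = (@Finset.filter α q hq s).card := by
  letI := hp; letI := hq
  apply Finset.card_bij (fun a _ => a)
  · intro a ha
    rw [Finset.mem_filter] at ha ⊢
    exact ⟨ha.1, (h a ha.1).1 ha.2⟩
  · intro a _ a' _ hh; exact hh
  · intro b hb
    rw [Finset.mem_filter] at hb
    exact ⟨b, Finset.mem_filter.2 ⟨hb.1, (h b hb.1).2 hb.2⟩, rfl⟩

lemma cnt_congr {n r : ℕ} {Q Q' : (Fin n → Bool) → Prop} (h : ∀ v, Q v ↔ Q' v) :
    cnt n r Q = cnt n r Q' :=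
  card_filter_iff _ _ _ _ _ fun v _ => and_congr_right fun _ => h v

lemma rrsdProb_eq_Pr (m n r : ℕ) (pred : (Fin m → Fin n → Bool) → Prop) :
    rrsdProb m n r pred = Pr m n r pred := rfl

lemma wt_nonneg (n r : ℕ) (v : Fin n → Bool) : 0 ≤ wt n r v := by
  unfold wt; split <;> positivity

lemma W_nonneg {m n r : ℕ} (M : Fin m → Fin n → Bool) : 0 ≤ ∏ t, wt n r (M t) :=
  Finset.prod_nonneg fun t _ => wt_nonneg n r (M t)

lemma Pr_nonneg (m n r : ℕ) (E : (Fin m → Fin n → Bool) → Prop) : 0 ≤ Pr m n r E :=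
  Finset.sum_nonneg fun M _ => by
    by_cases h : E M
    · simp only [if_pos h]; exact W_nonneg M
    · simp [if_neg h]

lemma Pr_mono {m n r : ℕ} {E F : (Fin m → Fin n → Bool) → Prop}
    (h : ∀ M, E M → F M) : Pr m n r E ≤ Pr m n r F := by
  apply Finset.sum_le_sum
  intro M _
  by_cases hE : E M
  · simp only [if_pos hE, if_pos (h M hE)]; exact le_refl _
  · simp only [if_neg hE]
    split
    exacts [W_nonneg M, le_refl 0]

lemma Pr_congr {m n r : ℕ} {E F : (Fin m → Fin n → Bool) → Prop}
    (h : ∀ M, E M ↔ F M) : Pr m n r E = Pr m n r F :=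
  le_antisymm (Pr_mono fun M hM => (h M).1 hM) (Pr_mono fun M hM => (h M).2 hM)

lemma Pr_or {m n r : ℕ} (E F : (Fin m → Fin n → Bool) → Prop) :
    Pr m n r (fun M => E M ∨ F M) ≤ Pr m n r E + Pr m n r F := by
  unfold Pr
  rw [← Finset.sum_add_distrib]
  apply Finset.sum_le_sum
  intro M _
  by_cases hE : E M <;> by_cases hF : F M <;>
    simp [hE, hF, W_nonneg M, add_nonneg (W_nonneg M) (W_nonneg M)]

lemma Pr_exists_le {m n r : ℕ} {ι : Type*} (s : Finset ι)
    (F : ι → (Fin m → Fin n → Bool) → Prop) :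
    Pr m n r (fun M => ∃ i ∈ s, F i M) ≤ ∑ i ∈ s, Pr m n r (F i) := by
  have step1 : Pr m n r (fun M => ∃ i ∈ s, F i M)
      ≤ ∑ M : Fin m → Fin n → Bool, ∑ i ∈ s, (if F i M then ∏ t, wt n r (M t) else 0) := by
    apply Finset.sum_le_sum
    intro M _
    by_cases hE : ∃ i ∈ s, F i M
    · simp only [if_pos hE]
      obtain ⟨i, hi, hFi⟩ := hE
      calc ∏ t, wt n r (M t) = (if F i M then ∏ t, wt n r (M t) else 0) := by rw [if_pos hFi]
        _ ≤ ∑ i ∈ s, (if F i M then ∏ t, wt n r (M t) else 0) := by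
            apply Finset.single_le_sum (fun j _ => ?_) hi
            split
            exacts [W_nonneg M, le_refl 0]
    · simp only [if_neg hE]
      apply Finset.sum_nonneg fun i _ => ?_
      split
      exacts [W_nonneg M, le_refl 0]
  calc Pr m n r (fun M => ∃ i ∈ s, F i M)
      ≤ ∑ M : Fin m → Fin n → Bool, ∑ i ∈ s, (if F i M then ∏ t, wt n r (M t) else 0) := step1
    _ = ∑ i ∈ s, Pr m n r (F i) := Finset.sum_comm

lemma Pr_forall_rows {m n r : ℕ} (Q : Fin m → (Fin n → Bool) → Prop) :
    Pr m n r (fun M => ∀ t, Q t (M t)) = ∏ t, rowP n r (Q t) := by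
  unfold Pr rowP
  have h1 : ∀ (M : Fin m → Fin n → Bool) (inst : Decidable (∀ t, Q t (M t))),
      (@ite ℝ (∀ t, Q t (M t)) inst (∏ t, wt n r (M t)) 0)
      = ∏ t, (if Q t (M t) then wt n r (M t) else 0) := by
    intro M inst
    by_cases h : ∀ t, Q t (M t)
    · rw [if_pos h]; exact Finset.prod_congr rfl fun t _ => (if_pos (h t)).symm
    · rw [if_neg h]
      push_neg at h
      obtain ⟨t0, ht0⟩ := h
      exact (Finset.prod_eq_zero (Finset.mem_univ t0) (if_neg ht0 : _ = (0:ℝ))).symm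
  rw [Finset.prod_univ_sum (fun _ => Finset.univ) (fun t v => if Q t v then wt n r v else 0)]
  rw [Fintype.piFinset_univ]
  exact Finset.sum_congr rfl fun M _ => h1 M _

lemma rowP_nonneg (n r : ℕ) (Q : (Fin n → Bool) → Prop) : 0 ≤ rowP n r Q :=
  Finset.sum_nonneg fun v _ => by
    by_cases h : Q v
    · simp only [if_pos h]; exact wt_nonneg n r v
    · simp [if_neg h]

lemma rowP_mono {n r : ℕ} {Q Q' : (Fin n → Bool) → Prop} (h : ∀ v, Q v → Q' v) :
    rowP n r Q ≤ rowP n r Q' := by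
  apply Finset.sum_le_sum
  intro v _
  by_cases hQ : Q v
  · simp only [if_pos hQ, if_pos (h v hQ)]; exact le_refl _
  · simp only [if_neg hQ]
    split
    exacts [wt_nonneg n r v, le_refl 0]

lemma rowP_congr {n r : ℕ} {Q Q' : (Fin n → Bool) → Prop} (h : ∀ v, Q v ↔ Q' v) :
    rowP n r Q = rowP n r Q' :=
  le_antisymm (rowP_mono fun v hv => (h v).1 hv) (rowP_mono fun v hv => (h v).2 hv)

lemma rowP_eq_cnt (n r : ℕ) (Q : (Fin n → Bool) → Prop) :
    rowP n r Q = (cnt n r Q : ℝ) * ((n.choose r : ℝ))⁻¹ := by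
  unfold rowP wt cnt
  rw [Finset.sum_congr rfl (fun v _ =>
    show _ = if rowWeight v = r ∧ Q v then ((n.choose r:ℝ))⁻¹ else 0 by
      by_cases h1 : Q v <;> by_cases h2 : rowWeight v = r <;> simp [h1, h2])]
  rw [← Finset.sum_filter]
  rw [Finset.sum_const, nsmul_eq_mul]

lemma cnt_subset {n r : ℕ} (A : Finset (Fin n)) :
    cnt n r (fun v => ∀ j, v j = true → j ∈ A) = A.card.choose r := by
  unfold cnt
  rw [← Finset.card_powersetCard r A]
  apply Finset.card_bij (fun v _ => Finset.univ.filter fun j => v j = true)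
  · intro v hv
    simp only [Finset.mem_filter, Finset.mem_univ, true_and] at hv
    rw [Finset.mem_powersetCard]
    exact ⟨fun j hj => hv.2 j (by simpa using hj), hv.1⟩
  · intro v hv v' hv' h
    funext j
    have := Finset.ext_iff.1 h j
    simp only [Finset.mem_filter, Finset.mem_univ, true_and] at this
    cases hj : v j <;> cases hj' : v' j <;> simp_all
  · intro S hS
    rw [Finset.mem_powersetCard] at hS
    refine ⟨fun j => decide (j ∈ S), ?_, ?_⟩
    · simp only [Finset.mem_filter, Finset.mem_univ, true_and]
      constructor
      · rw [rowWeight]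
        rw [show (Finset.univ.filter fun j => decide (j ∈ S) = true) = S by ext j; simp]
        exact hS.2
      · intro j hj
        exact hS.1 (by simpa using hj)
    · ext j; simp

lemma cnt_mem {n r : ℕ} (hr : 1 ≤ r) (A : Finset (Fin n)) (i : Fin n) (hi : i ∉ A) :
    cnt n r (fun v => v i = true ∧ ∀ j, v j = true → j ∈ insert i A)
      = A.card.choose (r - 1) := by
  unfold cnt
  rw [← Finset.card_powersetCard (r-1) A]
  apply Finset.card_bij (fun v _ => (Finset.univ.filter fun j => v j = true).erase i)
  · intro v hv
    simp only [Finset.mem_filter, Finset.mem_univ, true_and] at hv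
    rw [Finset.mem_powersetCard]
    constructor
    · intro j hj
      simp only [Finset.mem_erase, Finset.mem_filter, Finset.mem_univ, true_and] at hj
      rcases Finset.mem_insert.1 (hv.2.2 j hj.2) with h | h
      · exact absurd h hj.1
      · exact h
    · rw [Finset.card_erase_of_mem (by simp [hv.2.1])]
      have := hv.1; rw [rowWeight] at this; omega
  · intro v hv v' hv' h
    simp only [Finset.mem_filter, Finset.mem_univ, true_and] at hv hv'
    funext j
    by_cases hj : j = i
    · subst hj; rw [hv.2.1, hv'.2.1]
    · have := Finset.ext_iff.1 h j
      simp only [Finset.mem_erase, Finset.mem_filter, Finset.mem_univ, true_and, hj,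
        not_false_iff, true_and] at this
      cases h1 : v j <;> cases h2 : v' j <;> simp_all
  · intro S hS
    rw [Finset.mem_powersetCard] at hS
    refine ⟨fun j => decide (j = i ∨ j ∈ S), ?_, ?_⟩
    · simp only [Finset.mem_filter, Finset.mem_univ, true_and]
      have hiS : i ∉ S := fun h => hi (hS.1 h)
      refine ⟨?_, by simp, ?_⟩
      · rw [rowWeight]
        rw [show (Finset.univ.filter fun j => decide (j = i ∨ j ∈ S) = true) = insert i S by
          ext j; simp]
        rw [Finset.card_insert_of_notMem hiS, hS.2]
        omega
      · intro j hj
        simp only [decide_eq_true_eq] at hj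
        rcases hj with h | h
        · simp [h]
        · exact Finset.mem_insert_of_mem (hS.1 h)
    · ext j
      have hiS : i ∉ S := fun h => hi (hS.1 h)
      simp only [Finset.mem_erase, Finset.mem_filter, Finset.mem_univ, true_and,
        decide_eq_true_eq]
      constructor
      · rintro ⟨h1, h2 | h2⟩
        · exact absurd h2 h1
        · exact h2
      · intro h; exact ⟨fun hji => hiS (hji ▸ h), Or.inr h⟩

lemma rowP_univ (n r : ℕ) (hr : r ≤ n) : rowP n r (fun _ => True) = 1 := by
  rw [rowP_eq_cnt]
  have h2 : cnt n r (fun _ => True) = n.choose r := by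
    have h3 := cnt_subset (n := n) (r := r) Finset.univ
    simp only [Finset.card_univ, Fintype.card_fin] at h3
    rw [← h3]
    unfold cnt
    exact card_filter_iff _ _ _ _ _ fun v _ => by simp
  rw [h2, mul_inv_cancel₀]
  exact Nat.cast_ne_zero.2 (Nat.choose_pos hr).ne'

lemma rowP_compl (n r : ℕ) (hr : r ≤ n) (Q : (Fin n → Bool) → Prop) :
    rowP n r Q + rowP n r (fun v => ¬ Q v) = 1 := by
  rw [← rowP_univ n r hr]
  unfold rowP
  rw [← Finset.sum_add_distrib]
  apply Finset.sum_congr rfl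
  intro v _
  by_cases h : Q v <;> simp [h]

lemma rowP_le_one (n r : ℕ) (hr : r ≤ n) (Q : (Fin n → Bool) → Prop) :
    rowP n r Q ≤ 1 := by
  rw [← rowP_univ n r hr]
  exact rowP_mono fun v _ => trivial

lemma Pr_true (m n r : ℕ) (hr : r ≤ n) : Pr m n r (fun _ => True) = 1 := by
  have h := Pr_forall_rows (m := m) (n := n) (r := r) (fun _ => fun _ => True)
  rw [Pr_congr (fun M => (iff_of_true trivial (fun t => trivial) :
      (fun _ => True) M ↔ ∀ t : Fin m, True))]
  rw [h]
  simp [rowP_univ n r hr]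

lemma Pr_compl (m n r : ℕ) (hr : r ≤ n) (E : (Fin m → Fin n → Bool) → Prop) :
    Pr m n r E = 1 - Pr m n r (fun M => ¬ E M) := by
  have h : Pr m n r E + Pr m n r (fun M => ¬ E M) = 1 := by
    rw [← Pr_true m n r hr]
    unfold Pr
    rw [← Finset.sum_add_distrib]
    apply Finset.sum_congr rfl
    intro M _
    by_cases h : E M <;> simp [h]
  linarith

/-- probability of "rows in S₀ satisfy G∧R, the others satisfy ¬G". -/
lemma Pr_split {m n r : ℕ} (G R : (Fin n → Bool) → Prop) (S₀ : Finset (Fin m)) :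
    Pr m n r (fun M => ∀ t, if t ∈ S₀ then (G (M t) ∧ R (M t)) else ¬ G (M t))
      = (rowP n r fun v => G v ∧ R v)^S₀.card
        * (rowP n r fun v => ¬ G v)^(m - S₀.card) := by
  rw [Pr_forall_rows (fun t v => if t ∈ S₀ then (G v ∧ R v) else ¬ G v)]
  have h : ∀ t : Fin m, rowP n r (fun v => if t ∈ S₀ then (G v ∧ R v) else ¬ G v)
      = if t ∈ S₀ then (rowP n r fun v => G v ∧ R v) else (rowP n r fun v => ¬ G v) := by
    intro t
    by_cases ht : t ∈ S₀ <;> simp [ht]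
  rw [Finset.prod_congr rfl fun t _ => h t]
  rw [← Finset.prod_filter_mul_prod_filter_not Finset.univ (· ∈ S₀)]
  have hf1 : Finset.univ.filter (fun t : Fin m => t ∈ S₀) = S₀ := by ext t; simp
  have hf2 : (Finset.univ.filter (fun t : Fin m => ¬ t ∈ S₀)).card = m - S₀.card := by
    rw [show Finset.univ.filter (fun t : Fin m => ¬ t ∈ S₀) = S₀ᶜ by ext t; simp]
    rw [Finset.card_compl, Fintype.card_fin]
  rw [Finset.prod_congr rfl (fun t ht => if_pos (Finset.mem_filter.1 ht).2),
      Finset.prod_congr rfl (fun t ht => if_neg (Finset.mem_filter.1 ht).2),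
      Finset.prod_const, Finset.prod_const, hf1, hf2]



lemma exp_ge_cubic {x : ℝ} (hx : 0 ≤ x) : 1 + x + x^2/2 + x^3/6 ≤ Real.exp x := by
  have h := Real.sum_le_exp_of_nonneg hx 4
  simp [Finset.sum_range_succ, Nat.factorial] at h
  nlinarith [h]

lemma exp_neg_le_quad {l : ℝ} (h0 : 0 ≤ l) (h1 : l ≤ 1) :
    Real.exp (-l) ≤ 1 - l + l^2/2 := by
  have hc : 1 + l + l^2/2 + l^3/6 ≤ Real.exp l := exp_ge_cubic h0
  have hpos : (0:ℝ) < 1 + l + l^2/2 + l^3/6 := by nlinarith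
  rw [Real.exp_neg, inv_le_iff_one_le_mul₀ (Real.exp_pos l)]
  calc (1:ℝ) ≤ (1 - l + l^2/2) * (1 + l + l^2/2 + l^3/6) := by
        nlinarith [pow_nonneg h0 3, pow_nonneg h0 4, pow_nonneg h0 5]
    _ ≤ (1 - l + l^2/2) * Real.exp l := by
        apply mul_le_mul_of_nonneg_left hc
        nlinarith

lemma key_core (x y s R dd : ℝ) (hx0 : 0 < x) (hd0 : 0 < dd) (hxd : x * dd = 1)
    (hy1 : 1 + x + x^2/2 ≤ y) (hs1 : 1 ≤ s)
    (hscase : s ≤ dd ∨ dd + 1 ≤ s)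
    (hr1' : (1 - y⁻¹) * s ≤ R) (hR1 : 1 ≤ R) (hR2 : 1 < R → 2 ≤ R) :
    s + 1 ≤ y * dd * R := by
  have hy0 : 1 < y := by nlinarith
  have hyne : y ≠ 0 := by positivity
  have h2 : 1 + x/2 ≤ (y - 1) * dd := by
    have e1 : (x + x^2/2) * dd = 1 + x/2 := by
      have h : x * (x * dd) = x := by rw [hxd, mul_one]
      nlinarith [h]
    nlinarith [mul_le_mul_of_nonneg_right (show x + x^2/2 ≤ y - 1 by linarith) hd0.le]
  have h5 : y * (1 - y⁻¹) = y - 1 := by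
    rw [mul_sub, mul_one, mul_inv_cancel₀ hyne]
  rcases hscase with hcase | hds1
  · have hyd : dd + 1 ≤ y * dd := by
      nlinarith [mul_le_mul_of_nonneg_right (show 1 + x ≤ y by nlinarith [sq_nonneg x]) hd0.le]
    nlinarith [mul_le_mul_of_nonneg_left hR1 (show (0:ℝ) ≤ y*dd by positivity)]
  · have hyinv1 : y⁻¹ < 1 := by
      rw [inv_lt_one_iff₀]; right; exact hy0
    have hgt1 : 1 < (1 - y⁻¹) * (dd+1) := by
      have h6 : y < (y - 1) * (dd + 1) := by nlinarith
      have h7 : y * ((1 - y⁻¹) * (dd+1)) = (y-1)*(dd+1) := by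
        linear_combination (dd+1) * h5
      have h8 : y * 1 < y * ((1 - y⁻¹) * (dd+1)) := by rw [h7, mul_one]; exact h6
      exact lt_of_mul_lt_mul_left (by simpa using h8) (by linarith)
    have hr2' : (2:ℝ) ≤ R := by
      apply hR2
      have hh : (1 - y⁻¹) * (dd+1) ≤ (1 - y⁻¹) * s := by
        apply mul_le_mul_of_nonneg_left hds1
        linarith
      linarith
    have hkey : s + s*x/2 ≤ (y - 1) * dd * s := by
      nlinarith [mul_le_mul_of_nonneg_right h2 (show (0:ℝ) ≤ s by linarith)]
    have hyds : y * dd * ((1 - y⁻¹) * s) = (y - 1) * dd * s := by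
      linear_combination (dd*s) * h5
    by_cases hcase2 : s ≤ 2*dd
    · have hrmid : ((1 - y⁻¹) * s + 2) / 2 ≤ R := by
        rcases le_total ((1 - y⁻¹) * s) 2 with h | h
        · linarith
        · linarith
      have h2dy : 2*dd*y ≥ 2*dd + 2 := by nlinarith [h2]
      have hmain : y * dd * R ≥ ((y-1)*dd*s + 2*dd*y)/2 := by
        have hstep := mul_le_mul_of_nonneg_left hrmid (show (0:ℝ) ≤ y * dd by positivity)
        calc y * dd * R ≥ y * dd * (((1 - y⁻¹) * s + 2) / 2) := hstep
          _ = (y * dd * ((1 - y⁻¹) * s) + 2 * dd * y)/2 := by ring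
          _ = ((y-1)*dd*s + 2*dd*y)/2 := by rw [hyds]
      have hsx : 0 ≤ s * x := by positivity
      linarith [hmain, hkey, h2dy, hsx, hcase2]
    · push_neg at hcase2
      have hsx2 : 2 ≤ s * x := by
        calc (2:ℝ) = (2*dd) * x := by
              rw [mul_assoc, mul_comm dd x, hxd]; ring
          _ ≤ s * x := by nlinarith
      have hmain : y * dd * R ≥ (y-1)*dd*s := by
        rw [← hyds]
        exact mul_le_mul_of_nonneg_left hr1' (by positivity)
      linarith [hmain, hkey, hsx2]

lemma key_rate_ineq (d n r : ℕ) (hd : 1 ≤ d) (hn : d < n)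
    (hr1 : (1 - Real.exp (-(1 : ℝ) / d)) * ((n : ℝ) - d) ≤ (r : ℝ))
    (hr0 : 1 ≤ r) :
    ((n : ℝ) - d + 1) ≤ Real.exp (1/(d:ℝ)) * d * r := by
  have hd0 : (0:ℝ) < d := by exact_mod_cast hd
  have hx0 : (0:ℝ) < 1/(d:ℝ) := by positivity
  have hp : Real.exp (-(1:ℝ)/d) = (Real.exp (1/(d:ℝ)))⁻¹ := by
    rw [← Real.exp_neg]; congr 1; ring
  apply key_core (1/(d:ℝ)) (Real.exp (1/(d:ℝ))) ((n:ℝ) - d) (r:ℝ) (d:ℝ) hx0 hd0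
  · field_simp
  · have := exp_ge_cubic hx0.le
    nlinarith [pow_pos hx0 3]
  · have : (d:ℝ) + 1 ≤ (n:ℝ) := by exact_mod_cast hn
    linarith
  · -- s ≤ dd ∨ dd + 1 ≤ s with s = n - d integer-valued
    have h2' : ((n:ℝ) - d) = ((n - d : ℕ) : ℝ) := by
      push_cast [Nat.cast_sub hn.le]; ring
    rcases le_or_gt (n - d : ℕ) d with h | h
    · left; rw [h2']; exact_mod_cast h
    · right; rw [h2']; exact_mod_cast h
  · rw [← hp]; exact hr1
  · exact_mod_cast hr0
  · intro h
    have : 1 < r := by exact_mod_cast h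
    exact_mod_cast this



lemma exp_ge_cubic' {x : ℝ} (hx : 0 ≤ x) : 1 + x + x^2/2 + x^3/6 ≤ Real.exp x := by
  have h := Real.sum_le_exp_of_nonneg hx 4
  simp [Finset.sum_range_succ, Nat.factorial] at h
  nlinarith [h]

lemma exp_neg_le_quad' {l : ℝ} (h0 : 0 ≤ l) (h1 : l ≤ 1) :
    Real.exp (-l) ≤ 1 - l + l^2/2 := by
  have hc : 1 + l + l^2/2 + l^3/6 ≤ Real.exp l := exp_ge_cubic' h0
  have hpos : (0:ℝ) < 1 + l + l^2/2 + l^3/6 := by nlinarith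
  rw [Real.exp_neg, inv_le_iff_one_le_mul₀ (Real.exp_pos l)]
  calc (1:ℝ) ≤ (1 - l + l^2/2) * (1 + l + l^2/2 + l^3/6) := by
        nlinarith [pow_nonneg h0 3, pow_nonneg h0 4, pow_nonneg h0 5]
    _ ≤ (1 - l + l^2/2) * Real.exp l := by
        apply mul_le_mul_of_nonneg_left hc
        nlinarith

lemma chernoff_core (α L₂ x₀ : ℝ) (m : ℕ) (hα0 : 0 < α) (hα1 : α ≤ 1)
    (hαe : 1 ≤ α * Real.exp 1) (hx₀ : 0 ≤ x₀) (hL₂ : 0 ≤ L₂) (hm0 : 0 < m)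
    (hm : Real.exp 1 * x₀ ≤ (m:ℝ) - Real.sqrt (2 * Real.exp 1 * m * L₂)) :
    ∃ l : ℝ, 0 ≤ l ∧ l ≤ 1 ∧
      Real.exp (l * x₀) * (α * Real.exp (-l) + (1 - α))^m ≤ Real.exp (-L₂) := by
  have hm0' : (0:ℝ) < m := by exact_mod_cast hm0
  set A : ℝ := α * m with hA
  have hA0 : 0 < A := by positivity
  -- step 1 : A - x₀ ≥ √(2 A L₂)
  have hsq : Real.sqrt (2 * A * L₂) ≤ A - x₀ := by
    have h1 : x₀ ≤ α * (Real.exp 1 * x₀) := by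
      calc x₀ = 1 * x₀ := (one_mul x₀).symm
        _ ≤ (α * Real.exp 1) * x₀ := mul_le_mul_of_nonneg_right hαe hx₀
        _ = α * (Real.exp 1 * x₀) := by ring
    have h2 : α * Real.sqrt (2 * Real.exp 1 * m * L₂) ≤ A - x₀ := by
      have := mul_le_mul_of_nonneg_left hm hα0.le
      calc α * Real.sqrt (2 * Real.exp 1 * m * L₂)
          = α * (m:ℝ) - α * ((m:ℝ) - Real.sqrt (2 * Real.exp 1 * m * L₂)) := by ring
        _ ≤ A - α * (Real.exp 1 * x₀) := by
            rw [hA]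
            have := mul_le_mul_of_nonneg_left hm hα0.le
            linarith
        _ ≤ A - x₀ := by linarith
    have hs : Real.sqrt (α^2 * (2 * Real.exp 1 * m * L₂))
        = α * Real.sqrt (2 * Real.exp 1 * m * L₂) := by
      rw [Real.sqrt_mul (sq_nonneg α), Real.sqrt_sq hα0.le]
    calc Real.sqrt (2 * A * L₂) ≤ Real.sqrt (α^2 * (2 * Real.exp 1 * m * L₂)) := by
          apply Real.sqrt_le_sqrt
          have hα2 : α ≤ α^2 * Real.exp 1 := by nlinarith
          calc 2 * A * L₂ = α * (2 * m * L₂) := by rw [hA]; ring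
            _ ≤ (α^2 * Real.exp 1) * (2 * m * L₂) := by
                apply mul_le_mul_of_nonneg_right hα2 (by positivity)
            _ = α^2 * (2 * Real.exp 1 * m * L₂) := by ring
      _ = α * Real.sqrt (2 * Real.exp 1 * m * L₂) := hs
      _ ≤ A - x₀ := h2
  have hAx : x₀ ≤ A := by
    have := Real.sqrt_nonneg (2 * A * L₂); linarith
  have hsq2 : 2 * A * L₂ ≤ (A - x₀)^2 := by
    have h := Real.sq_sqrt (by positivity : (0:ℝ) ≤ 2 * A * L₂)
    nlinarith [hsq, Real.sqrt_nonneg (2 * A * L₂)]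
  set l : ℝ := (A - x₀)/A with hl
  have hl0 : 0 ≤ l := div_nonneg (by linarith) hA0.le
  have hl1 : l ≤ 1 := by rw [hl, div_le_one hA0]; linarith
  refine ⟨l, hl0, hl1, ?_⟩
  have hlA : l * A = A - x₀ := by rw [hl]; field_simp
  -- step 3-4
  have hbase0 : 0 ≤ α * Real.exp (-l) + (1 - α) :=
    add_nonneg (by positivity) (by linarith)
  have hbase : α * Real.exp (-l) + (1 - α) ≤ Real.exp (α * (Real.exp (-l) - 1)) := by
    have := Real.add_one_le_exp (α * (Real.exp (-l) - 1))
    linarith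
  have hpow : (α * Real.exp (-l) + (1 - α))^m ≤ Real.exp ((m:ℝ) * (α * (Real.exp (-l) - 1))) := by
    calc (α * Real.exp (-l) + (1 - α))^m ≤ (Real.exp (α * (Real.exp (-l) - 1)))^m :=
          pow_le_pow_left₀ hbase0 hbase m
      _ = Real.exp ((m:ℝ) * (α * (Real.exp (-l) - 1))) := by
          rw [← Real.exp_nat_mul]
  have hquad : Real.exp (-l) - 1 ≤ -l + l^2/2 := by
    have := exp_neg_le_quad' hl0 hl1
    linarith
  have hexpo : l * x₀ + (m:ℝ) * (α * (Real.exp (-l) - 1)) ≤ -L₂ := by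
    have hmono : (m:ℝ) * (α * (Real.exp (-l) - 1)) ≤ (m:ℝ) * (α * (-l + l^2/2)) := by
      apply mul_le_mul_of_nonneg_left _ (by positivity)
      exact mul_le_mul_of_nonneg_left hquad hα0.le
    have hAq : (m:ℝ) * (α * (-l + l^2/2)) = -(l * A) + A * l^2/2 := by rw [hA]; ring
    have hval : l * x₀ - l * A + A * l^2/2 = -((A - x₀)^2/(2*A)) := by
      rw [hl]; field_simp; ring
    have hfin : l * x₀ - l * A + A * l^2 / 2 ≤ -L₂ := by
      rw [hval]
      have : L₂ ≤ (A - x₀)^2/(2*A) := by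
        rw [le_div_iff₀ (by positivity : (0:ℝ) < 2*A)]
        nlinarith [hsq2]
      linarith
    have hmono' : (m:ℝ) * (α * (Real.exp (-l) - 1)) ≤ -(l*A) + A * l^2/2 := by
      rw [← hAq]; exact hmono
    linarith
  calc Real.exp (l * x₀) * (α * Real.exp (-l) + (1 - α))^m
      ≤ Real.exp (l * x₀) * Real.exp ((m:ℝ) * (α * (Real.exp (-l) - 1))) := by
        apply mul_le_mul_of_nonneg_left hpow (Real.exp_pos _).le
    _ = Real.exp (l * x₀ + (m:ℝ) * (α * (Real.exp (-l) - 1))) := by rw [← Real.exp_add]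
    _ ≤ Real.exp (-L₂) := Real.exp_le_exp.2 hexpo



lemma choose_succ_ratio (a r : ℕ) :
    ((a.choose r : ℝ)) * ((a:ℝ)+1) = (((a+1).choose r : ℝ)) * (((a+1) - r : ℕ) : ℝ) := by
  exact_mod_cast congrArg (Nat.cast (R := ℝ)) (Nat.choose_mul_succ_eq a r)

/-- `p^j * C(n,r) ≤ C(n-j, r)` for `j ≤ d`, assuming `r ≤ (1-p)(n-d+1)` and `r ≤ n-d`. -/
lemma choose_lower (n r d : ℕ) (p : ℝ) (hp0 : 0 ≤ p) (hdn : d ≤ n) (hrd : r ≤ n - d)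
    (hr2p : (r:ℝ) ≤ (1 - p) * ((n:ℝ) - d + 1)) :
    ∀ j, j ≤ d → p^j * (n.choose r : ℝ) ≤ ((n - j).choose r : ℝ) := by
  intro j hj
  induction j with
  | zero => simp
  | succ k ih =>
    have hk : k ≤ d := by omega
    have ihk := ih hk
    -- step : p * C(n-k, r) ≤ C(n-k-1, r)
    have hkd : k + 1 ≤ d := hj
    have hstep : p * ((n - k).choose r : ℝ) ≤ ((n - (k+1)).choose r : ℝ) := by
      set a : ℕ := n - (k + 1) with ha
      have ha1 : a + 1 = n - k := by omega
      have hra : r ≤ a := by omega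
      have hid := choose_succ_ratio a r
      rw [ha1] at hid
      have hsub : ((n - k - r : ℕ) : ℝ) = ((n:ℝ) - k) - r := by
        have h1 : r + k ≤ n := by omega
        push_cast [Nat.cast_sub (show r ≤ n - k by omega), Nat.cast_sub (show k ≤ n by omega)]
        ring
      have hcast : ((a:ℝ) + 1) = (n:ℝ) - k := by
        rw [show (a:ℝ) = ((n - (k+1) : ℕ) : ℝ) from rfl]
        push_cast [Nat.cast_sub (show k + 1 ≤ n by omega)]
        ring
      rw [hsub] at hid
      rw [hcast] at hid
      -- hid : C(a, r) * (n - k) = C(n-k, r) * ((n-k) - r)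
      have hnk0 : (0:ℝ) < (n:ℝ) - k := by
        have : (k:ℝ) < n := by exact_mod_cast show k < n by omega
        linarith
      rw [show p * ((n - k).choose r : ℝ) ≤ ((n - (k+1)).choose r : ℝ)
            ↔ p * ((n - k).choose r : ℝ) * ((n:ℝ) - k) ≤ ((n - (k+1)).choose r : ℝ) * ((n:ℝ) - k) from
        (mul_le_mul_iff_of_pos_right hnk0).symm]
      rw [show ((n - (k+1)).choose r : ℝ) * ((n:ℝ) - k) = (a.choose r : ℝ) * ((n:ℝ) - k) from rfl]
      rw [hid]
      have hnk : (n:ℝ) - d + 1 ≤ (n:ℝ) - k := by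
        have : (k:ℝ) + 1 ≤ (d:ℝ) := by exact_mod_cast hkd
        linarith
      have h1p : 0 ≤ 1 - p := by
        by_contra h
        push_neg at h
        have hdn' : (d:ℝ) ≤ (n:ℝ) := by exact_mod_cast hdn
        have hnd1 : (0:ℝ) < (n:ℝ) - d + 1 := by linarith
        nlinarith [Nat.cast_nonneg (α := ℝ) r]
      have : (r:ℝ) ≤ (1 - p) * ((n:ℝ) - k) := by
        calc (r:ℝ) ≤ (1 - p) * ((n:ℝ) - d + 1) := hr2p
          _ ≤ (1 - p) * ((n:ℝ) - k) := mul_le_mul_of_nonneg_left hnk h1p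
      nlinarith [mul_le_mul_of_nonneg_left
        (show p * ((n:ℝ) - k) ≤ ((n:ℝ) - k) - r by linarith [this])
        (Nat.cast_nonneg (α := ℝ) ((n - k).choose r))]
    calc p^(k+1) * (n.choose r : ℝ) = p * (p^k * (n.choose r : ℝ)) := by ring
      _ ≤ p * ((n - k).choose r : ℝ) := mul_le_mul_of_nonneg_left ihk hp0
      _ ≤ ((n - (k+1)).choose r : ℝ) := hstep

/-- `C(n-d-1, r) ≤ p * C(n-d, r)` assuming `(1-p)(n-d) ≤ r ≤ n-d`, `d < n`. -/
lemma choose_upper (n r d : ℕ) (hdn : d < n) (hrd : r ≤ n - d)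
    (p : ℝ) (hr1p : (1 - p) * ((n:ℝ) - d) ≤ (r:ℝ)) :
    ((n - d - 1).choose r : ℝ) ≤ p * ((n - d).choose r : ℝ) := by
  set a : ℕ := n - d - 1 with ha
  have ha1 : a + 1 = n - d := by omega
  have hid := choose_succ_ratio a r
  rw [ha1] at hid
  have hcast : ((a:ℝ) + 1) = (n:ℝ) - d := by
    rw [show (a:ℝ) = ((n - d - 1 : ℕ) : ℝ) from rfl]
    push_cast [Nat.cast_sub (show 1 ≤ n - d by omega), Nat.cast_sub (show d ≤ n by omega)]
    ring
  have hsub : ((n - d - r : ℕ) : ℝ) = ((n:ℝ) - d) - r := by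
    push_cast [Nat.cast_sub (show r ≤ n - d by omega), Nat.cast_sub (show d ≤ n by omega)]
    ring
  rw [hcast, hsub] at hid
  have hnd0 : (0:ℝ) < (n:ℝ) - d := by
    have : (d:ℝ) < n := by exact_mod_cast hdn
    linarith
  rw [show ((n - d - 1).choose r : ℝ) ≤ p * ((n - d).choose r : ℝ)
      ↔ ((n - d - 1).choose r : ℝ) * ((n:ℝ) - d) ≤ p * ((n - d).choose r : ℝ) * ((n:ℝ) - d) from
    (mul_le_mul_iff_of_pos_right hnd0).symm]
  rw [show ((n - d - 1).choose r : ℝ) * ((n:ℝ) - d) = (a.choose r : ℝ) * ((n:ℝ) - d) from rfl]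
  rw [hid]
  -- C(n-d,r) * ((n-d) - r) ≤ p * C(n-d,r) * (n-d) ⟸ (n-d) - r ≤ p (n-d)
  have h1 : ((n:ℝ) - d) - r ≤ p * ((n:ℝ) - d) := by nlinarith [hr1p]
  nlinarith [Nat.cast_nonneg (α := ℝ) ((n-d).choose r), h1]

/-- `(n-d+1) * C(n-d, r-1) = r * C(n-d+1, r)` for `1 ≤ r`. -/
lemma choose_pred_ratio (n r d : ℕ) (hr : 1 ≤ r) (hdn : d ≤ n) :
    ((n - d).choose (r-1) : ℝ) * ((n:ℝ) - d + 1) = (r:ℝ) * (((n - d) + 1).choose r : ℝ) := by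
  have h := Nat.add_one_mul_choose_eq (n - d) (r - 1)
  have hr' : r - 1 + 1 = r := by omega
  rw [hr'] at h
  -- h : (n-d+1) * C(n-d, r-1) = C(n-d+1, r) * r
  have hcast : (((n - d : ℕ) : ℝ) + 1) = (n:ℝ) - d + 1 := by
    push_cast [Nat.cast_sub hdn]; ring
  calc ((n - d).choose (r-1) : ℝ) * ((n:ℝ) - d + 1)
      = ((n - d).choose (r-1) : ℝ) * (((n - d : ℕ) : ℝ) + 1) := by rw [hcast]
    _ = (((n-d).succ * (n - d).choose (r-1) : ℕ) : ℝ) := by push_cast; ring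
    _ = (((n - d + 1).choose r * r : ℕ) : ℝ) := by
        exact_mod_cast congrArg (Nat.cast (R := ℝ)) h
    _ = (r:ℝ) * (((n - d) + 1).choose r : ℝ) := by push_cast; ring

/-! ### subset decomposition bounds -/

lemma Pr_subset_sum (m n r : ℕ) (G R : (Fin n → Bool) → Prop) (P : ℕ → Prop) :
    Pr m n r (fun M => P (Finset.univ.filter fun t => G (M t)).card
        ∧ ∀ t, G (M t) → R (M t))
      ≤ ∑ S₀ ∈ (Finset.univ : Finset (Finset (Fin m))).filter (fun S => P S.card),
          (rowP n r fun v => G v ∧ R v)^S₀.card * (rowP n r fun v => ¬ G v)^(m - S₀.card) := by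
  have hmono : ∀ M : Fin m → Fin n → Bool,
      (P (Finset.univ.filter fun t => G (M t)).card ∧ ∀ t, G (M t) → R (M t))
      → ∃ S₀ ∈ (Finset.univ : Finset (Finset (Fin m))).filter (fun S => P S.card),
          (∀ t, if t ∈ S₀ then (G (M t) ∧ R (M t)) else ¬ G (M t)) := by
    intro M hM
    refine ⟨Finset.univ.filter fun t => G (M t), by simp [hM.1], fun t => ?_⟩
    by_cases ht : G (M t)
    · rw [if_pos (by simp [ht])]
      exact ⟨ht, hM.2 t ht⟩
    · rw [if_neg (by simp [ht])]
      exact ht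
  calc Pr m n r (fun M => P (Finset.univ.filter fun t => G (M t)).card
        ∧ ∀ t, G (M t) → R (M t))
      ≤ Pr m n r (fun M => ∃ S₀ ∈ (Finset.univ : Finset (Finset (Fin m))).filter
          (fun S => P S.card), (∀ t, if t ∈ S₀ then (G (M t) ∧ R (M t)) else ¬ G (M t))) :=
        Pr_mono hmono
    _ ≤ ∑ S₀ ∈ (Finset.univ : Finset (Finset (Fin m))).filter (fun S => P S.card),
          Pr m n r (fun M => ∀ t, if t ∈ S₀ then (G (M t) ∧ R (M t)) else ¬ G (M t)) :=
        Pr_exists_le _ _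
    _ = ∑ S₀ ∈ (Finset.univ : Finset (Finset (Fin m))).filter (fun S => P S.card),
          (rowP n r fun v => G v ∧ R v)^S₀.card * (rowP n r fun v => ¬ G v)^(m - S₀.card) :=
        Finset.sum_congr rfl fun S₀ _ => Pr_split G R S₀

lemma binom_sum (m : ℕ) (a b : ℝ) :
    ∑ S₀ : Finset (Fin m), a^S₀.card * b^(m - S₀.card) = (a + b)^m := by
  have h := Finset.prod_add (fun _ : Fin m => a) (fun _ : Fin m => b) Finset.univ
  rw [Finset.prod_const, Finset.card_univ, Fintype.card_fin] at h
  rw [h, Finset.powerset_univ]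
  apply Finset.sum_congr rfl
  intro S₀ _
  rw [Finset.prod_const, Finset.prod_const, Finset.card_sdiff_of_subset (Finset.subset_univ S₀),
    Finset.card_univ, Fintype.card_fin]

/-- Chernoff-type bound on the lower tail of the number of rows satisfying `G`. -/
lemma bound_lower_tail (m n r : ℕ) (hrn : r ≤ n) (G : (Fin n → Bool) → Prop)
    (x₀ L₂ : ℝ) (hx₀ : 0 ≤ x₀) (hL₂ : 0 ≤ L₂) (hm0 : 0 < m)
    (hα0 : 0 < rowP n r G) (hα1 : rowP n r G ≤ 1) (hαe : 1 ≤ rowP n r G * Real.exp 1)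
    (hm : Real.exp 1 * x₀ ≤ (m:ℝ) - Real.sqrt (2 * Real.exp 1 * m * L₂)) :
    Pr m n r (fun M => ((Finset.univ.filter fun t => G (M t)).card : ℝ) < x₀)
      ≤ Real.exp (-L₂) := by
  set α := rowP n r G with hα
  obtain ⟨l, hl0, hl1, hcher⟩ := chernoff_core α L₂ x₀ m hα0 hα1 hαe hx₀ hL₂ hm0 hm
  have hGR : rowP n r (fun v => G v ∧ True) = α := by
    rw [hα]; exact rowP_congr fun v => by simp
  have hGc : rowP n r (fun v => ¬ G v) = 1 - α := by
    have := rowP_compl n r hrn G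
    rw [← hα] at this; linarith
  have h1α : 0 ≤ 1 - α := by
    have := rowP_le_one n r hrn G; rw [← hα] at this; linarith
  calc Pr m n r (fun M => ((Finset.univ.filter fun t => G (M t)).card : ℝ) < x₀)
      = Pr m n r (fun M => ((((Finset.univ.filter fun t => G (M t)).card : ℝ) < x₀))
          ∧ ∀ t, G (M t) → True) := Pr_congr fun M => by simp
    _ ≤ ∑ S₀ ∈ (Finset.univ : Finset (Finset (Fin m))).filter
          (fun S => ((S.card : ℝ) < x₀)),
          (rowP n r fun v => G v ∧ True)^S₀.card * (rowP n r fun v => ¬ G v)^(m - S₀.card) :=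
        Pr_subset_sum m n r G (fun _ => True) (fun c => ((c : ℝ) < x₀))
    _ = ∑ S₀ ∈ (Finset.univ : Finset (Finset (Fin m))).filter
          (fun S => ((S.card : ℝ) < x₀)),
          α^S₀.card * (1 - α)^(m - S₀.card) := by
        apply Finset.sum_congr rfl; intro S₀ _; rw [hGR, hGc]
    _ ≤ ∑ S₀ ∈ (Finset.univ : Finset (Finset (Fin m))).filter
          (fun S => ((S.card : ℝ) < x₀)),
          Real.exp (l * x₀) * ((α * Real.exp (-l))^S₀.card * (1 - α)^(m - S₀.card)) := by
        apply Finset.sum_le_sum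
        intro S₀ hS₀
        rw [Finset.mem_filter] at hS₀
        have hc : (S₀.card : ℝ) < x₀ := hS₀.2
        have key : α^S₀.card ≤ Real.exp (l * x₀) * (α * Real.exp (-l))^S₀.card := by
          rw [mul_pow, ← mul_assoc, mul_comm (Real.exp (l * x₀)) (α ^ S₀.card), mul_assoc]
          nth_rewrite 1 [← mul_one (α ^ S₀.card)]
          apply mul_le_mul_of_nonneg_left _ (pow_nonneg hα0.le _)
          rw [← Real.exp_nat_mul, ← Real.exp_add]
          rw [show (1:ℝ) = Real.exp 0 from (Real.exp_zero).symm]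
          apply Real.exp_le_exp.2
          have : 0 ≤ l * (x₀ - S₀.card) := mul_nonneg hl0 (by linarith)
          push_cast
          nlinarith
        calc α^S₀.card * (1 - α)^(m - S₀.card)
            ≤ (Real.exp (l * x₀) * (α * Real.exp (-l))^S₀.card) * (1 - α)^(m - S₀.card) :=
              mul_le_mul_of_nonneg_right key (pow_nonneg h1α _)
          _ = Real.exp (l * x₀) * ((α * Real.exp (-l))^S₀.card * (1 - α)^(m - S₀.card)) := by
              ring
    _ ≤ ∑ S₀ : Finset (Fin m),
          Real.exp (l * x₀) * ((α * Real.exp (-l))^S₀.card * (1 - α)^(m - S₀.card)) := by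
        apply Finset.sum_le_sum_of_subset_of_nonneg (Finset.filter_subset _ _)
        intro S₀ _ _
        positivity
    _ = Real.exp (l * x₀) * (α * Real.exp (-l) + (1 - α))^m := by
        rw [← Finset.mul_sum, binom_sum]
    _ ≤ Real.exp (-L₂) := hcher

/-- Per-item bound for items outside `I'`, on the event that many rows satisfy `G`. -/
lemma bound_item_out (m n r : ℕ) (hrn : r ≤ n) (G : (Fin n → Bool) → Prop) (i : Fin n)
    (x₀ ε : ℝ) (hε : 0 ≤ ε)
    (hα1 : rowP n r G ≤ 1) (hα0 : 0 ≤ rowP n r G)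
    (hterm : ∀ c : ℕ, x₀ ≤ (c:ℝ) →
      (rowP n r fun v => G v ∧ v i = false)^c ≤ ε * (rowP n r G)^c) :
    Pr m n r (fun M => (x₀ ≤ ((Finset.univ.filter fun t => G (M t)).card : ℝ))
        ∧ ∀ t, ¬(M t i = true ∧ G (M t)))
      ≤ ε := by
  set α := rowP n r G with hα
  have hGc : rowP n r (fun v => ¬ G v) = 1 - α := by
    have := rowP_compl n r hrn G
    rw [← hα] at this; linarith
  have h1α : 0 ≤ 1 - α := by linarith
  calc Pr m n r (fun M => (x₀ ≤ ((Finset.univ.filter fun t => G (M t)).card : ℝ))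
        ∧ ∀ t, ¬(M t i = true ∧ G (M t)))
      = Pr m n r (fun M => (x₀ ≤ ((Finset.univ.filter fun t => G (M t)).card : ℝ))
        ∧ ∀ t, G (M t) → M t i = false) := by
        apply Pr_congr
        intro M
        apply and_congr_right
        intro _
        constructor
        · intro h t hG
          rcases Bool.eq_false_or_eq_true (M t i) with hb | hb
          · exact absurd ⟨hb, hG⟩ (h t)
          · exact hb
        · rintro h t ⟨hb, hG⟩
          rw [h t hG] at hb
          exact Bool.false_ne_true hb
    _ ≤ ∑ S₀ ∈ (Finset.univ : Finset (Finset (Fin m))).filter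
          (fun S => (x₀ ≤ (S.card : ℝ))),
          (rowP n r fun v => G v ∧ v i = false)^S₀.card
            * (rowP n r fun v => ¬ G v)^(m - S₀.card) :=
        Pr_subset_sum m n r G (fun v => v i = false) (fun c => (x₀ ≤ (c : ℝ)))
    _ ≤ ∑ S₀ ∈ (Finset.univ : Finset (Finset (Fin m))).filter
          (fun S => (x₀ ≤ (S.card : ℝ))),
          ε * (α^S₀.card * (1 - α)^(m - S₀.card)) := by
        apply Finset.sum_le_sum
        intro S₀ hS₀
        rw [Finset.mem_filter] at hS₀
        rw [hGc]
        calc (rowP n r fun v => G v ∧ v i = false)^S₀.card * (1 - α)^(m - S₀.card)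
            ≤ (ε * α^S₀.card) * (1 - α)^(m - S₀.card) :=
              mul_le_mul_of_nonneg_right (hterm S₀.card hS₀.2) (pow_nonneg h1α _)
          _ = ε * (α^S₀.card * (1 - α)^(m - S₀.card)) := by ring
    _ ≤ ∑ S₀ : Finset (Fin m), ε * (α^S₀.card * (1 - α)^(m - S₀.card)) := by
        apply Finset.sum_le_sum_of_subset_of_nonneg (Finset.filter_subset _ _)
        intro S₀ _ _
        have : (0:ℝ) ≤ α^S₀.card * (1 - α)^(m - S₀.card) :=
          mul_nonneg (pow_nonneg hα0 _) (pow_nonneg h1α _)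
        positivity
    _ = ε * (α + (1 - α))^m := by rw [← Finset.mul_sum, binom_sum]
    _ = ε := by norm_num

theorem rrsd_upper_bound (d n m r : ℕ) (hd : 1 ≤ d) (hn : d < n) (δ : ℝ)
    (hδ : δ ∈ Set.Ioo (0 : ℝ) 1)
    (hr1 : (1 - Real.exp (-(1 : ℝ) / d)) * ((n : ℝ) - d) ≤ (r : ℝ))
    (hr2 : (r : ℝ) ≤ (1 - Real.exp (-(1 : ℝ) / d)) * ((n : ℝ) - d + 1))
    (hm : 0 < m)
    (hm2 : (m : ℝ) - Real.sqrt (2 * Real.exp 1 * m * Real.log (2 / δ)) ≥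
      Real.exp 1 * d * Real.log (2 * n / δ))
    (I : Finset (Fin n)) (hI : I.card ≤ d) :
    rrsdProb m n r (fun M => Disjunct I M) ≥ 1 - δ := by
  obtain ⟨hδ0, hδ1⟩ := hδ
  have hd0 : (0:ℝ) < d := by exact_mod_cast hd
  have hd1 : (1:ℝ) ≤ d := by exact_mod_cast hd
  have hdn' : (d:ℝ) < n := by exact_mod_cast hn
  have hn0 : (0:ℝ) < n := lt_trans hd0 hdn'
  set p : ℝ := Real.exp (-(1:ℝ)/d) with hpdef
  have hp0 : 0 < p := Real.exp_pos _
  have hp1 : p < 1 := by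
    rw [hpdef, Real.exp_lt_one_iff, neg_div]
    simp only [Left.neg_neg_iff]
    positivity
  have h1p : 0 < 1 - p := by linarith
  have hr_pos : 1 ≤ r := by
    by_contra h
    push_neg at h
    interval_cases r
    simp only [Nat.cast_zero] at hr1
    have := mul_pos h1p (show (0:ℝ) < (n:ℝ) - d by linarith)
    linarith
  have hr_le : r ≤ n - d := by
    have hlt : (r:ℝ) < (n:ℝ) - d + 1 := by
      have := mul_lt_mul_of_pos_right (show 1 - p < 1 by linarith)
        (show (0:ℝ) < (n:ℝ) - d + 1 by linarith)
      rw [one_mul] at this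
      linarith
    have h2 : ((n - d : ℕ) : ℝ) = (n:ℝ) - d := by
      push_cast [Nat.cast_sub hn.le]; ring
    have h3 : (r:ℝ) < ((n - d : ℕ) : ℝ) + 1 := by rw [h2]; exact hlt
    have h4 : r < n - d + 1 := by exact_mod_cast h3
    omega
  have hrn : r ≤ n := by omega
  have hcast_nd : ((n - d : ℕ) : ℝ) = (n:ℝ) - d := by
    push_cast [Nat.cast_sub hn.le]; ring
  have hN0 : (0:ℝ) < (n.choose r : ℝ) := by exact_mod_cast Nat.choose_pos hrn
  obtain ⟨I', hsub, -, hI'card⟩ :=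
    Finset.exists_subsuperset_card_eq (Finset.subset_univ I) hI (by simpa using hn.le)
  have hcardc : I'ᶜ.card = n - d := by
    rw [Finset.card_compl, hI'card]
    simp
  set L₁ : ℝ := Real.log (2*n/δ) with hL₁def
  set L₂ : ℝ := Real.log (2/δ) with hL₂def
  have h2nδ : (1:ℝ) < 2*n/δ := by
    rw [lt_div_iff₀ hδ0]; linarith
  have h2δ : (1:ℝ) < 2/δ := by
    rw [lt_div_iff₀ hδ0]; linarith
  have hL₁pos : 0 < L₁ := Real.log_pos h2nδ
  have hL₂pos : 0 < L₂ := Real.log_pos h2δ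
  have hexpL₁ : Real.exp (-L₁) = δ/(2*n) := by
    rw [hL₁def, ← Real.log_inv, Real.exp_log (by positivity), inv_div]
  have hexpL₂ : Real.exp (-L₂) = δ/2 := by
    rw [hL₂def, ← Real.log_inv, Real.exp_log (by positivity), inv_div]
  set x₀ : ℝ := d * L₁ with hx₀def
  have hx₀ : 0 ≤ x₀ := by positivity
  obtain ⟨G, hGdef⟩ : ∃ G' : (Fin n → Bool) → Prop,
      G' = fun v => ∀ j, v j = true → j ∈ I'ᶜ := ⟨_, rfl⟩
  set α : ℝ := rowP n r G with hαdef
  have hαval : α = ((n - d).choose r : ℝ) * ((n.choose r : ℝ))⁻¹ := by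
    rw [hαdef, hGdef, rowP_eq_cnt]
    rw [show cnt n r (fun v => ∀ j, v j = true → j ∈ I'ᶜ) = (n-d).choose r by
      rw [cnt_subset I'ᶜ, hcardc]]
  have hpd : p^d = Real.exp (-1) := by
    rw [hpdef, ← Real.exp_nat_mul]
    congr 1
    field_simp
  have hchoose_d := choose_lower n r d p hp0.le hn.le hr_le hr2 d (le_refl d)
  have hαlow : Real.exp (-1) ≤ α := by
    rw [hαval, ← hpd]
    rw [show p^d = p^d * (n.choose r:ℝ) * ((n.choose r:ℝ))⁻¹ by field_simp]
    exact mul_le_mul_of_nonneg_right hchoose_d (inv_nonneg.2 hN0.le)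
  have hα1 : α ≤ 1 := rowP_le_one n r hrn G
  have hα0 : 0 < α := lt_of_lt_of_le (Real.exp_pos _) hαlow
  have hee : Real.exp (-1) * Real.exp 1 = 1 := by
    rw [← Real.exp_add]; norm_num
  have hαe : 1 ≤ α * Real.exp 1 := by
    calc (1:ℝ) = Real.exp (-1) * Real.exp 1 := hee.symm
      _ ≤ α * Real.exp 1 := mul_le_mul_of_nonneg_right hαlow (Real.exp_pos 1).le
  have hmx : Real.exp 1 * x₀ ≤ (m:ℝ) - Real.sqrt (2 * Real.exp 1 * m * L₂) := by
    rw [hx₀def]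
    have : Real.exp 1 * (d * L₁) = Real.exp 1 * d * L₁ := by ring
    rw [this]
    exact hm2
  have hmlow : Real.exp 1 * x₀ ≤ (m:ℝ) := by
    have := Real.sqrt_nonneg (2 * Real.exp 1 * m * L₂)
    linarith
  -- ### Bound 1 : lower tail
  have hbound1 : Pr m n r (fun M =>
      ((Finset.univ.filter fun t => G (M t)).card : ℝ) < x₀) ≤ δ/2 := by
    rw [← hexpL₂]
    exact bound_lower_tail m n r hrn G x₀ L₂ hx₀ hL₂pos.le hm
      hα0 hα1 hαe hmx
  -- ### Bound 2 : items outside I'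
  have hbound2 : ∀ i ∈ I'ᶜ, Pr m n r (fun M =>
      (x₀ ≤ ((Finset.univ.filter fun t => G (M t)).card : ℝ))
        ∧ ∀ t, ¬(M t i = true ∧ G (M t))) ≤ δ/(2*n) := by
    intro i hic
    set aRow : ℝ := rowP n r (fun v => G v ∧ v i = false) with haRowdef
    have haval : aRow = ((n - d - 1).choose r : ℝ) * ((n.choose r : ℝ))⁻¹ := by
      rw [haRowdef]
      have hiff : ∀ v : Fin n → Bool,
          (G v ∧ v i = false) ↔ (∀ j, v j = true → j ∈ I'ᶜ.erase i) := by
        intro v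
        rw [hGdef]
        constructor
        · rintro ⟨hG, hvi⟩ j hj
          refine Finset.mem_erase.2 ⟨?_, hG j hj⟩
          rintro rfl
          rw [hvi] at hj
          exact Bool.false_ne_true hj
        · intro h
          constructor
          · intro j hj
            exact Finset.mem_of_mem_erase (h j hj)
          · rcases Bool.eq_false_or_eq_true (v i) with hb | hb
            · exact absurd (Finset.mem_erase.1 (h i hb)).1 (by simp)
            · exact hb
      rw [rowP_congr hiff, rowP_eq_cnt, cnt_subset (I'ᶜ.erase i),
        Finset.card_erase_of_mem hic, hcardc]
    have haRow0 : 0 ≤ aRow := rowP_nonneg n r _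
    have haRowle : aRow ≤ p * α := by
      rw [haval, hαval]
      have := choose_upper n r d hn hr_le p hr1
      calc ((n - d - 1).choose r : ℝ) * ((n.choose r : ℝ))⁻¹
          ≤ (p * ((n - d).choose r : ℝ)) * ((n.choose r : ℝ))⁻¹ :=
            mul_le_mul_of_nonneg_right this (inv_nonneg.2 hN0.le)
        _ = p * (((n - d).choose r : ℝ) * ((n.choose r : ℝ))⁻¹) := by ring
    rw [← hexpL₁]
    apply bound_item_out m n r hrn G i x₀ (Real.exp (-L₁)) (Real.exp_pos _).le hα1 hα0.le
    intro c hc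
    calc aRow^c ≤ (p*α)^c := pow_le_pow_left₀ haRow0 haRowle c
      _ = p^c * α^c := mul_pow p α c
      _ ≤ Real.exp (-L₁) * α^c := by
          apply mul_le_mul_of_nonneg_right _ (pow_nonneg hα0.le c)
          rw [hpdef, ← Real.exp_nat_mul]
          apply Real.exp_le_exp.2
          rw [show (c:ℝ) * (-1/d) = -((c:ℝ)/d) by ring]
          rw [neg_le_neg_iff]
          rw [le_div_iff₀ hd0]
          calc L₁ * d = d * L₁ := by ring
            _ = x₀ := by rw [hx₀def]
            _ ≤ c := hc
  -- ### Bound 3 : items in I' \ I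
  have hbound3 : ∀ i ∈ I' \ I, Pr m n r (fun M =>
      ∀ t, ¬(M t i = true ∧ ∀ j ∈ I, M t j = false)) ≤ δ/(2*n) := by
    intro i hii
    rw [Finset.mem_sdiff] at hii
    obtain ⟨hiI', hiI⟩ := hii
    set R : (Fin n → Bool) → Prop := fun v => v i = true ∧ ∀ j ∈ I, v j = false with hRdef
    set q : ℝ := rowP n r R with hqdef
    have hq1 : q ≤ 1 := rowP_le_one n r hrn R
    have hq0 : 0 ≤ q := rowP_nonneg n r R
    -- lower bound on q
    have hinotc : i ∉ I'ᶜ := by simp [hiI']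
    have hq'val : rowP n r (fun v => v i = true ∧ ∀ j, v j = true → j ∈ insert i I'ᶜ)
        = ((n - d).choose (r-1) : ℝ) * ((n.choose r : ℝ))⁻¹ := by
      rw [rowP_eq_cnt, cnt_mem hr_pos I'ᶜ i hinotc, hcardc]
    have hq'le : rowP n r (fun v => v i = true ∧ ∀ j, v j = true → j ∈ insert i I'ᶜ) ≤ q := by
      rw [hqdef, hRdef]
      apply rowP_mono
      rintro v ⟨hvi, hsupp⟩
      refine ⟨hvi, fun j hj => ?_⟩
      rcases Bool.eq_false_or_eq_true (v j) with hb | hb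
      · exfalso
        rcases Finset.mem_insert.1 (hsupp j hb) with h | h
        · subst h; exact hiI hj
        · exact (Finset.mem_compl.1 h) (hsub hj)
      · exact hb
    -- q ≥ p^(d-1) * r / (n - d + 1)
    have hstep1 : p^(d-1) * (n.choose r : ℝ) ≤ ((n - d + 1).choose r : ℝ) := by
      have := choose_lower n r d p hp0.le hn.le hr_le hr2 (d-1) (by omega)
      rwa [show n - (d-1) = n - d + 1 by omega] at this
    have hstep2 : ((n - d).choose (r-1) : ℝ) * ((n:ℝ) - d + 1)
        = (r:ℝ) * ((n - d + 1).choose r : ℝ) := by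
      have := choose_pred_ratio n r d hr_pos hn.le
      rwa [show (n - d) + 1 = n - d + 1 from rfl] at this
    have hnd1 : (0:ℝ) < (n:ℝ) - d + 1 := by linarith
    have hqlow : p^(d-1) * r / ((n:ℝ) - d + 1) ≤ q := by
      apply le_trans _ hq'le
      rw [hq'val]
      rw [div_le_iff₀ hnd1]
      calc p^(d-1) * (r:ℝ) = (r:ℝ) * p^(d-1) := by ring
        _ ≤ ((n - d).choose (r-1) : ℝ) * ((n.choose r : ℝ))⁻¹ * ((n:ℝ) - d + 1) := by
            rw [show ((n - d).choose (r-1) : ℝ) * ((n.choose r : ℝ))⁻¹ * ((n:ℝ) - d + 1)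
                = (((n - d).choose (r-1) : ℝ) * ((n:ℝ) - d + 1)) * ((n.choose r : ℝ))⁻¹ by ring]
            rw [hstep2]
            rw [show (r:ℝ) * ((n - d + 1).choose r : ℝ) * ((n.choose r : ℝ))⁻¹
                = (r:ℝ) * (((n - d + 1).choose r : ℝ) * ((n.choose r : ℝ))⁻¹) by ring]
            apply mul_le_mul_of_nonneg_left _ (Nat.cast_nonneg r)
            rw [show p^(d-1) = p^(d-1) * (n.choose r:ℝ) * ((n.choose r:ℝ))⁻¹ by field_simp]
            exact mul_le_mul_of_nonneg_right hstep1 (inv_nonneg.2 hN0.le)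
    -- m q ≥ L₁
    have hepd : Real.exp 1 * p^(d-1) = Real.exp (1/(d:ℝ)) := by
      rw [hpdef, ← Real.exp_nat_mul, ← Real.exp_add]
      congr 1
      have hcastd : ((d - 1 : ℕ) : ℝ) = (d:ℝ) - 1 := by
        push_cast [Nat.cast_sub hd]; ring
      rw [hcastd]
      field_simp
      ring
    have hkey := key_rate_ineq d n r hd hn hr1 hr_pos
    have hmq : L₁ ≤ (m:ℝ) * q := by
      have h1 : Real.exp 1 * (d * L₁) ≤ (m:ℝ) := by
        rw [← hx₀def]; exact hmlow
      have h2 : L₁ ≤ (Real.exp 1 * d * L₁) * (p^(d-1) * r / ((n:ℝ) - d + 1)) := by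
        rw [show (Real.exp 1 * d * L₁) * (p^(d-1) * r / ((n:ℝ) - d + 1))
            = L₁ * ((Real.exp 1 * p^(d-1) * d * r) / ((n:ℝ) - d + 1)) by ring]
        nth_rewrite 1 [← mul_one L₁]
        apply mul_le_mul_of_nonneg_left _ hL₁pos.le
        rw [le_div_iff₀ hnd1, one_mul]
        calc ((n:ℝ) - d + 1) ≤ Real.exp (1/(d:ℝ)) * d * r := hkey
          _ = Real.exp 1 * p^(d-1) * d * r := by rw [hepd]
      calc L₁ ≤ (Real.exp 1 * d * L₁) * (p^(d-1) * r / ((n:ℝ) - d + 1)) := h2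
        _ ≤ (m:ℝ) * (p^(d-1) * r / ((n:ℝ) - d + 1)) := by
            apply mul_le_mul_of_nonneg_right _ (by positivity)
            calc Real.exp 1 * d * L₁ = Real.exp 1 * (d * L₁) := by ring
              _ ≤ (m:ℝ) := h1
        _ ≤ (m:ℝ) * q := mul_le_mul_of_nonneg_left hqlow (Nat.cast_nonneg m)
    -- conclude
    have hPr3 : Pr m n r (fun M => ∀ t, ¬(M t i = true ∧ ∀ j ∈ I, M t j = false))
        = (1 - q)^m := by
      have h := Pr_forall_rows (m := m) (n := n) (r := r) (fun _ v => ¬ R v)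
      rw [show (fun M : Fin m → Fin n → Bool => ∀ t, ¬(M t i = true ∧ ∀ j ∈ I, M t j = false))
          = (fun M : Fin m → Fin n → Bool => ∀ t, ¬ R (M t)) by rfl]
      rw [h, Finset.prod_const, Finset.card_univ, Fintype.card_fin]
      congr 1
      have := rowP_compl n r hrn R
      rw [← hqdef] at this
      linarith
    rw [hPr3, ← hexpL₁]
    calc (1 - q)^m ≤ (Real.exp (-q))^m := by
          apply pow_le_pow_left₀ (by linarith)
          have := Real.add_one_le_exp (-q)
          linarith
      _ = Real.exp ((m:ℝ) * (-q)) := by rw [← Real.exp_nat_mul]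
      _ ≤ Real.exp (-L₁) := by
          apply Real.exp_le_exp.2
          rw [show (m:ℝ) * (-q) = -((m:ℝ)*q) by ring]
          exact neg_le_neg hmq
  -- ### decomposition of non-disjunctness
  have hdecomp : ∀ M : Fin m → Fin n → Bool, ¬ Disjunct I M →
      (((Finset.univ.filter fun t => G (M t)).card : ℝ) < x₀)
      ∨ ((∃ i ∈ I'ᶜ, (x₀ ≤ ((Finset.univ.filter fun t => G (M t)).card : ℝ))
            ∧ ∀ t, ¬(M t i = true ∧ G (M t)))
        ∨ (∃ i ∈ I' \ I, ∀ t, ¬(M t i = true ∧ ∀ j ∈ I, M t j = false))) := by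
    intro M hM
    rw [Disjunct] at hM
    push_neg at hM
    obtain ⟨i, hiI, hBad⟩ := hM
    have hBad' : ∀ t, ¬(M t i = true ∧ ∀ j ∈ I, M t j = false) := by
      intro t ht
      obtain ⟨j, hj, hjval⟩ := hBad t ht.1
      exact hjval (ht.2 j hj)
    by_cases hiI' : i ∈ I'
    · right; right
      exact ⟨i, Finset.mem_sdiff.2 ⟨hiI', hiI⟩, hBad'⟩
    · by_cases hX : ((Finset.univ.filter fun t => G (M t)).card : ℝ) < x₀
      · left; exact hX
      · right; left
        refine ⟨i, Finset.mem_compl.2 hiI', le_of_not_gt hX, ?_⟩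
        rintro t ⟨hti, htG⟩
        apply hBad' t
        refine ⟨hti, fun j hj => ?_⟩
        rw [hGdef] at htG
        rcases Bool.eq_false_or_eq_true (M t j) with hb | hb
        · exact absurd (htG j hb) (by simp [hsub hj])
        · exact hb
  -- ### put it together
  have hnd : Pr m n r (fun M => ¬ Disjunct I M) ≤ δ := by
    calc Pr m n r (fun M => ¬ Disjunct I M)
        ≤ Pr m n r (fun M =>
          (((Finset.univ.filter fun t => G (M t)).card : ℝ) < x₀)
          ∨ ((∃ i ∈ I'ᶜ, (x₀ ≤ ((Finset.univ.filter fun t => G (M t)).card : ℝ))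
                ∧ ∀ t, ¬(M t i = true ∧ G (M t)))
            ∨ (∃ i ∈ I' \ I, ∀ t, ¬(M t i = true ∧ ∀ j ∈ I, M t j = false)))) :=
          Pr_mono hdecomp
      _ ≤ Pr m n r (fun M => ((Finset.univ.filter fun t => G (M t)).card : ℝ) < x₀)
          + Pr m n r (fun M =>
            (∃ i ∈ I'ᶜ, (x₀ ≤ ((Finset.univ.filter fun t => G (M t)).card : ℝ))
                ∧ ∀ t, ¬(M t i = true ∧ G (M t)))
            ∨ (∃ i ∈ I' \ I, ∀ t, ¬(M t i = true ∧ ∀ j ∈ I, M t j = false))) :=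
          Pr_or _ _
      _ ≤ Pr m n r (fun M => ((Finset.univ.filter fun t => G (M t)).card : ℝ) < x₀)
          + (Pr m n r (fun M => ∃ i ∈ I'ᶜ,
              (x₀ ≤ ((Finset.univ.filter fun t => G (M t)).card : ℝ))
                ∧ ∀ t, ¬(M t i = true ∧ G (M t)))
            + Pr m n r (fun M => ∃ i ∈ I' \ I,
                ∀ t, ¬(M t i = true ∧ ∀ j ∈ I, M t j = false))) := by
          have := Pr_or (m := m) (n := n) (r := r)
            (fun M => ∃ i ∈ I'ᶜ, (x₀ ≤ ((Finset.univ.filter fun t => G (M t)).card : ℝ))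
                ∧ ∀ t, ¬(M t i = true ∧ G (M t)))
            (fun M => ∃ i ∈ I' \ I, ∀ t, ¬(M t i = true ∧ ∀ j ∈ I, M t j = false))
          linarith
      _ ≤ δ/2 + (((n - d : ℕ) : ℝ) * (δ/(2*n)) + ((I' \ I).card : ℝ) * (δ/(2*n))) := by
          have hb2 : Pr m n r (fun M => ∃ i ∈ I'ᶜ,
              (x₀ ≤ ((Finset.univ.filter fun t => G (M t)).card : ℝ))
                ∧ ∀ t, ¬(M t i = true ∧ G (M t))) ≤ ((n - d : ℕ) : ℝ) * (δ/(2*n)) := by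
            calc Pr m n r (fun M => ∃ i ∈ I'ᶜ, _) ≤ ∑ i ∈ I'ᶜ, Pr m n r _ := Pr_exists_le _ _
              _ ≤ ∑ i ∈ I'ᶜ, δ/(2*n) := Finset.sum_le_sum hbound2
              _ = ((n - d : ℕ) : ℝ) * (δ/(2*n)) := by
                  rw [Finset.sum_const, hcardc, nsmul_eq_mul]
          have hb3 : Pr m n r (fun M => ∃ i ∈ I' \ I,
              ∀ t, ¬(M t i = true ∧ ∀ j ∈ I, M t j = false))
              ≤ ((I' \ I).card : ℝ) * (δ/(2*n)) := by
            calc Pr m n r (fun M => ∃ i ∈ I' \ I, _) ≤ ∑ i ∈ I' \ I, Pr m n r _ :=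
                  Pr_exists_le _ _
              _ ≤ ∑ i ∈ I' \ I, δ/(2*n) := Finset.sum_le_sum hbound3
              _ = ((I' \ I).card : ℝ) * (δ/(2*n)) := by
                  rw [Finset.sum_const, nsmul_eq_mul]
          linarith [hbound1, hb2, hb3]
      _ ≤ δ := by
          have hc1 : ((I' \ I).card : ℝ) ≤ (d:ℝ) := by
            have : (I' \ I).card ≤ I'.card := Finset.card_le_card (Finset.sdiff_subset)
            rw [hI'card] at this
            exact_mod_cast this
          have hc2 : ((n - d : ℕ) : ℝ) = (n:ℝ) - d := hcast_nd
          have hpos : 0 ≤ δ/(2*n) := by positivity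
          have : (((n - d : ℕ) : ℝ) + ((I' \ I).card : ℝ)) * (δ/(2*n)) ≤ (n:ℝ) * (δ/(2*n)) := by
            apply mul_le_mul_of_nonneg_right _ hpos
            rw [hc2]; linarith
          have hfin : (n:ℝ) * (δ/(2*n)) = δ/2 := by
            field_simp
          have hdist : ((n - d : ℕ) : ℝ) * (δ/(2*n)) + ((I' \ I).card : ℝ) * (δ/(2*n))
              = (((n - d : ℕ) : ℝ) + ((I' \ I).card : ℝ)) * (δ/(2*n)) := by ring
          linarith [this, hfin, hdist]
  rw [rrsdProb_eq_Pr, Pr_compl m n r hrn]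
  linarith [hnd]

end
end

section
/- Let m, n, s, d be positive integers with s ≤ m and d ≤ n, set α = s/m, and let I ⊆ {1,…,n} with |I| = d. Let M be an m×n RsSD random matrix with column weight s, and let X be the number of rows t ∈ {1,…,m} such that M_{t,j} = 0 for all j ∈ I. Then the variance of X satisfies Var[X] ≤ (1−α)^d · m. -/
open scoped Classical

noncomputable section

/-- The weight (number of ones) of column `j` of a 0-1 matrix. -/
def colWeight {m n : ℕ} (M : Fin m → Fin n → Bool) (j : Fin n) : ℕ :=
  (Finset.univ.filter fun t => M t j = true).card

/-- The probability weight of a single matrix `M` under the RsSD model with column weight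
`s`: the columns are chosen independently and uniformly from all 0-1 vectors in `{0,1}^m`
with exactly `s` ones. -/
def rssdWeight (m n s : ℕ) (M : Fin m → Fin n → Bool) : ℝ :=
  ∏ j : Fin n, (if colWeight M j = s then ((m.choose s : ℝ))⁻¹ else 0)

/-- The number of "good" rows of `M` with respect to `I`: rows with zero entries in all
columns of `I`. -/
def goodRows {m n : ℕ} (I : Finset (Fin n)) (M : Fin m → Fin n → Bool) : ℕ :=
  (Finset.univ.filter fun t : Fin m => ∀ j ∈ I, M t j = false).card

/-- single-column weight -/
def rssdAux_wv (m s : ℕ) (v : Fin m → Bool) : ℝ :=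
  if (Finset.univ.filter fun t => v t = true).card = s then ((m.choose s : ℝ))⁻¹ else 0

lemma rssdAux_choose_id1 (m s : ℕ) (hm : 0 < m) :
    m * (m - 1).choose s = (m - s) * m.choose s := by
  obtain ⟨k, rfl⟩ := Nat.exists_eq_add_of_lt hm
  simp only [Nat.zero_add, Nat.add_sub_cancel]
  rw [Nat.add_one_mul_choose_eq, Nat.choose_succ_right_eq, Nat.mul_comm]

lemma rssdAux_choose_sq_ineq (m s : ℕ) :
    (m - 2).choose s * m.choose s ≤ ((m - 1).choose s) ^ 2 := by
  rcases Nat.lt_or_ge m 2 with h | h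
  · interval_cases m
    · rw [pow_two]
    · rcases Nat.lt_or_ge s 1 with hs | hs
      · interval_cases s; simp
      · simp [Nat.choose_eq_zero_of_lt (by omega : 0 < s)]
  rcases Nat.lt_or_ge (m - 1) s with hs | hs
  · rw [Nat.choose_eq_zero_of_lt hs, Nat.choose_eq_zero_of_lt (by omega), pow_two]
    simp
  have key : (m - 1 - s) * m ≤ (m - s) * (m - 1) := by
    obtain ⟨b, rfl⟩ : ∃ b, m = s + 1 + b := ⟨m - s - 1, by omega⟩
    have h1 : s + 1 + b - 1 - s = b := by omega
    have h2 : s + 1 + b - s = 1 + b := by omega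
    have h3 : s + 1 + b - 1 = s + b := by omega
    rw [h1, h2, h3]
    nlinarith
  have e1 : m * (m - 1).choose s = (m - s) * m.choose s := rssdAux_choose_id1 m s (by omega)
  have e2 : (m - 1) * (m - 2).choose s = (m - 1 - s) * (m - 1).choose s := by
    have := rssdAux_choose_id1 (m - 1) s (by omega)
    rwa [show m - 1 - 1 = m - 2 by omega] at this
  have main : (m * (m - 1)) * ((m - 2).choose s * m.choose s)
      ≤ (m * (m - 1)) * (((m - 1).choose s) ^ 2) := by
    calc (m * (m - 1)) * ((m - 2).choose s * m.choose s)
        = ((m - 1) * (m - 2).choose s) * (m * m.choose s) := by ring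
      _ = ((m - 1 - s) * (m - 1).choose s) * (m * m.choose s) := by rw [e2]
      _ = ((m - 1 - s) * m) * ((m - 1).choose s * m.choose s) := by ring
      _ ≤ ((m - s) * (m - 1)) * ((m - 1).choose s * m.choose s) :=
          Nat.mul_le_mul_right _ key
      _ = (m - 1) * (((m - s) * m.choose s) * (m - 1).choose s) := by ring
      _ = (m - 1) * ((m * (m - 1).choose s) * (m - 1).choose s) := by rw [← e1]
      _ = (m * (m - 1)) * (((m - 1).choose s) ^ 2) := by ring
  exact Nat.le_of_mul_le_mul_left main (Nat.mul_pos (by omega) (by omega))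

lemma rssdAux_countw (m s : ℕ) (A : Finset (Fin m)) :
    ((Finset.univ : Finset (Fin m → Bool)).filter fun v =>
      (Finset.univ.filter fun t => v t = true).card = s ∧ ∀ a ∈ A, v a = false).card
    = (m - A.card).choose s := by
  have hcompl : Aᶜ.card = m - A.card := by
    rw [Finset.card_compl, Fintype.card_fin]
  rw [← hcompl, ← Finset.card_powersetCard]
  apply Finset.card_bij' (fun v _ => Finset.univ.filter fun t => v t = true)
    (fun S _ => fun t => decide (t ∈ S))
  case hi =>
    intro v hv
    simp only [Finset.mem_filter, Finset.mem_univ, true_and] at hv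
    rw [Finset.mem_powersetCard]
    refine ⟨?_, hv.1⟩
    intro t ht
    simp only [Finset.mem_filter, Finset.mem_univ, true_and] at ht
    simp only [Finset.mem_compl]
    intro hA
    rw [hv.2 t hA] at ht
    exact Bool.false_ne_true ht
  case hj =>
    intro S hS
    rw [Finset.mem_powersetCard] at hS
    simp only [Finset.mem_filter, Finset.mem_univ, true_and]
    constructor
    · rw [← hS.2]
      congr 1
      ext t
      simp
    · intro a ha
      have : a ∉ S := fun h => (Finset.mem_compl.mp (hS.1 h)) ha
      simpa using this
  case left_inv =>
    intro v hv
    funext t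
    by_cases h : v t = true <;> simp [h] <;> simp at h <;> simp [h]
  case right_inv =>
    intro S hS
    ext t
    simp

lemma rssdAux_factor (m n s : ℕ) (g : Fin n → (Fin m → Bool) → ℝ) :
    ∑ M : Fin m → Fin n → Bool, rssdWeight m n s M * ∏ j, g j (fun t => M t j)
    = ∏ j : Fin n, ∑ v : Fin m → Bool, rssdAux_wv m s v * g j v := by
  rw [Fintype.prod_sum (fun j v => rssdAux_wv m s v * g j v)]
  apply Fintype.sum_equiv (Equiv.piComm (fun (_ : Fin m) (_ : Fin n) => Bool))
  intro N
  rw [rssdWeight, ← Finset.prod_mul_distrib]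
  rfl

lemma rssdAux_sumw (m s : ℕ) (A : Finset (Fin m)) :
    ∑ v : Fin m → Bool, rssdAux_wv m s v * (if ∀ a ∈ A, v a = false then (1:ℝ) else 0)
    = ((m - A.card).choose s : ℝ) * ((m.choose s : ℝ))⁻¹ := by
  have h1 : ∀ v : Fin m → Bool, rssdAux_wv m s v * (if ∀ a ∈ A, v a = false then (1:ℝ) else 0)
      = if ((Finset.univ.filter fun t => v t = true).card = s ∧ ∀ a ∈ A, v a = false)
        then ((m.choose s : ℝ))⁻¹ else 0 := by
    intro v
    unfold rssdAux_wv
    split_ifs with h2 h3 h4 h5 h6 h7 <;> simp_all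
  rw [Finset.sum_congr rfl fun v _ => h1 v, ← Finset.sum_filter, Finset.sum_const,
    nsmul_eq_mul, rssdAux_countw]

theorem rssd_goodrows_variance (m n s d : ℕ) (hm : 0 < m) (hn : 0 < n) (hs : 0 < s)
    (hd : 0 < d) (hsm : s ≤ m) (hdn : d ≤ n)
    (I : Finset (Fin n)) (hI : I.card = d) :
    (∑ M : Fin m → Fin n → Bool, rssdWeight m n s M * (goodRows I M : ℝ) ^ 2) -
      (∑ M : Fin m → Fin n → Bool, rssdWeight m n s M * (goodRows I M : ℝ)) ^ 2 ≤
    (1 - (s : ℝ) / m) ^ d * m := by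
  set C : ℝ := (m.choose s : ℝ) with hCdef
  have hC : 0 < C := by
    have := Nat.choose_pos hsm
    positivity
  set r : ℝ := ((m - 1).choose s : ℝ) * C⁻¹ with hrdef
  set q : ℝ := ((m - 2).choose s : ℝ) * C⁻¹ with hqdef
  have hr0 : 0 ≤ r := by positivity
  have hq0 : 0 ≤ q := by positivity
  -- r = 1 - s/m
  have hrval : r = 1 - (s : ℝ) / m := by
    have h1 : (m : ℝ) * ((m - 1).choose s : ℝ) = ((m : ℝ) - s) * C := by
      have h := rssdAux_choose_id1 m s hm
      have h2 : ((m * (m - 1).choose s : ℕ) : ℝ) = (((m - s) * m.choose s : ℕ) : ℝ) := by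
        rw [h]
      push_cast [Nat.cast_sub hsm] at h2
      rw [hCdef]
      exact h2
    have hm0 : (m : ℝ) ≠ 0 := by positivity
    rw [hrdef]
    field_simp
    linarith [h1]
  -- q ≤ r^2
  have hqr : q ≤ r ^ 2 := by
    have hnat := rssdAux_choose_sq_ineq m s
    have hcast : ((m - 2).choose s : ℝ) * (m.choose s : ℝ) ≤ (((m - 1).choose s : ℝ)) ^ 2 := by
      exact_mod_cast hnat
    have hq' : q = ((m - 2).choose s : ℝ) * C * (C⁻¹ * C⁻¹) := by
      rw [hqdef]
      field_simp
    rw [hq', hrdef, mul_pow]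
    calc ((m - 2).choose s : ℝ) * C * (C⁻¹ * C⁻¹)
        ≤ (((m - 1).choose s : ℝ)) ^ 2 * (C⁻¹ * C⁻¹) := by
          apply mul_le_mul_of_nonneg_right hcast
          positivity
      _ = (((m - 1).choose s : ℝ)) ^ 2 * (C⁻¹) ^ 2 := by ring
  -- the one-column full sum
  have hone : ∑ v : Fin m → Bool, rssdAux_wv m s v = 1 := by
    have h := rssdAux_sumw m s (∅ : Finset (Fin m))
    simp only [Finset.notMem_empty, false_implies, implies_true, if_true, mul_one,
      Finset.card_empty, Nat.sub_zero] at h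
    rw [h, ← hCdef]
    field_simp
  -- single row column sum
  have hsingle : ∀ t : Fin m,
      ∑ v : Fin m → Bool, rssdAux_wv m s v * (if v t = false then (1:ℝ) else 0) = r := by
    intro t
    have h := rssdAux_sumw m s ({t} : Finset (Fin m))
    simp only [Finset.mem_singleton, forall_eq, Finset.card_singleton] at h
    rw [h, ← hCdef, hrdef]
  -- pair column sum
  have hpair : ∀ t t' : Fin m, t ≠ t' →
      ∑ v : Fin m → Bool, rssdAux_wv m s v * (if v t = false ∧ v t' = false then (1:ℝ) else 0)
      = q := by
    intro t t' htt
    have h := rssdAux_sumw m s ({t, t'} : Finset (Fin m))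
    have hcard : ({t, t'} : Finset (Fin m)).card = 2 := Finset.card_pair htt
    simp only [Finset.mem_insert, Finset.mem_singleton, forall_eq_or_imp, forall_eq,
      hcard] at h
    rw [h, ← hCdef, hqdef]
  -- indicator as product over all columns
  have hindGen : ∀ (p : Fin n → Prop),
      (if ∀ j ∈ I, p j then (1:ℝ) else 0)
      = ∏ j : Fin n, (if j ∈ I then (if p j then (1:ℝ) else 0) else 1) := by
    intro p
    rw [Finset.prod_ite_mem, Finset.univ_inter, Finset.prod_boole]
    split_ifs <;> rfl
  -- ite-product over univ to power
  have hprodpow : ∀ x : ℝ, (∏ j : Fin n, (if j ∈ I then x else 1)) = x ^ d := by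
    intro x
    rw [Finset.prod_ite_mem, Finset.univ_inter, Finset.prod_const, hI]
  -- first moment
  have EX : (∑ M : Fin m → Fin n → Bool, rssdWeight m n s M * (goodRows I M : ℝ))
      = (m : ℝ) * r ^ d := by
    have hcast : ∀ M : Fin m → Fin n → Bool, (goodRows I M : ℝ)
        = ∑ t : Fin m, (if ∀ j ∈ I, M t j = false then (1:ℝ) else 0) := by
      intro M
      rw [goodRows, Finset.card_filter]
      push_cast
      rfl
    calc (∑ M : Fin m → Fin n → Bool, rssdWeight m n s M * (goodRows I M : ℝ))
        = ∑ M : Fin m → Fin n → Bool, ∑ t : Fin m,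
            rssdWeight m n s M * (if ∀ j ∈ I, M t j = false then (1:ℝ) else 0) := by
          refine Finset.sum_congr rfl fun M _ => ?_
          rw [hcast M, Finset.mul_sum]
      _ = ∑ t : Fin m, ∑ M : Fin m → Fin n → Bool,
            rssdWeight m n s M * (if ∀ j ∈ I, M t j = false then (1:ℝ) else 0) :=
          Finset.sum_comm
      _ = ∑ t : Fin m, (r : ℝ) ^ d := by
          refine Finset.sum_congr rfl fun t _ => ?_
          calc ∑ M : Fin m → Fin n → Bool,
                rssdWeight m n s M * (if ∀ j ∈ I, M t j = false then (1:ℝ) else 0)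
              = ∑ M : Fin m → Fin n → Bool, rssdWeight m n s M *
                  ∏ j : Fin n, (fun (j : Fin n) (v : Fin m → Bool) =>
                    if j ∈ I then (if v t = false then (1:ℝ) else 0) else 1) j
                    (fun t' => M t' j) := by
                refine Finset.sum_congr rfl fun M _ =>
                  congrArg (fun z => rssdWeight m n s M * z) ?_
                convert hindGen (fun j => M t j = false) using 2 with j hj
                beta_reduce
                split_ifs <;> rfl
            _ = ∏ j : Fin n, ∑ v : Fin m → Bool, rssdAux_wv m s v *
                  (if j ∈ I then (if v t = false then (1:ℝ) else 0) else 1) :=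
                rssdAux_factor m n s (fun (j : Fin n) (v : Fin m → Bool) =>
                  if j ∈ I then (if v t = false then (1:ℝ) else 0) else 1)
            _ = ∏ j : Fin n, (if j ∈ I then r else 1) := by
                refine Finset.prod_congr rfl fun j _ => ?_
                by_cases hj : j ∈ I
                · simp only [hj, if_true]
                  exact hsingle t
                · simp only [hj, if_false, mul_one]
                  exact hone
            _ = r ^ d := hprodpow r
      _ = (m : ℝ) * r ^ d := by
          rw [Finset.sum_const, Finset.card_univ, Fintype.card_fin, nsmul_eq_mul]
  -- second moment
  have EX2 : (∑ M : Fin m → Fin n → Bool, rssdWeight m n s M * (goodRows I M : ℝ) ^ 2)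
      = ∑ t : Fin m, ∑ t' : Fin m, (if t' = t then r ^ d else q ^ d) := by
    have hcast : ∀ M : Fin m → Fin n → Bool, (goodRows I M : ℝ) ^ 2
        = ∑ t : Fin m, ∑ t' : Fin m,
            (if ∀ j ∈ I, (M t j = false ∧ M t' j = false) then (1:ℝ) else 0) := by
      intro M
      have h0 : (goodRows I M : ℝ)
          = ∑ t : Fin m, (if ∀ j ∈ I, M t j = false then (1:ℝ) else 0) := by
        rw [goodRows, Finset.card_filter]
        push_cast
        rfl
      rw [pow_two, h0, Finset.sum_mul_sum]
      refine Finset.sum_congr rfl fun t _ => Finset.sum_congr rfl fun t' _ => ?_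
      have hiff : (∀ j ∈ I, (M t j = false ∧ M t' j = false)) ↔
          ((∀ j ∈ I, M t j = false) ∧ (∀ j ∈ I, M t' j = false)) := by
        constructor
        · intro h
          exact ⟨fun j hj => (h j hj).1, fun j hj => (h j hj).2⟩
        · intro h j hj
          exact ⟨h.1 j hj, h.2 j hj⟩
      split_ifs <;> simp_all
    calc (∑ M : Fin m → Fin n → Bool, rssdWeight m n s M * (goodRows I M : ℝ) ^ 2)
        = ∑ M : Fin m → Fin n → Bool, ∑ t : Fin m, ∑ t' : Fin m,
            rssdWeight m n s M *
              (if ∀ j ∈ I, (M t j = false ∧ M t' j = false) then (1:ℝ) else 0) := by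
          refine Finset.sum_congr rfl fun M _ => ?_
          rw [hcast M, Finset.mul_sum]
          refine Finset.sum_congr rfl fun t _ => ?_
          rw [Finset.mul_sum]
      _ = ∑ t : Fin m, ∑ t' : Fin m, ∑ M : Fin m → Fin n → Bool,
            rssdWeight m n s M *
              (if ∀ j ∈ I, (M t j = false ∧ M t' j = false) then (1:ℝ) else 0) := by
          rw [Finset.sum_comm]
          exact Finset.sum_congr rfl fun t _ => Finset.sum_comm
      _ = ∑ t : Fin m, ∑ t' : Fin m, (if t' = t then r ^ d else q ^ d) := by
          refine Finset.sum_congr rfl fun t _ => Finset.sum_congr rfl fun t' _ => ?_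
          calc ∑ M : Fin m → Fin n → Bool, rssdWeight m n s M *
                (if ∀ j ∈ I, (M t j = false ∧ M t' j = false) then (1:ℝ) else 0)
              = ∑ M : Fin m → Fin n → Bool, rssdWeight m n s M *
                  ∏ j : Fin n, (fun (j : Fin n) (v : Fin m → Bool) =>
                    if j ∈ I then (if v t = false ∧ v t' = false then (1:ℝ) else 0) else 1) j
                    (fun t'' => M t'' j) := by
                refine Finset.sum_congr rfl fun M _ =>
                  congrArg (fun z => rssdWeight m n s M * z) ?_
                convert hindGen (fun j => M t j = false ∧ M t' j = false) using 2 with j hj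
                beta_reduce
                split_ifs <;> rfl
            _ = ∏ j : Fin n, ∑ v : Fin m → Bool, rssdAux_wv m s v *
                  (if j ∈ I then (if v t = false ∧ v t' = false then (1:ℝ) else 0) else 1) :=
                rssdAux_factor m n s (fun (j : Fin n) (v : Fin m → Bool) =>
                  if j ∈ I then (if v t = false ∧ v t' = false then (1:ℝ) else 0) else 1)
            _ = ∏ j : Fin n, (if j ∈ I then (if t' = t then r else q) else 1) := by
                refine Finset.prod_congr rfl fun j _ => ?_
                by_cases hj : j ∈ I
                · simp only [hj, if_true]
                  by_cases htt : t' = t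
                  · subst htt
                    simp only [if_true, and_self]
                    exact hsingle t'
                  · simp only [htt, if_false]
                    exact hpair t t' (fun h => htt h.symm)
                · simp only [hj, if_false, mul_one]
                  exact hone
            _ = (if t' = t then r else q) ^ d := hprodpow _
            _ = (if t' = t then r ^ d else q ^ d) := by
                split_ifs <;> rfl
  -- compute the double ite sum
  have EX2' : (∑ t : Fin m, ∑ t' : Fin m, (if t' = t then r ^ d else q ^ d))
      = (m : ℝ) * ((m : ℝ) * q ^ d + (r ^ d - q ^ d)) := by
    have inner : ∀ t : Fin m, (∑ t' : Fin m, (if t' = t then r ^ d else q ^ d))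
        = (m : ℝ) * q ^ d + (r ^ d - q ^ d) := by
      intro t
      have hsplit : ∀ t' : Fin m, (if t' = t then r ^ d else q ^ d)
          = q ^ d + (if t' = t then r ^ d - q ^ d else 0) := by
        intro t'; split_ifs <;> ring
      rw [Finset.sum_congr rfl fun t' _ => hsplit t', Finset.sum_add_distrib,
        Finset.sum_const, Finset.card_univ, Fintype.card_fin, nsmul_eq_mul,
        Finset.sum_ite_eq' Finset.univ t (fun _ => r ^ d - q ^ d)]
      simp
    rw [Finset.sum_congr rfl fun t _ => inner t, Finset.sum_const, Finset.card_univ,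
      Fintype.card_fin, nsmul_eq_mul]
  -- put it together
  rw [EX, EX2, EX2', hrval]
  set R : ℝ := (1 - (s : ℝ) / m) ^ d with hR
  have hR0 : 0 ≤ R := by rw [hR, ← hrval]; positivity
  have hQR : q ^ d ≤ R ^ 2 := by
    rw [hR, ← hrval, ← pow_mul, show d * 2 = 2 * d by ring, pow_mul]
    exact pow_le_pow_left₀ hq0 hqr d
  have hQ0 : 0 ≤ q ^ d := by positivity
  have hm1 : (1 : ℝ) ≤ (m : ℝ) := by exact_mod_cast hm
  have hmpos : (0 : ℝ) < (m : ℝ) := by positivity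
  nlinarith [mul_nonneg (mul_nonneg (sub_nonneg.mpr hm1) hmpos.le) (sub_nonneg.mpr hQR),
    sq_nonneg R, mul_nonneg hmpos.le (sq_nonneg R)]

end
end

section
/- For each integer d ≥ 1 and each α ∈ (0,1], set β_d(α) = 1−(1−α)^d and F_d(α) = H(α) − β_d(α)·H(α/β_d(α)). Then d · sup_{α∈(0,1]} F_d(α) converges to ln 2 as d → ∞. -/
noncomputable section

/-- The binary entropy function `H(x) = -x log₂ x - (1-x) log₂ (1-x)`
(with `H 0 = H 1 = 0`, by the convention `Real.log 0 = 0`). -/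
def binH (x : ℝ) : ℝ := -x * Real.logb 2 x - (1 - x) * Real.logb 2 (1 - x)

open Real Filter Set

lemma log_ge_one_sub_inv {x : ℝ} (hx : 0 < x) : 1 - 1/x ≤ Real.log x := by
  have h := Real.log_le_sub_one_of_pos (show (0:ℝ) < 1/x by positivity)
  rw [Real.log_div one_ne_zero hx.ne'] at h
  simp only [Real.log_one, zero_sub, one_div] at h
  have : (x:ℝ)⁻¹ = 1/x := (one_div x).symm
  linarith [h]

lemma tangent {x y : ℝ} (hx : 0 < x) (hy : 0 ≤ y) :
    x * Real.log x + (Real.log x + 1) * (y - x) ≤ y * Real.log y := by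
  rcases eq_or_lt_of_le hy with h | h
  · rw [← h]; simp; nlinarith [Real.log_le_sub_one_of_pos hx]
  · have h1 : Real.log x - Real.log y ≤ x/y - 1 := by
      have := Real.log_le_sub_one_of_pos (show 0 < x/y by positivity)
      rwa [Real.log_div hx.ne' h.ne'] at this
    have h2 : y * (Real.log x - Real.log y) ≤ y * (x/y - 1) :=
      mul_le_mul_of_nonneg_left h1 hy
    have h3 : y * (x/y - 1) = x - y := by field_simp
    nlinarith


lemma phi_mono : MonotoneOn (fun x : ℝ => x * Real.log x) (Icc (Real.exp (-1)) 1) := by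
  have he : (0:ℝ) < Real.exp (-1) := Real.exp_pos _
  apply monotoneOn_of_deriv_nonneg (convex_Icc _ _)
  · exact Real.continuous_mul_log.continuousOn
  · intro x hx
    rw [interior_Icc] at hx
    exact (Real.hasDerivAt_mul_log (ne_of_gt (lt_trans he hx.1))).differentiableAt.differentiableWithinAt
  · intro x hx
    rw [interior_Icc] at hx
    rw [Real.deriv_mul_log (ne_of_gt (lt_trans he hx.1))]
    have : (-1:ℝ) ≤ Real.log x := by
      rw [← Real.log_exp (-1)]
      exact Real.log_le_log he hx.1.le
    linarith

-- psi : v log v ≤ (1-v) log (1-v) for 0 < v ≤ 1/2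
lemma psi_ineq {v : ℝ} (h0 : 0 < v) (h2 : v ≤ 1/2) :
    v * Real.log v ≤ (1-v) * Real.log (1-v) := by
  have hv1 : v < 1 := by linarith
  have h1v : 0 < 1 - v := by linarith
  rcases le_or_gt v (Real.exp (-1)) with hc | hc
  · -- (1-v)(-log(1-v)) ≤ v ≤ v(-log v)
    have e1 : -Real.log (1-v) ≤ v/(1-v) := by
      have := log_ge_one_sub_inv h1v
      have : 1 - 1/(1-v) ≤ Real.log (1-v) := this
      have hx : 1/(1-v) - 1 = v/(1-v) := by field_simp; ring
      linarith
    have e2 : (1-v) * (-Real.log (1-v)) ≤ v := by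
      calc (1-v) * (-Real.log (1-v)) ≤ (1-v) * (v/(1-v)) :=
            mul_le_mul_of_nonneg_left e1 h1v.le
        _ = v := by field_simp
    have e3 : 1 ≤ -Real.log v := by
      have : Real.log v ≤ Real.log (Real.exp (-1)) := Real.log_le_log h0 hc
      rw [Real.log_exp] at this; linarith
    nlinarith [mul_le_mul_of_nonneg_left e3 h0.le]
  · have := phi_mono (a := v) (b := 1 - v)
      ⟨hc.le, by linarith⟩
      ⟨by nlinarith [Real.exp_one_gt_d9, Real.exp_pos (-1:ℝ), Real.exp_neg (1:ℝ)], by linarith⟩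
      (by linarith)
    simpa using this

lemma hd_prod {x : ℝ} (h0 : 0 < x) (h1 : x < 1) :
    HasDerivAt (fun y : ℝ => Real.log y * Real.log (1-y))
      (x⁻¹ * Real.log (1-x) + Real.log x * ((0-1)/(1-x))) x := by
  have h1v : (0:ℝ) < 1 - x := by linarith
  exact (Real.hasDerivAt_log h0.ne').mul
    (((hasDerivAt_const x (1:ℝ)).sub (hasDerivAt_id x)).log h1v.ne')

lemma key_mono : MonotoneOn (fun v : ℝ => Real.log v * Real.log (1-v)) (Ioc 0 (1/2)) := by
  apply monotoneOn_of_deriv_nonneg (convex_Ioc _ _)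
  · intro x hx
    exact ((hd_prod hx.1 (by linarith [hx.2])).continuousAt).continuousWithinAt
  · intro x hx
    rw [interior_Ioc] at hx
    exact (hd_prod hx.1 (by linarith [hx.2])).differentiableAt.differentiableWithinAt
  · intro x hx
    rw [interior_Ioc] at hx
    have h0 := hx.1
    have h2 : x < 1/2 := hx.2
    have h1 : x < 1 := by linarith
    have h1v : (0:ℝ) < 1 - x := by linarith
    rw [(hd_prod h0 h1).deriv]
    have heq : x⁻¹ * Real.log (1-x) + Real.log x * ((0-1)/(1-x))
        = ((1-x) * Real.log (1-x) - x * Real.log x) / (x * (1-x)) := by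
      field_simp; ring
    rw [heq]
    exact div_nonneg (by linarith [psi_ineq h0 h2.le]) (by positivity)

lemma key_fact {v : ℝ} (h0 : 0 < v) (h1 : v < 1) :
    Real.log v * Real.log (1-v) ≤ (Real.log 2)^2 := by
  have half : Real.log ((1:ℝ)/2) * Real.log (1-(1:ℝ)/2) = (Real.log 2)^2 := by
    norm_num [Real.log_div]; ring
  rcases le_or_gt v (1/2) with h | h
  · have := key_mono (a := v) (b := (1:ℝ)/2) ⟨h0, h⟩ ⟨by norm_num, le_refl _⟩ h
    simp only at this
    rw [half] at this; exact this
  · have h' : 1 - v ≤ 1/2 := by linarith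
    have h0' : 0 < 1 - v := by linarith
    have := key_mono (a := 1-v) (b := (1:ℝ)/2) ⟨h0', h'⟩ ⟨by norm_num, le_refl _⟩ h'
    simp only at this
    rw [half] at this
    have e : 1 - (1-v) = v := by ring
    rw [e] at this; linarith [this, mul_comm (Real.log v) (Real.log (1-v))]


lemma identity (d : ℕ) (hd : 2 ≤ d) {α : ℝ} (h0 : 0 < α) (h1 : α < 1) :
    binH α - (1 - (1-α)^d) * binH (α / (1 - (1-α)^d))
      = (((1-α) - (1-α)^d) * Real.log ((1-α)-(1-α)^d)
         - (1-(1-α)^d) * Real.log (1-(1-α)^d) - (1-α)*Real.log (1-α)) / Real.log 2 := by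
  have hu0 : (0:ℝ) < 1 - α := by linarith
  have hu1 : 1 - α < 1 := by linarith
  set u : ℝ := 1 - α with hu
  have hc0 : 0 < u^d := pow_pos hu0 d
  have hcu : u^d < u := by
    have := pow_lt_pow_right_of_lt_one₀ hu0 hu1 (show 1 < d by omega)
    simpa using this
  have hc1 : u^d < 1 := lt_trans hcu hu1
  have hβ : 0 < 1 - u^d := by linarith
  have hαβ : α < 1 - u^d := by rw [hu] at hcu ⊢; linarith
  have huc : 0 < u - u^d := by linarith
  have hl2 : Real.log 2 ≠ 0 := by
    have := Real.log_pos (by norm_num : (1:ℝ) < 2); linarith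
  have e1 : 1 - α/(1-u^d) = (u - u^d)/(1-u^d) := by
    field_simp; rw [hu]; ring
  have e2 : Real.log (α/(1-u^d)) = Real.log α - Real.log (1-u^d) :=
    Real.log_div h0.ne' hβ.ne'
  have e3 : Real.log ((u-u^d)/(1-u^d)) = Real.log (u-u^d) - Real.log (1-u^d) :=
    Real.log_div huc.ne' hβ.ne'
  have e4 : (1:ℝ) - u = α := by rw [hu]; ring
  simp only [binH, Real.logb, e1, e2, e3, e4]
  field_simp
  ring

lemma FFub2 {u c : ℝ} (hu0 : 0 < u) (hu1 : u < 1) (hc0 : 0 < c) (hcu : c < u) :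
    (u-c) * Real.log (u-c) - (1-c) * Real.log (1-c) - u * Real.log u
      ≤ c * (-Real.log (u-c)) := by
  have t1 := tangent (x := u-c) (y := u) (by linarith) (by linarith)
  have t2 := tangent (x := 1) (y := 1-c) (by norm_num) (by linarith [hcu.trans hu1])
  simp only [Real.log_one] at t2
  nlinarith [t1, t2]

lemma FFub1 {u c : ℝ} (hu0 : 0 < u) (hu1 : u < 1) (hc0 : 0 < c) (hcu : c < u) :
    (u-c) * Real.log (u-c) - (1-c) * Real.log (1-c) - u * Real.log u
      ≤ (1-u) * (-Real.log (u-c)) := by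
  have t1 := tangent (x := u-c) (y := 1-c) (by linarith) (by linarith [hcu.trans hu1])
  have t2 := tangent (x := 1) (y := u) (by norm_num) hu0.le
  simp only [Real.log_one] at t2
  nlinarith [t1, t2]

noncomputable def Bnat (d : ℕ) : ℝ :=
  (Real.log 2)^2 * d/(d-1) + 8*(Real.log d)^2/d + 2/d + 3*d*(1/2)^d

lemma Bnat_pieces_nonneg (d : ℕ) (hd : 2 ≤ d) :
    0 ≤ (Real.log 2)^2 * (d:ℝ)/((d:ℝ)-1) ∧ 0 ≤ 8*(Real.log d)^2/(d:ℝ) ∧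
    0 ≤ 2/(d:ℝ) ∧ 0 ≤ 3*(d:ℝ)*(1/2)^d := by
  have h1 : (1:ℝ) ≤ (d:ℝ) - 1 := by
    have : (2:ℝ) ≤ (d:ℝ) := by exact_mod_cast hd
    linarith
  have h0 : (0:ℝ) < (d:ℝ) := by positivity
  refine ⟨by positivity, by positivity, by positivity, by positivity⟩

set_option maxHeartbeats 2000000 in
lemma main_ub (d : ℕ) (hd : 2 ≤ d) {u : ℝ} (hu0 : 0 < u) (hu1 : u < 1) :
    (d:ℝ) * ((u - u^d) * Real.log (u-u^d) - (1-u^d) * Real.log (1-u^d)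
      - u * Real.log u) ≤ Bnat d := by
  obtain ⟨n1, n2, n3, n4⟩ := Bnat_pieces_nonneg d hd
  have hdR : (2:ℝ) ≤ (d:ℝ) := by exact_mod_cast hd
  have hd0 : (0:ℝ) < (d:ℝ) := by linarith
  have hc0 : 0 < u^d := pow_pos hu0 d
  have hcu : u^d < u := by
    have := pow_lt_pow_right_of_lt_one₀ hu0 hu1 (show 1 < d by omega)
    simpa using this
  have hc1 : u^d < 1 := hcu.trans hu1
  have huc : 0 < u - u^d := by linarith
  have hw0 : 0 < u^(d-1) := pow_pos hu0 _
  have hw1 : u^(d-1) < 1 := pow_lt_one₀ hu0.le hu1 (by omega)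
  have h1w : 0 < 1 - u^(d-1) := by linarith
  have hwu : u^(d-1) ≤ u := by
    have := pow_le_pow_of_le_one hu0.le hu1.le (show 1 ≤ d - 1 by omega)
    simpa using this
  have hsplit : u - u^d = u * (1 - u^(d-1)) := by
    have : u^d = u * u^(d-1) := by
      rw [← pow_succ']
      congr 1; omega
    rw [this]; ring
  have hlog : Real.log (u - u^d) = Real.log u + Real.log (1 - u^(d-1)) := by
    rw [hsplit, Real.log_mul hu0.ne' h1w.ne']
  have hlog2_le_one : Real.log 2 ≤ 1 := by
    linarith [Real.log_le_sub_one_of_pos (show (0:ℝ) < 2 by norm_num)]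
  have hlog2_pos : 0 < Real.log 2 := Real.log_pos (by norm_num)
  have FF := FFub2 hu0 hu1 hc0 hcu
  have FF1 := FFub1 hu0 hu1 hc0 hcu
  rcases le_or_gt u (1/2) with hcase | hucase
  · -- Case A : u ≤ 1/2
    have hw_half : u^(d-1) ≤ 1/2 := hwu.trans hcase
    have A1 : -Real.log (1 - u^(d-1)) ≤ 1 := by
      have : Real.log (1/2) ≤ Real.log (1 - u^(d-1)) :=
        Real.log_le_log (by norm_num) (by linarith)
      rw [Real.log_div one_ne_zero two_ne_zero, Real.log_one] at this
      linarith
    have A2 : u * (-Real.log u) ≤ 1 - u := by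
      have := log_ge_one_sub_inv hu0
      have h : -Real.log u ≤ 1/u - 1 := by linarith
      calc u * (-Real.log u) ≤ u * (1/u - 1) := mul_le_mul_of_nonneg_left h hu0.le
        _ = 1 - u := by field_simp
    have hud : u^d ≤ (1/2)^d := pow_le_pow_left₀ hu0.le hcase d
    have hud1 : u^(d-1) ≤ (1/2)^(d-1) := pow_le_pow_left₀ hu0.le hcase _
    have hpow : u^d = u * u^(d-1) := by
      rw [← pow_succ']; congr 1; omega
    have h3 : ((1:ℝ)/2)^d = (1/2) * (1/2)^(d-1) := by
      rw [← pow_succ']; congr 1; omega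
    have e1 : u^d * (-Real.log u) ≤ 2 * (1/2)^d := by
      have heq : u^d * (-Real.log u) = u^(d-1) * (u * (-Real.log u)) := by
        rw [hpow]; ring
      rw [heq]
      have h2 : u^(d-1) * (u * (-Real.log u)) ≤ u^(d-1) * 1 := by
        apply mul_le_mul_of_nonneg_left _ hw0.le
        linarith
      nlinarith [hud1]
    have e2 : u^d * (-Real.log (1 - u^(d-1))) ≤ (1/2)^d := by
      have hnn : 0 ≤ -Real.log (1 - u^(d-1)) := by
        have : Real.log (1 - u^(d-1)) ≤ 0 :=
          Real.log_nonpos (by linarith) (by linarith)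
        linarith
      calc u^d * (-Real.log (1 - u^(d-1))) ≤ u^d * 1 :=
            mul_le_mul_of_nonneg_left A1 hc0.le
        _ ≤ (1/2)^d := by linarith [hud]
    have hFF : (u - u^d) * Real.log (u-u^d) - (1-u^d) * Real.log (1-u^d)
        - u * Real.log u ≤ 3 * (1/2)^d := by
      have : u^d * (-Real.log (u - u^d))
          = u^d * (-Real.log u) + u^d * (-Real.log (1 - u^(d-1))) := by
        rw [hlog]; ring
      nlinarith [FF]
    calc (d:ℝ) * ((u - u^d) * Real.log (u-u^d) - (1-u^d) * Real.log (1-u^d)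
          - u * Real.log u) ≤ (d:ℝ) * (3 * (1/2)^d) :=
          mul_le_mul_of_nonneg_left hFF hd0.le
      _ = 3*(d:ℝ)*(1/2)^d := by ring
      _ ≤ Bnat d := by unfold Bnat; push_cast; linarith
  · -- u > 1/2
    have hlogu_neg : Real.log u < 0 := Real.log_neg hu0 hu1
    have k1 : 1 - u ≤ -Real.log u := by
      linarith [Real.log_le_sub_one_of_pos hu0]
    have k2 : -Real.log u ≤ 2*(1-u) := by
      have := log_ge_one_sub_inv hu0
      have h : -Real.log u ≤ 1/u - 1 := by linarith
      have s : 1/u ≤ 3 - 2*u := by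
        rw [div_le_iff₀ hu0]; nlinarith
      linarith
    rcases le_or_gt (1-u) (2*Real.log d/d) with hB | hB
    · -- Case B1
      have hkey := key_fact hw0 hw1
      have hlw : Real.log (u^(d-1)) = ((d:ℝ)-1) * Real.log u := by
        rw [Real.log_pow]; push_cast [show (d:ℕ) - 1 = d - 1 from rfl]
        have : ((d-1 : ℕ) : ℝ) = (d:ℝ) - 1 := by
          have : (1:ℕ) ≤ d := by omega
          push_cast [Nat.cast_sub this]; ring
        rw [this]
      have hd1 : (1:ℝ) ≤ (d:ℝ) - 1 := by linarith
      have hlu_pos : 0 < -Real.log u := by linarith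
      have hkey2 : -Real.log (1 - u^(d-1))
          ≤ (Real.log 2)^2 / (((d:ℝ)-1) * (-Real.log u)) := by
        rw [le_div_iff₀ (by positivity)]
        calc -Real.log (1 - u^(d-1)) * (((d:ℝ)-1) * (-Real.log u))
            = Real.log (u^(d-1)) * Real.log (1 - u^(d-1)) := by rw [hlw]; ring
          _ ≤ (Real.log 2)^2 := hkey
      have hFF : (u - u^d) * Real.log (u-u^d) - (1-u^d) * Real.log (1-u^d)
          - u * Real.log u
          ≤ 2*(1-u)^2 + (Real.log 2)^2/((d:ℝ)-1) := by
        have hsum : (1-u) * (-Real.log (u - u^d))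
            = (1-u) * (-Real.log u) + (1-u) * (-Real.log (1 - u^(d-1))) := by
          rw [hlog]; ring
        have p1 : (1-u) * (-Real.log u) ≤ 2*(1-u)^2 := by nlinarith
        have p2 : (1-u) * (-Real.log (1 - u^(d-1)))
            ≤ (Real.log 2)^2/((d:ℝ)-1) := by
          calc (1-u) * (-Real.log (1 - u^(d-1)))
              ≤ (-Real.log u) * ((Real.log 2)^2 / (((d:ℝ)-1) * (-Real.log u))) := by
                apply mul_le_mul k1 hkey2 ?_ hlu_pos.le
                · have : Real.log (1 - u^(d-1)) ≤ 0 :=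
                    Real.log_nonpos (by linarith) (by linarith)
                  linarith
            _ = (Real.log 2)^2/((d:ℝ)-1) := by
                have hne1 : Real.log u ≠ 0 := hlogu_neg.ne
                have hne2 : ((d:ℝ)-1) ≠ 0 := by linarith
                field_simp
          done
        linarith [FF1, hsum ▸ (le_refl ((1-u) * (-Real.log (u - u^d))))]
      have final : (d:ℝ) * (2*(1-u)^2 + (Real.log 2)^2/((d:ℝ)-1))
          ≤ 8*(Real.log d)^2/(d:ℝ) + (Real.log 2)^2 * (d:ℝ)/((d:ℝ)-1) := by
        have hlogd : 0 ≤ Real.log d := Real.log_nonneg (by exact_mod_cast (by omega : 1 ≤ d))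
        have hsq : (1-u)^2 ≤ (2*Real.log d/d)^2 := by
          apply sq_le_sq' _ hB
          nlinarith
        have : (d:ℝ) * (2*(1-u)^2) ≤ (d:ℝ) * (2*(2*Real.log d/d)^2) := by
          apply mul_le_mul_of_nonneg_left _ hd0.le
          linarith
        have he : (d:ℝ) * (2*(2*Real.log d/d)^2) = 8*(Real.log d)^2/(d:ℝ) := by
          field_simp; ring
        have : (d:ℝ) * ((Real.log 2)^2/((d:ℝ)-1)) = (Real.log 2)^2 * (d:ℝ)/((d:ℝ)-1) := by
          ring
        nlinarith [he]
      calc (d:ℝ) * ((u - u^d) * Real.log (u-u^d) - (1-u^d) * Real.log (1-u^d)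
            - u * Real.log u)
          ≤ (d:ℝ) * (2*(1-u)^2 + (Real.log 2)^2/((d:ℝ)-1)) :=
            mul_le_mul_of_nonneg_left hFF hd0.le
        _ ≤ 8*(Real.log d)^2/(d:ℝ) + (Real.log 2)^2 * (d:ℝ)/((d:ℝ)-1) := final
        _ ≤ Bnat d := by unfold Bnat; push_cast; linarith
    · -- Case B2
      have hlogd : 0 ≤ Real.log d := Real.log_nonneg (by exact_mod_cast (by omega : 1 ≤ d))
      have hue : u ≤ Real.exp (u - 1) := by
        have := Real.add_one_le_exp (u-1); linarith
      have hcd2 : u^d ≤ 1/(d:ℝ)^2 := by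
        calc u^d ≤ (Real.exp (u-1))^d := pow_le_pow_left₀ hu0.le hue d
          _ = Real.exp ((d:ℝ)*(u-1)) := by rw [← Real.exp_nat_mul]
          _ ≤ Real.exp (-(2*Real.log d)) := by
              apply Real.exp_le_exp.2
              have : 2*Real.log d < (d:ℝ)*(1-u) := by
                rw [div_lt_iff₀ hd0] at hB; nlinarith
              nlinarith
          _ = 1/(d:ℝ)^2 := by
              rw [show (2:ℝ)*Real.log d = Real.log ((d:ℝ)^2) by
                    rw [Real.log_pow]; push_cast; ring]
              rw [Real.exp_neg, Real.exp_log (by positivity), one_div]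
      have hwd : u^(d-1) ≤ 1/(d:ℝ) := by
        calc u^(d-1) ≤ (Real.exp (u-1))^(d-1) := pow_le_pow_left₀ hu0.le hue _
          _ = Real.exp (((d:ℝ)-1)*(u-1)) := by
              rw [← Real.exp_nat_mul]
              congr 1
              have : ((d-1 : ℕ) : ℝ) = (d:ℝ) - 1 := by
                have h1 : (1:ℕ) ≤ d := by omega
                push_cast [Nat.cast_sub h1]; ring
              rw [this]
          _ ≤ Real.exp (-Real.log d) := by
              apply Real.exp_le_exp.2
              have hBB : 2*Real.log d < (d:ℝ)*(1-u) := by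
                rw [div_lt_iff₀ hd0] at hB; nlinarith
              -- want ((d-1)(u-1)) ≤ -log d i.e. (d-1)(1-u) ≥ log d
              -- (d-1)(1-u) ≥ (d-1) * (2 log d/d) ≥ log d since 2(d-1) ≥ d
              have h1u : 0 < 1 - u := by linarith
              have step : ((d:ℝ)-1)*(1-u) ≥ ((d:ℝ)-1)*(2*Real.log d/(d:ℝ)) :=
                mul_le_mul_of_nonneg_left (le_of_lt hB) (by linarith)
              have step2 : ((d:ℝ)-1)*(2*Real.log d/(d:ℝ)) ≥ Real.log d := by
                rw [ge_iff_le, ← sub_nonneg]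
                have : ((d:ℝ)-1)*(2*Real.log d/(d:ℝ)) - Real.log d
                    = Real.log d * ((d:ℝ)-2)/(d:ℝ) := by field_simp; ring
                rw [this]
                exact div_nonneg (mul_nonneg hlogd (by linarith)) hd0.le
              nlinarith
          _ = 1/(d:ℝ) := by rw [Real.exp_neg, Real.exp_log hd0, one_div]
      have hw_half : u^(d-1) ≤ 1/2 := by
        have : 1/(d:ℝ) ≤ 1/2 := by
          apply div_le_div_of_nonneg_left (by norm_num) (by norm_num) hdR
        linarith
      have L1 : -Real.log u ≤ Real.log 2 := by
        have : Real.log (1/2) ≤ Real.log u := Real.log_le_log (by norm_num) (by linarith)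
        rw [Real.log_div one_ne_zero two_ne_zero, Real.log_one] at this
        linarith
      have L2 : -Real.log (1 - u^(d-1)) ≤ Real.log 2 := by
        have : Real.log (1/2) ≤ Real.log (1 - u^(d-1)) :=
          Real.log_le_log (by norm_num) (by linarith)
        rw [Real.log_div one_ne_zero two_ne_zero, Real.log_one] at this
        linarith
      have L3 : -Real.log (u - u^d) ≤ 2 := by
        rw [hlog]; push_cast; nlinarith
      have hFF : (u - u^d) * Real.log (u-u^d) - (1-u^d) * Real.log (1-u^d)
          - u * Real.log u ≤ (1/(d:ℝ)^2) * 2 := by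
        have hnn : 0 ≤ -Real.log (u - u^d) := by
          have : Real.log (u - u^d) ≤ 0 :=
            Real.log_nonpos (by linarith) (by linarith)
          linarith
        calc (u - u^d) * Real.log (u-u^d) - (1-u^d) * Real.log (1-u^d)
              - u * Real.log u ≤ u^d * (-Real.log (u - u^d)) := FF
          _ ≤ (1/(d:ℝ)^2) * 2 := by
              apply mul_le_mul hcd2 L3 hnn (by positivity)
      calc (d:ℝ) * ((u - u^d) * Real.log (u-u^d) - (1-u^d) * Real.log (1-u^d)
            - u * Real.log u) ≤ (d:ℝ) * ((1/(d:ℝ)^2) * 2) :=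
            mul_le_mul_of_nonneg_left hFF hd0.le
        _ = 2/(d:ℝ) := by field_simp
        _ ≤ Bnat d := by unfold Bnat; push_cast; linarith


lemma Bnat_tendsto : Tendsto (fun d : ℕ => Bnat d) atTop (nhds ((Real.log 2)^2)) := by
  have hcast : Tendsto (fun d : ℕ => (d:ℝ)) atTop atTop := tendsto_natCast_atTop_atTop
  have c1 : Tendsto (fun d : ℕ => (Real.log 2)^2 * (d:ℝ)/((d:ℝ)-1)) atTop
      (nhds ((Real.log 2)^2)) := by
    have hden : Tendsto (fun d:ℕ => (d:ℝ)-1) atTop atTop :=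
      tendsto_atTop_add_const_right _ (-1) hcast
    have hinv : Tendsto (fun d:ℕ => ((d:ℝ)-1)⁻¹) atTop (nhds 0) :=
      hden.inv_tendsto_atTop
    have h1 : Tendsto (fun d:ℕ => (Real.log 2)^2 * (1 + ((d:ℝ)-1)⁻¹)) atTop
        (nhds ((Real.log 2)^2)) := by
      have := (tendsto_const_nhds (x := (1:ℝ)) (f := atTop (α := ℕ))).add hinv
      have h2 := this.const_mul ((Real.log 2)^2)
      simpa using h2
    apply h1.congr'
    filter_upwards [eventually_ge_atTop 2] with d hd
    have h3 : ((d:ℝ)-1) ≠ 0 := by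
      have : (2:ℝ) ≤ (d:ℝ) := by exact_mod_cast hd
      linarith
    field_simp
    ring
  have c2 : Tendsto (fun d : ℕ => 8*(Real.log d)^2/(d:ℝ)) atTop (nhds 0) := by
    have base := (Real.tendsto_pow_log_div_mul_add_atTop 1 0 2 one_ne_zero).comp hcast
    have h2 := base.const_mul (8:ℝ)
    simp only [Function.comp] at h2
    simp only [one_mul, add_zero, mul_zero] at h2
    apply h2.congr
    intro d; ring
  have c3 : Tendsto (fun d : ℕ => 2/(d:ℝ)) atTop (nhds 0) := by
    have h2 := hcast.inv_tendsto_atTop.const_mul (2:ℝ)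
    simp only [mul_zero] at h2
    apply h2.congr
    intro d; simp [div_eq_mul_inv]
  have c4 : Tendsto (fun d : ℕ => 3*(d:ℝ)*(1/2:ℝ)^d) atTop (nhds 0) := by
    have h2 := (tendsto_self_mul_const_pow_of_lt_one (r := (1/2:ℝ)) (by norm_num)
      (by norm_num)).const_mul (3:ℝ)
    simp only [mul_zero] at h2
    apply h2.congr
    intro d; ring
  have := ((c1.add c2).add c3).add c4
  simp only [add_zero] at this
  apply this.congr
  intro d
  unfold Bnat
  ring

noncomputable def ud (d : ℕ) : ℝ := (2:ℝ) ^ (-(1:ℝ)/(d:ℝ))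

lemma ud_exp : ud = fun d : ℕ => Real.exp (Real.log 2 * (-(1:ℝ)/(d:ℝ))) := by
  funext d; exact Real.rpow_def_of_pos (by norm_num) _

lemma ud_exp' (d : ℕ) : ud d = Real.exp (Real.log 2 * (-(1:ℝ)/(d:ℝ))) :=
  Real.rpow_def_of_pos (by norm_num) _

lemma ud_pos (d : ℕ) : 0 < ud d := Real.rpow_pos_of_pos (by norm_num) _

lemma ud_lt_one {d : ℕ} (hd : 1 ≤ d) : ud d < 1 := by
  apply Real.rpow_lt_one_of_one_lt_of_neg (by norm_num)
  have : (0:ℝ) < (d:ℝ) := by exact_mod_cast hd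
  have : (0:ℝ) < 1/(d:ℝ) := by positivity
  rw [neg_div]; linarith

lemma ud_pow {d : ℕ} (hd : 1 ≤ d) : (ud d)^d = 1/2 := by
  have hd0 : (d:ℝ) ≠ 0 := by positivity
  rw [ud, ← Real.rpow_natCast ((2:ℝ) ^ (-(1:ℝ)/(d:ℝ))) d, ← Real.rpow_mul (by norm_num)]
  rw [show (-(1:ℝ)/(d:ℝ)) * (d:ℝ) = -1 by field_simp]
  rw [Real.rpow_neg_one]; norm_num

lemma ud_log (d : ℕ) : Real.log (ud d) = (-(1:ℝ)/(d:ℝ)) * Real.log 2 := by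
  rw [ud, Real.log_rpow (by norm_num)]

noncomputable def FFd (d : ℕ) : ℝ :=
  (ud d - 1/2) * Real.log (ud d - 1/2) - (1/2) * Real.log (1/2:ℝ)
    - ud d * Real.log (ud d)

lemma ud_tendsto : Tendsto ud atTop (nhds 1) := by
  rw [ud_exp]
  have h1 : Tendsto (fun d:ℕ => Real.log 2 * (-(1:ℝ)/(d:ℝ))) atTop (nhds 0) := by
    have := tendsto_natCast_atTop_atTop (R := ℝ).inv_tendsto_atTop
    have h2 := this.const_mul (-Real.log 2)
    simp only [mul_zero] at h2
    apply h2.congr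
    intro d; simp [div_eq_mul_inv]
  have := (Real.continuous_exp.tendsto 0).comp h1
  simpa [Function.comp_def] using this

lemma q_tendsto : Tendsto (fun d : ℕ => (d:ℝ) * (ud d - 1)) atTop (nhds (-Real.log 2)) := by
  have hg : HasDerivAt (fun t : ℝ => Real.exp (-Real.log 2 * t)) (-Real.log 2) 0 := by
    have := ((hasDerivAt_id (0:ℝ)).const_mul (-Real.log 2)).exp
    simpa using this
  have hslope := hasDerivAt_iff_tendsto_slope.1 hg
  have hcomp : Tendsto (fun d : ℕ => (d:ℝ)⁻¹) atTop (nhdsWithin 0 {(0:ℝ)}ᶜ) := by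
    apply tendsto_nhdsWithin_of_tendsto_nhds_of_eventually_within
    · exact tendsto_natCast_atTop_atTop.inv_tendsto_atTop
    · filter_upwards [eventually_ge_atTop 1] with d hd
      have : (0:ℝ) < (d:ℝ) := by exact_mod_cast hd
      simp; positivity
  have := hslope.comp hcomp
  apply this.congr'
  filter_upwards [eventually_ge_atTop 1] with d hd
  have hd0 : (d:ℝ) ≠ 0 := by
    have : (0:ℝ) < (d:ℝ) := by exact_mod_cast hd
    positivity
  have hud : ud d = Real.exp (-Real.log 2 * (d:ℝ)⁻¹) := by
    rw [ud_exp']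
    congr 1
    field_simp
  show slope (fun t : ℝ => Real.exp (-Real.log 2 * t)) 0 ((d:ℝ)⁻¹) = (d:ℝ) * (ud d - 1)
  rw [slope_def_field, hud, mul_zero, Real.exp_zero, sub_zero,
    div_eq_iff (inv_ne_zero hd0)]
  rw [mul_comm ((d:ℝ)) _, mul_assoc, mul_inv_cancel₀ hd0, mul_one]

lemma s_tendsto : Tendsto (fun d : ℕ =>
    ((ud d - 1/2) * Real.log (ud d - 1/2) - (1/2)*Real.log (1/2:ℝ)) / (ud d - 1))
    atTop (nhds (1 - Real.log 2)) := by
  have hphi : HasDerivAt (fun x : ℝ => x * Real.log x) (Real.log (1/2:ℝ) + 1) (1/2:ℝ) :=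
    Real.hasDerivAt_mul_log (by norm_num)
  have hslope := hasDerivAt_iff_tendsto_slope.1 hphi
  have hval : Real.log (1/2:ℝ) + 1 = 1 - Real.log 2 := by
    rw [one_div, Real.log_inv]; ring
  rw [hval] at hslope
  have hcomp : Tendsto (fun d : ℕ => ud d - 1/2) atTop
      (nhdsWithin (1/2:ℝ) {(1/2:ℝ)}ᶜ) := by
    apply tendsto_nhdsWithin_of_tendsto_nhds_of_eventually_within
    · have := ud_tendsto.sub_const (1/2:ℝ)
      norm_num at this
      exact this
    · filter_upwards [eventually_ge_atTop 1] with d hd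
      have := ud_lt_one hd
      simp only [mem_compl_iff, mem_singleton_iff]
      intro h
      have : ud d = 1 := by linarith [h]
      linarith [ud_lt_one hd]
  have := hslope.comp hcomp
  apply this.congr
  intro d
  simp only [Function.comp, slope_def_field]
  congr 1
  ring

lemma dFF_tendsto : Tendsto (fun d : ℕ => (d:ℝ) * FFd d) atTop
    (nhds ((Real.log 2)^2)) := by
  have hmul := (s_tendsto.mul q_tendsto).add (ud_tendsto.mul_const (Real.log 2))
  have hval : (1 - Real.log 2) * (-Real.log 2) + 1 * Real.log 2 = (Real.log 2)^2 := by
    ring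
  rw [hval] at hmul
  apply hmul.congr'
  filter_upwards [eventually_ge_atTop 1] with d hd
  have hd0 : (d:ℝ) ≠ 0 := by
    have : (0:ℝ) < (d:ℝ) := by exact_mod_cast hd
    positivity
  have h1 : ud d - 1 ≠ 0 := sub_ne_zero.2 (ud_lt_one hd).ne
  rw [FFd, ud_log]
  field_simp
  ring

lemma Bnat_nonneg (d : ℕ) (hd : 2 ≤ d) : 0 ≤ Bnat d := by
  obtain ⟨a,b,c,e⟩ := Bnat_pieces_nonneg d hd
  unfold Bnat; push_cast; linarith

lemma elem_ub (d : ℕ) (hd : 2 ≤ d) {α : ℝ} (hα : α ∈ Ioc (0:ℝ) 1) :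
    binH α - (1-(1-α)^d) * binH (α/(1-(1-α)^d)) ≤ Bnat d / ((d:ℝ) * Real.log 2) := by
  have hl2 : (0:ℝ) < Real.log 2 := Real.log_pos (by norm_num)
  have hd0 : (0:ℝ) < (d:ℝ) := by
    have : 0 < d := by omega
    exact_mod_cast this
  rcases eq_or_lt_of_le hα.2 with h1 | h1
  · subst h1
    rw [show ((1:ℝ) - 1) = 0 by norm_num, zero_pow (show d ≠ 0 by omega)]
    norm_num [binH]
    exact div_nonneg (Bnat_nonneg d hd) (by positivity)
  · rw [identity d hd hα.1 h1]
    have hm := main_ub d hd (u := 1-α) (by linarith) (by linarith [hα.1])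
    rw [div_le_div_iff₀ hl2 (by positivity)]
    nlinarith [mul_le_mul_of_nonneg_right hm hl2.le]

lemma member_eq (d : ℕ) (hd : 2 ≤ d) :
    binH (1 - ud d) - (1-(1-(1-ud d))^d) * binH ((1-ud d)/(1-(1-(1-ud d))^d))
      = FFd d / Real.log 2 := by
  have hd1 : 1 ≤ d := by omega
  have h0 : 0 < 1 - ud d := by linarith [ud_lt_one hd1]
  have h1 : 1 - ud d < 1 := by linarith [ud_pos d]
  rw [identity d hd h0 h1]
  congr 1
  rw [show (1:ℝ) - (1 - ud d) = ud d by ring, ud_pow hd1]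
  norm_num [FFd]

theorem entropy_sup_asymptotics :
    Filter.Tendsto
      (fun d : ℕ => (d : ℝ) *
        sSup ((fun α : ℝ =>
          binH α - (1 - (1 - α) ^ d) * binH (α / (1 - (1 - α) ^ d))) ''
            Set.Ioc (0 : ℝ) 1))
      Filter.atTop (nhds (Real.log 2)) := by
  have hl2 : (0:ℝ) < Real.log 2 := Real.log_pos (by norm_num)
  have hl2ne : Real.log 2 ≠ 0 := hl2.ne'
  have hsq : (Real.log 2)^2 / Real.log 2 = Real.log 2 := by
    rw [sq, mul_div_assoc, div_self hl2ne, mul_one]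
  have hg : Tendsto (fun d : ℕ => (d:ℝ) * (FFd d / Real.log 2)) atTop
      (nhds (Real.log 2)) := by
    have h := dFF_tendsto.div_const (Real.log 2)
    rw [hsq] at h
    apply h.congr
    intro d; rw [mul_div_assoc]
  have hh : Tendsto (fun d : ℕ => Bnat d / Real.log 2) atTop (nhds (Real.log 2)) := by
    have h := Bnat_tendsto.div_const (Real.log 2)
    rwa [hsq] at h
  apply tendsto_of_tendsto_of_tendsto_of_le_of_le' hg hh
  · filter_upwards [eventually_ge_atTop 2] with d hd
    have hd1 : 1 ≤ d := by omega
    have hd0 : (0:ℝ) < (d:ℝ) := by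
      have : 0 < d := by omega
      exact_mod_cast this
    have hmemIoc : (1 - ud d) ∈ Ioc (0:ℝ) 1 :=
      ⟨by linarith [ud_lt_one hd1], by linarith [ud_pos d]⟩
    have hmem := mem_image_of_mem
      (fun α : ℝ => binH α - (1 - (1 - α) ^ d) * binH (α / (1 - (1 - α) ^ d))) hmemIoc
    have hbdd : BddAbove ((fun α : ℝ =>
        binH α - (1 - (1 - α) ^ d) * binH (α / (1 - (1 - α) ^ d))) '' Ioc (0:ℝ) 1) := by
      refine ⟨Bnat d / ((d:ℝ) * Real.log 2), ?_⟩
      rintro x ⟨α, hα, rfl⟩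
      exact elem_ub d hd hα
    have hle := le_csSup hbdd hmem
    have hle2 : FFd d / Real.log 2 ≤
        sSup ((fun α : ℝ =>
          binH α - (1 - (1 - α) ^ d) * binH (α / (1 - (1 - α) ^ d))) '' Ioc (0:ℝ) 1) := by
      rw [← member_eq d hd]
      exact hle
    exact mul_le_mul_of_nonneg_left hle2 hd0.le
  · filter_upwards [eventually_ge_atTop 2] with d hd
    have hd0 : (0:ℝ) < (d:ℝ) := by
      have : 0 < d := by omega
      exact_mod_cast this
    have hne : ((fun α : ℝ =>
        binH α - (1 - (1 - α) ^ d) * binH (α / (1 - (1 - α) ^ d))) '' Ioc (0:ℝ) 1).Nonempty :=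
      (Set.nonempty_Ioc.2 one_pos).image _
    have hsup := csSup_le hne (by
      rintro x ⟨α, hα, rfl⟩
      exact elem_ub d hd hα)
    calc (d:ℝ) * sSup ((fun α : ℝ =>
          binH α - (1 - (1 - α) ^ d) * binH (α / (1 - (1 - α) ^ d))) '' Ioc (0:ℝ) 1)
        ≤ (d:ℝ) * (Bnat d / ((d:ℝ) * Real.log 2)) :=
          mul_le_mul_of_nonneg_left hsup hd0.le
      _ = Bnat d / Real.log 2 := by
          field_simp

end
end
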